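/- arXiv:2211.13831 — 8 statements merged into one kernel-verified Lean document; each statement's English description precedes it below -/
import Mathlib

section
/- Let θ > 0 and set q(l) = θ/(θ+l−1) for l ≥ 3, q(1) = 1, q(2) = 0. (i) For all integers 3 ≤ i < n, Σ_{j=0}^{n−i−1} (−1)^j Π_{l=i}^{j+i} q(l) = Σ_{j=1}^{n−i} (−1)^{j+1} θ^j/(θ+i−1)_{(j)} (this is the probability P(η_i = 1) for the playground-game chain of size n). (ii) For every i ≥ 3, the series Σ_{j=1}^{∞} (−1)^{j+1} θ^j/(θ+i−1)_{(j)} converges and equals (θ/(θ+i−1))·M(1, θ+i, −θ) = θ·∫_0^1 e^{−θu}(1−u)^{θ+i−2} du, where M(a,b,z) = Σ_{j≥0} a_{(j)} z^j/(b_{(j)} j!) is the confluent hypergeometric function. -/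
open Finset Filter

/-- Rising factorial `(x)_{(j)} = x (x+1) ⋯ (x+j-1)`. -/
noncomputable def risingFac (x : ℝ) (j : ℕ) : ℝ := ∏ k ∈ Finset.range j, (x + k)

/-- The confluent hypergeometric function `M(a,b,z) = ∑_{j≥0} a_{(j)} z^j / (b_{(j)} j!)`. -/
noncomputable def chgM (a b z : ℝ) : ℝ :=
  ∑' j : ℕ, risingFac a j * z ^ j / (risingFac b j * (j.factorial : ℝ))

lemma risingFac_pos {x : ℝ} (hx : 0 < x) (j : ℕ) : 0 < risingFac x j :=
  Finset.prod_pos fun k _ => by positivity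

lemma risingFac_succ_left (x : ℝ) (j : ℕ) :
    risingFac x (j + 1) = x * risingFac (x + 1) j := by
  rw [risingFac, risingFac, Finset.prod_range_succ']
  rw [mul_comm]
  congr 1
  · simp
  · exact Finset.prod_congr rfl fun k _ => by push_cast; ring

lemma risingFac_one (j : ℕ) : risingFac 1 j = (j.factorial : ℝ) := by
  rw [risingFac, ← Finset.prod_range_add_one_eq_factorial j]
  push_cast
  exact Finset.prod_congr rfl fun k _ => by ring

lemma factorial_le_risingFac {x : ℝ} (hx : 1 ≤ x) (j : ℕ) :
    (j.factorial : ℝ) ≤ risingFac x j := by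
  rw [← Finset.prod_range_add_one_eq_factorial j, risingFac]
  push_cast
  refine Finset.prod_le_prod (fun k _ => by positivity) fun k _ => by linarith

lemma part1 (θ : ℝ) (q : ℕ → ℝ)
    (hq : ∀ l, 3 ≤ l → q l = θ / (θ + l - 1)) (i n : ℕ) (hi : 3 ≤ i) (hin : i < n) :
    ∑ j ∈ Finset.range (n - i), (-1 : ℝ) ^ j * ∏ l ∈ Finset.Icc i (j + i), q l
      = ∑ j ∈ Finset.Icc 1 (n - i),
          (-1 : ℝ) ^ (j + 1) * θ ^ j / risingFac (θ + i - 1) j := by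
  have hprod : ∀ j : ℕ, ∏ l ∈ Finset.Icc i (j + i), q l
      = θ ^ (j + 1) / risingFac (θ + i - 1) (j + 1) := by
    intro j
    rw [Finset.prod_congr rfl fun l hl => hq l (le_trans hi (Finset.mem_Icc.mp hl).1),
      ← Finset.Ico_add_one_right_eq_Icc, Finset.prod_Ico_eq_prod_range,
      show j + i + 1 - i = j + 1 from by omega,
      Finset.prod_div_distrib, Finset.prod_const, Finset.card_range, risingFac]
    congr 1
    exact Finset.prod_congr rfl fun k _ => by push_cast; ring
  rw [← Finset.Ico_add_one_right_eq_Icc, Finset.sum_Ico_eq_sum_range, Nat.add_sub_cancel]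
  refine Finset.sum_congr rfl fun j _ => ?_
  rw [hprod j, show 1 + j = j + 1 from add_comm 1 j,
    show ((-1 : ℝ)) ^ (j + 1 + 1) = (-1) ^ j * (-1) ^ 2 from by rw [← pow_add]]
  norm_num
  ring

lemma beta_aux (s : ℝ) (hs : 0 < s) (j : ℕ) :
    ∫ t in (0:ℝ)..1, t ^ j * (1 - t) ^ (s - 1) = (j.factorial : ℝ) / risingFac s (j + 1) := by
  have h1 : ((∫ t in (0:ℝ)..1, t ^ j * (1 - t) ^ (s - 1) : ℝ) : ℂ)
      = Complex.betaIntegral ((j : ℂ) + 1) (s : ℂ) := by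
    rw [← intervalIntegral.integral_ofReal, Complex.betaIntegral]
    refine intervalIntegral.integral_congr fun t ht => ?_
    rw [Set.uIcc_of_le zero_le_one] at ht
    obtain ⟨ht0, ht1⟩ := ht
    rw [add_sub_cancel_right, Complex.cpow_natCast, Complex.ofReal_mul, Complex.ofReal_pow,
      show ((s : ℂ) - 1) = ((s - 1 : ℝ) : ℂ) from by push_cast; ring,
      show (1 - (t : ℂ)) = ((1 - t : ℝ) : ℂ) from by push_cast; ring,
      ← Complex.ofReal_cpow (by linarith) (s - 1)]
  have h2 : Complex.betaIntegral ((j : ℂ) + 1) (s : ℂ)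
      = (j.factorial : ℂ) / ∏ k ∈ Finset.range (j + 1), ((s : ℂ) + k) := by
    rw [Complex.betaIntegral_symm]
    exact Complex.betaIntegral_eval_nat_add_one_right (by simpa using hs) j
  rw [risingFac]
  exact_mod_cast h1.trans h2

lemma hasSum_exp_div (x : ℝ) :
    HasSum (fun n : ℕ => x ^ n / (n.factorial : ℝ)) (Real.exp x) := by
  have h := (NormedSpace.expSeries_div_summable x).hasSum
  rwa [Real.exp_eq_exp_ℝ, NormedSpace.exp_eq_tsum_div]

lemma part2 (θ : ℝ) (hθ : 0 < θ) (i : ℕ) (hi : 3 ≤ i) :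
    Tendsto (fun N : ℕ => ∑ j ∈ Finset.Icc 1 N,
        (-1 : ℝ) ^ (j + 1) * θ ^ j / risingFac (θ + i - 1) j) atTop
      (nhds (θ / (θ + i - 1) * chgM 1 (θ + i) (-θ))) ∧
    θ / (θ + i - 1) * chgM 1 (θ + i) (-θ)
      = θ * ∫ u in (0:ℝ)..1, Real.exp (-θ * u) * (1 - u) ^ (θ + i - 2) := by
  have hi3 : (3:ℝ) ≤ (i:ℝ) := by exact_mod_cast hi
  set c : ℝ := θ + i - 1 with hcdef
  have hc1 : 1 < c := by simp only [hcdef]; linarith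
  have hc0 : 0 < c := by linarith
  have hcne : c ≠ 0 := ne_of_gt hc0
  have hrne : ∀ j, risingFac c j ≠ 0 := fun j => (risingFac_pos hc0 j).ne'
  have hrne' : ∀ j, risingFac (θ + i) j ≠ 0 := fun j => (risingFac_pos (by linarith) j).ne'
  have he : (0:ℝ) ≤ θ + i - 2 := by linarith
  set f : ℕ → ℝ := fun k => (-1) ^ k * θ ^ (k + 1) / risingFac c (k + 1) with hfdef
  -- integral of each term
  have key : ∀ j : ℕ, (∫ t in (0:ℝ)..1,
      ((-θ) ^ j / (j.factorial : ℝ)) * (t ^ j * (1 - t) ^ (θ + i - 2)))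
      = (-θ) ^ j / risingFac c (j + 1) := by
    intro j
    have hj : ((j.factorial : ℝ)) ≠ 0 := Nat.cast_ne_zero.2 j.factorial_ne_zero
    rw [intervalIntegral.integral_const_mul, show θ + (i:ℝ) - 2 = c - 1 from by
      simp only [hcdef]; ring, beta_aux c hc0 j]
    field_simp
  -- HasSum of the integrals
  have hHS : HasSum (fun j : ℕ => (-θ) ^ j / risingFac c (j + 1))
      (∫ u in (0:ℝ)..1, Real.exp (-θ * u) * (1 - u) ^ (θ + i - 2)) := by
    have := intervalIntegral.hasSum_integral_of_dominated_convergence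
      (μ := MeasureTheory.volume) (a := (0:ℝ)) (b := 1)
      (F := fun (j : ℕ) (t : ℝ) => ((-θ) ^ j / (j.factorial : ℝ)) * (t ^ j * (1 - t) ^ (θ + i - 2)))
      (f := fun t => Real.exp (-θ * t) * (1 - t) ^ (θ + i - 2))
      (bound := fun (j : ℕ) (_ : ℝ) => θ ^ j / (j.factorial : ℝ))
      (fun j => (((continuous_const.mul ((continuous_pow j).mul
        ((continuous_const.sub continuous_id).rpow_const fun _ => Or.inr he)))).aestronglyMeasurable))
      (fun j => by
        filter_upwards with t ht
        rw [Set.uIoc_of_le zero_le_one] at ht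
        obtain ⟨ht0, ht1⟩ := ht
        have hB0 : (0:ℝ) ≤ (1 - t) ^ (θ + i - 2) := Real.rpow_nonneg (by linarith) _
        have hB1 : (1 - t) ^ (θ + i - 2) ≤ 1 := Real.rpow_le_one (by linarith) (by linarith) he
        have ht0' : (0:ℝ) ≤ t := le_of_lt ht0
        rw [Real.norm_eq_abs, abs_mul, abs_div, abs_pow, abs_neg, abs_of_pos hθ,
          abs_of_nonneg (Nat.cast_nonneg _), abs_of_nonneg (by positivity : (0:ℝ) ≤ t ^ j * (1 - t) ^ (θ + i - 2))]
        calc θ ^ j / (j.factorial : ℝ) * (t ^ j * (1 - t) ^ (θ + i - 2))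
            ≤ θ ^ j / (j.factorial : ℝ) * (1 * 1) := by
              apply mul_le_mul_of_nonneg_left _ (by positivity)
              exact mul_le_mul (by exact pow_le_one₀ ht0' ht1) hB1 hB0 zero_le_one
          _ = θ ^ j / (j.factorial : ℝ) := by ring)
      (by filter_upwards with t _; exact Real.summable_pow_div_factorial θ)
      (intervalIntegrable_const)
      (by
        filter_upwards with t ht
        have h := (hasSum_exp_div (-θ * t)).mul_right ((1 - t) ^ (θ + i - 2))
        convert h using 2 with j
        · rfl
        rw [mul_pow]
        ring)
    simpa only [key] using this
  -- the sum f equals θ times the integral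
  have hf_eq : ∀ j : ℕ, θ * ((-θ) ^ j / risingFac c (j + 1)) = f j := by
    intro j
    simp only [hfdef]
    have hR := hrne (j + 1)
    field_simp
    ring
  have hF : HasSum f (θ * ∫ u in (0:ℝ)..1, Real.exp (-θ * u) * (1 - u) ^ (θ + i - 2)) := by
    have := hHS.mul_left θ
    simpa only [hf_eq] using this
  -- chgM identity
  have hB : θ / c * chgM 1 (θ + i) (-θ) = ∑' k, f k := by
    have h1 : chgM 1 (θ + i) (-θ) = ∑' j : ℕ, (-θ) ^ j / risingFac (θ + i) j := by
      rw [chgM]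
      refine tsum_congr fun j => ?_
      have hj : ((j.factorial : ℝ)) ≠ 0 := Nat.cast_ne_zero.2 j.factorial_ne_zero
      rw [risingFac_one]
      have hR := hrne' j
      field_simp
    rw [h1, ← tsum_mul_left]
    refine tsum_congr fun j => ?_
    have hsucc : risingFac c (j + 1) = c * risingFac (θ + i) j := by
      rw [risingFac_succ_left, show c + 1 = θ + i from by simp only [hcdef]; ring]
    simp only [hfdef, hsucc]
    have hR := hrne' j
    field_simp
    ring
  have hval : θ / c * chgM 1 (θ + i) (-θ)
      = θ * ∫ u in (0:ℝ)..1, Real.exp (-θ * u) * (1 - u) ^ (θ + i - 2) := by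
    rw [hB, hF.tsum_eq]
  refine ⟨?_, hval⟩
  rw [hval]
  have hNN : ∀ N : ℕ, ∑ j ∈ Finset.Icc 1 N, (-1 : ℝ) ^ (j + 1) * θ ^ j / risingFac c j
      = ∑ k ∈ Finset.range N, f k := by
    intro N
    rw [← Finset.Ico_add_one_right_eq_Icc, Finset.sum_Ico_eq_sum_range, Nat.add_sub_cancel]
    refine Finset.sum_congr rfl fun k _ => ?_
    simp only [hfdef]
    rw [show 1 + k = k + 1 from add_comm 1 k,
      show ((-1 : ℝ)) ^ (k + 1 + 1) = (-1) ^ k * (-1) ^ 2 from by rw [← pow_add]]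
    norm_num
  simp only [hNN]
  exact hF.tendsto_sum_nat

/-- marginal probabilities of the playground-game chain and their limit. -/
theorem stmt1 (θ : ℝ) (hθ : 0 < θ) (q : ℕ → ℝ)
    (hq1 : q 1 = 1) (hq2 : q 2 = 0)
    (hq : ∀ l, 3 ≤ l → q l = θ / (θ + l - 1)) :
    (∀ i n : ℕ, 3 ≤ i → i < n →
      ∑ j ∈ Finset.range (n - i), (-1 : ℝ) ^ j * ∏ l ∈ Finset.Icc i (j + i), q l
        = ∑ j ∈ Finset.Icc 1 (n - i),
            (-1 : ℝ) ^ (j + 1) * θ ^ j / risingFac (θ + i - 1) j) ∧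
    (∀ i : ℕ, 3 ≤ i →
      Tendsto (fun N : ℕ => ∑ j ∈ Finset.Icc 1 N,
          (-1 : ℝ) ^ (j + 1) * θ ^ j / risingFac (θ + i - 1) j) atTop
        (nhds (θ / (θ + i - 1) * chgM 1 (θ + i) (-θ))) ∧
      θ / (θ + i - 1) * chgM 1 (θ + i) (-θ)
        = θ * ∫ u in (0:ℝ)..1, Real.exp (-θ * u) * (1 - u) ^ (θ + i - 2)) := by
  exact ⟨fun i n hi hin => part1 θ q hq i n hi hin, fun i hi => part2 θ hθ i hi⟩
end

section
/- Let p : ℕ → ℝ satisfy p(1) = 0, p(2) = 1 and 0 < p(i) < 1 for all i ≥ 3, and set q(i) := 1 − p(i). Define EK(n) := Σ_{i=1}^{n−1} Σ_{j=0}^{n−i−1} (−1)^j Π_{l=i}^{j+i} q(l) (the expected number of cycles of the random-derangement chain X^{n,p}). Suppose there exists α ≥ 0 such that n·q(n) → α as n → ∞ and the series ψ := Σ_{i=1}^{∞} (q(i) − α/i) converges. Then: (a) for every j ≥ 1 the series ā_j := Σ_{i=1}^{∞} Π_{l=i}^{j+i} q(l) converges; (b) the alternating series Σ_{j=1}^{∞}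 (−1)^j ā_j converges; (c) lim_{n→∞} ( EK(n) − α·log n ) = α·γ + ψ + Σ_{j=1}^{∞} (−1)^j ā_j, where γ is the Euler–Mascheroni constant. -/
open Finset Filter

/-- Product of `q` over `Icc (i+1) (j+(i+1))`. -/
def uu (q : ℕ → ℝ) (i j : ℕ) : ℝ := ∏ l ∈ Finset.Icc (i + 1) (j + (i + 1)), q l

lemma uu_def (q : ℕ → ℝ) (i j : ℕ) :
    uu q i j = ∏ l ∈ Finset.Icc (i + 1) (j + (i + 1)), q l := rfl

lemma uu_nonneg {q : ℕ → ℝ} (hql : ∀ l : ℕ, 1 ≤ l → 0 ≤ q l ∧ q l ≤ 1) (i j : ℕ) :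
    0 ≤ uu q i j := by
  refine Finset.prod_nonneg fun l hl => (hql l ?_).1
  have := (Finset.mem_Icc.mp hl).1; omega

lemma uu_le_prod_subset {q : ℕ → ℝ} (hql : ∀ l : ℕ, 1 ≤ l → 0 ≤ q l ∧ q l ≤ 1)
    {i j : ℕ} {S : Finset ℕ} (hS : S ⊆ Finset.Icc (i + 1) (j + (i + 1))) :
    uu q i j ≤ ∏ l ∈ S, q l := by
  have hmem : ∀ l ∈ Finset.Icc (i + 1) (j + (i + 1)), 1 ≤ l := fun l hl => by
    have := (Finset.mem_Icc.mp hl).1; omega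
  rw [uu_def, ← Finset.prod_sdiff hS]
  refine mul_le_of_le_one_left
    (Finset.prod_nonneg fun l hl => (hql l (hmem l (hS hl))).1) ?_
  exact Finset.prod_le_one
    (fun l hl => (hql l (hmem l (Finset.mem_sdiff.mp hl).1)).1)
    (fun l hl => (hql l (hmem l (Finset.mem_sdiff.mp hl).1)).2)

lemma uu_trunc {q : ℕ → ℝ} (hql : ∀ l : ℕ, 1 ≤ l → 0 ≤ q l ∧ q l ≤ 1)
    (i j j' : ℕ) (h : j' ≤ j) : uu q i j ≤ uu q i j' := by
  refine uu_le_prod_subset hql (Finset.Icc_subset_Icc_right ?_)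
  omega

lemma uu_le_single {q : ℕ → ℝ} (hql : ∀ l : ℕ, 1 ≤ l → 0 ≤ q l ∧ q l ≤ 1)
    (i j m : ℕ) (h1 : i + 1 ≤ m) (h2 : m ≤ j + (i + 1)) : uu q i j ≤ q m := by
  have := uu_le_prod_subset hql (i := i) (j := j) (S := {m})
    (by simp [Finset.singleton_subset_iff, Finset.mem_Icc]; omega)
  simpa using this

lemma uu_le_pair {q : ℕ → ℝ} (hql : ∀ l : ℕ, 1 ≤ l → 0 ≤ q l ∧ q l ≤ 1)
    (i j : ℕ) (hj : 1 ≤ j) : uu q i j ≤ q (i + 1) * q (i + 2) := by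
  have hsub : ({i + 1, i + 2} : Finset ℕ) ⊆ Finset.Icc (i + 1) (j + (i + 1)) := by
    intro x hx
    simp only [Finset.mem_insert, Finset.mem_singleton] at hx
    rcases hx with rfl | rfl <;> simp [Finset.mem_Icc] <;> omega
  have := uu_le_prod_subset hql hsub
  rwa [Finset.prod_pair (by omega)] at this

lemma uu_sq_bound {q : ℕ → ℝ} {C : ℝ} (hql : ∀ l : ℕ, 1 ≤ l → 0 ≤ q l ∧ q l ≤ 1)
    (hCq : ∀ l : ℕ, 1 ≤ l → q l ≤ C / l) (hC1 : 1 ≤ C) (i j : ℕ) (hj : 1 ≤ j) :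
    uu q i j ≤ C ^ 2 * (1 / ((i : ℝ) + 1) ^ 2) := by
  have hC0 : (0 : ℝ) < C := by linarith
  have hq1 : q (i + 1) ≤ C / ((i : ℝ) + 1) := by
    have := hCq (i + 1) (by omega); push_cast at this; convert this using 2 <;> push_cast <;> ring
  have hq2 : q (i + 2) ≤ C / ((i : ℝ) + 2) := by
    have := hCq (i + 2) (by omega); push_cast at this; convert this using 2 <;> push_cast <;> ring
  have hp1 : (0 : ℝ) < (i : ℝ) + 1 := by positivity
  have hp2 : (0 : ℝ) < (i : ℝ) + 2 := by positivity
  calc uu q i j ≤ q (i + 1) * q (i + 2) := uu_le_pair hql i j hj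
    _ ≤ (C / ((i : ℝ) + 1)) * (C / ((i : ℝ) + 2)) := by
        apply mul_le_mul hq1 hq2 (hql (i + 2) (by omega)).1 (by positivity)
    _ ≤ (C / ((i : ℝ) + 1)) * (C / ((i : ℝ) + 1)) := by
        apply mul_le_mul_of_nonneg_left _ (by positivity)
        apply div_le_div_of_nonneg_left hC0.le hp1 (by linarith)
    _ = C ^ 2 * (1 / ((i : ℝ) + 1) ^ 2) := by field_simp

lemma bound_summable (C : ℝ) : Summable (fun i : ℕ => C ^ 2 * (1 / ((i : ℝ) + 1) ^ 2)) := by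
  apply Summable.mul_left
  have h : Summable (fun n : ℕ => 1 / (n : ℝ) ^ 2) := Real.summable_one_div_nat_pow.mpr one_lt_two
  have h2 := (summable_nat_add_iff 1).mpr h
  exact h2.congr fun n => by push_cast; ring

lemma uu_summable {q : ℕ → ℝ} {C : ℝ} (hql : ∀ l : ℕ, 1 ≤ l → 0 ≤ q l ∧ q l ≤ 1)
    (hCq : ∀ l : ℕ, 1 ≤ l → q l ≤ C / l) (hC1 : 1 ≤ C) (j : ℕ) (hj : 1 ≤ j) :
    Summable (fun i : ℕ => uu q i j) :=
  Summable.of_nonneg_of_le (fun i => uu_nonneg hql i j)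
    (fun i => uu_sq_bound hql hCq hC1 i j hj) (bound_summable C)

lemma alt_tail_bound' (d : ℕ → ℝ) (hd : ∀ k, 0 ≤ d k) (hm : ∀ k, d (k + 1) ≤ d k) :
    ∀ n J, 0 ≤ (-1 : ℝ) ^ J * ∑ k ∈ Finset.Ico J (J + n), (-1 : ℝ) ^ k * d k ∧
      (-1 : ℝ) ^ J * ∑ k ∈ Finset.Ico J (J + n), (-1 : ℝ) ^ k * d k ≤ d J := by
  intro n
  induction n using Nat.strong_induction_on with
  | _ n ih =>
    match n with
    | 0 => intro J; simp [hd J]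
    | 1 =>
      intro J
      rw [Finset.sum_Ico_eq_sum_range]
      simp only [Nat.add_sub_cancel_left, Finset.sum_range_one, Nat.add_zero]
      have hsq : (-1 : ℝ) ^ J * (-1 : ℝ) ^ J = 1 := by
        rw [← pow_add]; exact Even.neg_one_pow ⟨J, rfl⟩
      constructor <;> nlinarith [hd J]
    | (m + 2) =>
      intro J
      have h1 : J < J + (m + 2) := by omega
      have h2 : J + 1 < J + (m + 2) := by omega
      rw [Finset.sum_eq_sum_Ico_succ_bot h1, Finset.sum_eq_sum_Ico_succ_bot h2]
      have hE : Finset.Ico (J + 1 + 1) (J + (m + 2)) = Finset.Ico (J + 2) ((J + 2) + m) := by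
        congr 1; omega
      rw [hE]
      obtain ⟨l1, l2⟩ := ih m (by omega) (J + 2)
      have hsq : (-1 : ℝ) ^ J * (-1 : ℝ) ^ J = 1 := by
        rw [← pow_add]; exact Even.neg_one_pow ⟨J, rfl⟩
      have e1 : (-1 : ℝ) ^ (J + 1) = -(-1 : ℝ) ^ J := by rw [pow_succ]; ring
      have e2 : (-1 : ℝ) ^ (J + 2) = (-1 : ℝ) ^ J := by rw [pow_add]; norm_num
      rw [e2] at l1 l2
      rw [e1]
      set T := ∑ k ∈ Finset.Ico (J + 2) ((J + 2) + m), (-1 : ℝ) ^ k * d k with hT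
      have key : (-1 : ℝ) ^ J * ((-1 : ℝ) ^ J * d J + (-(-1 : ℝ) ^ J * d (J + 1) + T))
          = d J - d (J + 1) + (-1 : ℝ) ^ J * T := by
        linear_combination (d J - d (J + 1)) * hsq
      rw [key]
      constructor
      · linarith [hm J]
      · linarith [hm (J + 1)]

lemma alt_tail_abs (d : ℕ → ℝ) (hd : ∀ k, 0 ≤ d k) (hm : ∀ k, d (k + 1) ≤ d k)
    (J M : ℕ) : |∑ k ∈ Finset.Ico J M, (-1 : ℝ) ^ k * d k| ≤ d J := by
  rcases le_or_gt J M with h | h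
  · obtain ⟨l1, l2⟩ := alt_tail_bound' d hd hm (M - J) J
    rw [show J + (M - J) = M by omega] at l1 l2
    have hs : |(-1 : ℝ) ^ J| = 1 := by rw [abs_pow, abs_neg, abs_one, one_pow]
    have habs : |∑ k ∈ Finset.Ico J M, (-1 : ℝ) ^ k * d k|
        = |(-1 : ℝ) ^ J * ∑ k ∈ Finset.Ico J M, (-1 : ℝ) ^ k * d k| := by
      rw [abs_mul, hs, one_mul]
    rw [habs, abs_of_nonneg l1]; exact l2
  · rw [Finset.Ico_eq_empty (by omega), Finset.sum_empty, abs_zero]; exact hd J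

/-- asymptotics of the expected number of cycles of the
random-derangement chain `X^{n,p}`. -/
theorem stmt2 (p q : ℕ → ℝ)
    (hp1 : p 1 = 0) (hp2 : p 2 = 1) (hp : ∀ i, 3 ≤ i → 0 < p i ∧ p i < 1)
    (hq : ∀ i, q i = 1 - p i)
    (EK : ℕ → ℝ)
    (hEK : ∀ n, EK n = ∑ i ∈ Finset.Icc 1 (n - 1), ∑ j ∈ Finset.range (n - i),
        (-1 : ℝ) ^ j * ∏ l ∈ Finset.Icc i (j + i), q l)
    (α : ℝ) (hα : 0 ≤ α)
    (hlim : Tendsto (fun n : ℕ => (n : ℝ) * q n) atTop (nhds α))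
    (ψ : ℝ)
    (hψ : Tendsto (fun N : ℕ => ∑ i ∈ Finset.Icc 1 N, (q i - α / i)) atTop (nhds ψ)) :
    (∀ j : ℕ, 1 ≤ j →
      Summable (fun i : ℕ => ∏ l ∈ Finset.Icc (i + 1) (j + (i + 1)), q l)) ∧
    ∃ S : ℝ,
      Tendsto (fun M : ℕ => ∑ j ∈ Finset.Icc 1 M,
          (-1 : ℝ) ^ j * ∑' i : ℕ, ∏ l ∈ Finset.Icc (i + 1) (j + (i + 1)), q l) atTop
        (nhds S) ∧
      Tendsto (fun n : ℕ => EK n - α * Real.log n) atTop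
        (nhds (α * Real.eulerMascheroniConstant + ψ + S)) := by
  -- Basic facts about q
  have hql : ∀ l : ℕ, 1 ≤ l → 0 ≤ q l ∧ q l ≤ 1 := by
    intro l hl
    rcases Nat.lt_or_ge l 3 with h | h
    · interval_cases l <;> simp [hq, hp1, hp2]
    · have := hp l h; rw [hq]; constructor <;> linarith [this.1, this.2]
  -- The constant C with q l ≤ C / l
  obtain ⟨N₀, hN₀⟩ := eventually_atTop.mp (hlim.eventually_lt_const (lt_add_one α))
  set C : ℝ := max (α + 1) ((N₀ : ℝ) + 1) with hCdef
  have hC1 : 1 ≤ C := le_trans (by linarith) (le_max_left _ _)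
  have hC0 : (0 : ℝ) < C := by linarith
  have hCq : ∀ l : ℕ, 1 ≤ l → q l ≤ C / l := by
    intro l hl
    have hl0 : (0 : ℝ) < l := by exact_mod_cast hl
    rcases le_or_gt N₀ l with h | h
    · have h2 := (hN₀ l h).le
      have h3 : α + 1 ≤ C := le_max_left _ _
      rw [le_div_iff₀ hl0, mul_comm]
      linarith
    · have hq1 : q l ≤ 1 := (hql l hl).2
      have hlC : (l : ℝ) ≤ C := by
        have hln : (l : ℝ) ≤ N₀ := by exact_mod_cast h.le
        calc (l : ℝ) ≤ (N₀ : ℝ) + 1 := by linarith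
          _ ≤ C := le_max_right _ _
      exact hq1.trans ((one_le_div hl0).mpr hlC)
  -- Summability (part a)
  have hsumm : ∀ j : ℕ, 1 ≤ j → Summable (fun i : ℕ => uu q i j) :=
    fun j hj => uu_summable hql hCq hC1 j hj
  -- The sequence of tail sums t
  set t : ℕ → ℝ := fun k => ∑' i, uu q i (k + 1) with ht_def
  have ht_nonneg : ∀ k, 0 ≤ t k := fun k => tsum_nonneg fun i => uu_nonneg hql i (k + 1)
  have ht_anti_succ : ∀ k, t (k + 1) ≤ t k := fun k =>
    Summable.tsum_le_tsum (fun i => uu_trunc hql i (k + 2) (k + 1) (by omega))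
      (hsumm (k + 2) (by omega)) (hsumm (k + 1) (by omega))
  have ht_anti : Antitone t := antitone_nat_of_succ_le ht_anti_succ
  have ht_zero : Tendsto t atTop (nhds 0) := by
    have hmain : Tendsto (fun j : ℕ => ∑' i, uu q i (j + 1)) atTop
        (nhds (∑' _ : ℕ, (0 : ℝ))) := by
      apply tendsto_tsum_of_dominated_convergence
        (bound := fun i : ℕ => C ^ 2 * (1 / ((i : ℝ) + 1) ^ 2)) (bound_summable C)
      · intro i
        have h1 : Tendsto (fun j : ℕ => C / ((j + (i + 2) : ℕ) : ℝ)) atTop (nhds 0) :=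
          (tendsto_const_div_atTop_nhds_zero_nat C).comp (tendsto_add_atTop_nat (i + 2))
        apply squeeze_zero (fun j => uu_nonneg hql i (j + 1)) (fun j => ?_) h1
        calc uu q i (j + 1) ≤ q ((j + 1) + (i + 1)) :=
              uu_le_single hql i (j + 1) ((j + 1) + (i + 1)) (by omega) (by omega)
          _ ≤ C / (((j + 1) + (i + 1) : ℕ) : ℝ) := hCq _ (by omega)
          _ = C / ((j + (i + 2) : ℕ) : ℝ) := by rw [show (j + 1) + (i + 1) = j + (i + 2) by omega]
      · filter_upwards with j
        intro i
        rw [Real.norm_eq_abs, abs_of_nonneg (uu_nonneg hql i (j + 1))]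
        exact uu_sq_bound hql hCq hC1 i (j + 1) (by omega)
    rw [tsum_zero] at hmain
    exact hmain
  -- The alternating series limit
  obtain ⟨S', hS'⟩ := ht_anti.tendsto_alternating_series_of_tendsto_zero ht_zero
  -- rewrite the Icc sums as range sums
  have hrw : ∀ M : ℕ, ∑ j ∈ Finset.Icc 1 M, (-1 : ℝ) ^ j * (∑' i, uu q i j)
      = -∑ k ∈ Finset.range M, (-1 : ℝ) ^ k * t k := by
    intro M
    rw [← Finset.Ico_add_one_right_eq_Icc, Finset.sum_Ico_eq_sum_range, ← Finset.sum_neg_distrib]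
    apply Finset.sum_congr rfl
    intro k _
    rw [show (1 : ℕ) + k = k + 1 by omega]
    have htk : t k = ∑' i, uu q i (k + 1) := rfl
    rw [htk, pow_succ]
    ring
  -- the error bound on partial alternating sums of t
  have hS'err : ∀ J : ℕ, |S' - ∑ k ∈ Finset.range J, (-1 : ℝ) ^ k * t k| ≤ t J := by
    intro J
    have hconv : Tendsto (fun M => |∑ k ∈ Finset.range M, (-1 : ℝ) ^ k * t k
        - ∑ k ∈ Finset.range J, (-1 : ℝ) ^ k * t k|) atTop
        (nhds |S' - ∑ k ∈ Finset.range J, (-1 : ℝ) ^ k * t k|) :=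
      (hS'.sub tendsto_const_nhds).abs
    apply le_of_tendsto hconv
    filter_upwards [eventually_ge_atTop J] with M hM
    rw [← Finset.sum_Ico_eq_sub _ hM]
    exact alt_tail_abs t ht_nonneg ht_anti_succ J M
  -- the truncated sums c
  set c : ℕ → ℕ → ℝ := fun k n => ∑ i ∈ Finset.range (n - 2 - k), uu q i (k + 1)
    with hc_def
  have hc_nonneg : ∀ k n, 0 ≤ c k n :=
    fun k n => Finset.sum_nonneg fun i _ => uu_nonneg hql i (k + 1)
  have hc_le_t : ∀ k n, c k n ≤ t k := fun k n =>
    Summable.sum_le_tsum _ (fun i _ => uu_nonneg hql i (k + 1)) (hsumm (k + 1) (by omega))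
  have hc_anti : ∀ n k, c (k + 1) n ≤ c k n := by
    intro n k
    calc c (k + 1) n = ∑ i ∈ Finset.range (n - 2 - (k + 1)), uu q i (k + 2) := rfl
      _ ≤ ∑ i ∈ Finset.range (n - 2 - (k + 1)), uu q i (k + 1) :=
          Finset.sum_le_sum fun i _ => uu_trunc hql i (k + 2) (k + 1) (by omega)
      _ ≤ ∑ i ∈ Finset.range (n - 2 - k), uu q i (k + 1) :=
          Finset.sum_le_sum_of_subset_of_nonneg
            (Finset.range_subset_range.mpr (by omega))
            (fun i _ _ => uu_nonneg hql i (k + 1))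
  have hc_tend : ∀ k, Tendsto (fun n => c k n) atTop (nhds (t k)) := by
    intro k
    have h1 : Tendsto (fun m => ∑ i ∈ Finset.range m, uu q i (k + 1)) atTop (nhds (t k)) :=
      ((hsumm (k + 1) (by omega)).hasSum).tendsto_sum_nat
    exact h1.comp ((tendsto_sub_atTop_nat k).comp (tendsto_sub_atTop_nat 2))
  -- the double-sum part converges to S'
  have hBtend : Tendsto (fun n : ℕ => ∑ k ∈ Finset.range (n - 2), (-1 : ℝ) ^ k * c k n)
      atTop (nhds S') := by
    rw [Metric.tendsto_atTop]
    intro ε hε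
    obtain ⟨J, hJ⟩ := (ht_zero.eventually_lt_const (by linarith : (0 : ℝ) < ε / 4)).exists
    have hfin : Tendsto (fun n => ∑ k ∈ Finset.range J, (-1 : ℝ) ^ k * c k n) atTop
        (nhds (∑ k ∈ Finset.range J, (-1 : ℝ) ^ k * t k)) :=
      tendsto_finset_sum _ (fun k _ => (hc_tend k).const_mul _)
    obtain ⟨N₁, hN₁⟩ := (Metric.tendsto_atTop.mp hfin) (ε / 4) (by linarith)
    refine ⟨max N₁ (J + 2), fun n hn => ?_⟩
    have hn1 : N₁ ≤ n := le_trans (le_max_left _ _) hn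
    have hn2 : J + 2 ≤ n := le_trans (le_max_right _ _) hn
    have hJn : J ≤ n - 2 := by omega
    rw [Real.dist_eq]
    have e1 : ∑ k ∈ Finset.Ico J (n - 2), (-1 : ℝ) ^ k * c k n
        = ∑ k ∈ Finset.range (n - 2), (-1 : ℝ) ^ k * c k n
          - ∑ k ∈ Finset.range J, (-1 : ℝ) ^ k * c k n :=
      Finset.sum_Ico_eq_sub _ hJn
    have h2 : |∑ k ∈ Finset.Ico J (n - 2), (-1 : ℝ) ^ k * c k n| ≤ c J n :=
      alt_tail_abs (fun k => c k n) (fun k => hc_nonneg k n) (fun k => hc_anti n k) J (n - 2)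
    have h3 := hN₁ n hn1
    rw [Real.dist_eq] at h3
    have h4 : |∑ k ∈ Finset.range J, (-1 : ℝ) ^ k * t k - S'| ≤ t J := by
      rw [abs_sub_comm]; exact hS'err J
    have key : ∑ k ∈ Finset.range (n - 2), (-1 : ℝ) ^ k * c k n - S'
        = (∑ k ∈ Finset.Ico J (n - 2), (-1 : ℝ) ^ k * c k n)
          + (∑ k ∈ Finset.range J, (-1 : ℝ) ^ k * c k n
             - ∑ k ∈ Finset.range J, (-1 : ℝ) ^ k * t k)
          + (∑ k ∈ Finset.range J, (-1 : ℝ) ^ k * t k - S') := by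
      rw [e1]; ring
    rw [key]
    calc |_ + _ + _| ≤ |∑ k ∈ Finset.Ico J (n - 2), (-1 : ℝ) ^ k * c k n|
          + |∑ k ∈ Finset.range J, (-1 : ℝ) ^ k * c k n
             - ∑ k ∈ Finset.range J, (-1 : ℝ) ^ k * t k|
          + |∑ k ∈ Finset.range J, (-1 : ℝ) ^ k * t k - S'| := abs_add_three _ _ _
      _ < ε := by
        have hcJ : c J n ≤ t J := hc_le_t J n
        linarith [h2, h3, h4, hJ]
  -- the harmonic/log part
  have hA : Tendsto (fun n : ℕ => (∑ i ∈ Finset.Icc 1 (n - 1), q i) - α * Real.log n)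
      atTop (nhds (ψ + α * Real.eulerMascheroniConstant)) := by
    have h1 : Tendsto (fun n : ℕ => ∑ i ∈ Finset.Icc 1 (n - 1), (q i - α / i)) atTop
        (nhds ψ) := hψ.comp (tendsto_sub_atTop_nat 1)
    have h2 : Tendsto (fun n : ℕ => ((harmonic (n - 1) : ℝ)) - Real.log n) atTop
        (nhds Real.eulerMascheroniConstant) := by
      have hcomp := Real.tendsto_harmonic_sub_log_add_one.comp (tendsto_sub_atTop_nat 1)
      apply hcomp.congr'
      filter_upwards [eventually_ge_atTop 1] with n hn
      simp only [Function.comp_apply]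
      have hcast : ((n - 1 : ℕ) : ℝ) + 1 = (n : ℝ) := by
        rw [Nat.cast_sub hn]; push_cast; ring
      rw [hcast]
    have h3 : ∀ n : ℕ, (∑ i ∈ Finset.Icc 1 (n - 1), q i) - α * Real.log n
        = (∑ i ∈ Finset.Icc 1 (n - 1), (q i - α / i))
          + α * (((harmonic (n - 1) : ℝ)) - Real.log n) := by
      intro n
      have hh : ((harmonic (n - 1) : ℝ)) = ∑ i ∈ Finset.Icc 1 (n - 1), ((i : ℝ))⁻¹ := by
        rw [harmonic_eq_sum_Icc]; push_cast; rfl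
      rw [hh]
      simp only [div_eq_mul_inv, Finset.sum_sub_distrib, mul_sub, Finset.mul_sum]
      ring
    exact ((h1.add (h2.const_mul α)).congr (fun n => (h3 n).symm))
  -- the combinatorial identity for EK
  have hEKn : ∀ n : ℕ, 2 ≤ n → EK n = (∑ i ∈ Finset.Icc 1 (n - 1), q i)
      - ∑ k ∈ Finset.range (n - 2), (-1 : ℝ) ^ k * c k n := by
    intro n hn
    rw [hEK n]
    have hcomm : ∀ (i j : ℕ), i ∈ Finset.Icc 1 (n - 1) ∧ j ∈ Finset.range (n - i) ↔
        i ∈ Finset.Icc 1 (n - 1 - j) ∧ j ∈ Finset.range (n - 1) := by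
      intro i j; simp only [Finset.mem_Icc, Finset.mem_range]; omega
    rw [Finset.sum_comm' hcomm]
    rw [show n - 1 = (n - 2) + 1 by omega, Finset.sum_range_succ']
    simp only [pow_zero, one_mul, Nat.zero_add, Finset.Icc_self, Finset.prod_singleton,
      Nat.sub_zero]
    rw [sub_eq_add_neg, ← Finset.sum_neg_distrib, add_comm]
    congr 1
    apply Finset.sum_congr rfl
    intro k _
    have hpull : ∑ i ∈ Finset.Icc 1 ((n - 2) + 1 - (k + 1)),
        (-1 : ℝ) ^ (k + 1) * ∏ l ∈ Finset.Icc i ((k + 1) + i), q l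
        = (-1 : ℝ) ^ (k + 1) * ∑ i ∈ Finset.Icc 1 ((n - 2) + 1 - (k + 1)),
          ∏ l ∈ Finset.Icc i ((k + 1) + i), q l := (Finset.mul_sum _ _ _).symm
    rw [hpull]
    have hinner : ∑ i ∈ Finset.Icc 1 ((n - 2) + 1 - (k + 1)),
        ∏ l ∈ Finset.Icc i ((k + 1) + i), q l = c k n := by
      rw [show (n - 2) + 1 - (k + 1) = n - 2 - k by omega]
      rw [← Finset.Ico_add_one_right_eq_Icc, Finset.sum_Ico_eq_sum_range]
      apply Finset.sum_congr rfl
      intro i _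
      refine Finset.prod_congr ?_ (fun _ _ => rfl)
      rw [show 1 + i = i + 1 by omega]
    rw [hinner, pow_succ]
    ring
  -- assemble
  refine ⟨fun j hj => hsumm j hj, ⟨-S', ?_, ?_⟩⟩
  · exact (hS'.neg).congr (fun M => (hrw M).symm)
  · have hfinal := hA.add hBtend.neg
    have hval : α * Real.eulerMascheroniConstant + ψ + -S'
        = (ψ + α * Real.eulerMascheroniConstant) + -S' := by ring
    rw [hval]
    apply hfinal.congr'
    filter_upwards [eventually_ge_atTop 2] with n hn
    rw [hEKn n hn]
    ring
end

section
/- Let p : ℕ → ℝ satisfy p(1) = 0, p(2) = 1, 0 < p(i) < 1 for i ≥ 3, and q(i) := 1 − p(i). For j > 1 define EC_j(n) := q(n−j+1)·Π_{l=n−j+2}^{n−1} p(l) + Σ_{i=j+1}^{n−1} Σ_{k=0}^{n−i−1} (−1)^k · q(i−j) · Π_{l=i−j+1}^{i−2} p(l) · Π_{l=i}^{k+i} q(l) (the expected number of j-cycles of X^{n,p}). Suppose there exists α ≥ 0 with n·q(n) → α as n → ∞. Then for every j > 1: (a) for each k ≥ 0 the limit b̄_k(j) := lim_{n→∞} Σ_{i=j+1}^{n−k−1}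 q(i−j) Π_{l=i−j+1}^{i−2} p(l) Π_{l=i}^{k+i} q(l) exists and is finite; (b) lim_{n→∞} EC_j(n) exists, and for every m ≥ 1 there is ε with 0 ≤ ε ≤ b̄_{2m}(j) such that lim_{n→∞} EC_j(n) = Σ_{k=0}^{2m−1} (−1)^k b̄_k(j) + ε. -/
open Finset Filter

lemma alt_bound (d : ℕ → ℝ) (h0 : ∀ k, 0 ≤ d k) (h1 : ∀ k, d (k + 1) ≤ d k) :
    ∀ n a N, N - a = n → Even a →
      0 ≤ (∑ k ∈ Finset.Ico a N, (-1 : ℝ) ^ k * d k) ∧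
      (∑ k ∈ Finset.Ico a N, (-1 : ℝ) ^ k * d k) ≤ d a := by
  intro n
  induction n using Nat.strong_induction_on with
  | _ n ih =>
    intro a N hN ha
    rcases le_or_gt N a with h | h
    · rw [Finset.Ico_eq_empty (by omega)]
      simp [h0 a]
    rcases le_or_gt N (a + 1) with h2 | h2
    · have hNa : N = a + 1 := by omega
      subst hNa
      rw [Finset.Ico_add_one_right_eq_Icc, Finset.Icc_self, Finset.sum_singleton, ha.neg_one_pow, one_mul]
      exact ⟨h0 a, le_rfl⟩
    · have e1 : ∑ k ∈ Finset.Ico a N, (-1 : ℝ) ^ k * d k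
          = (-1 : ℝ) ^ a * d a + ((-1 : ℝ) ^ (a + 1) * d (a + 1)
            + ∑ k ∈ Finset.Ico (a + 2) N, (-1 : ℝ) ^ k * d k) := by
        rw [Finset.sum_eq_sum_Ico_succ_bot (by omega), Finset.sum_eq_sum_Ico_succ_bot (by omega)]
      have hih := ih (N - (a + 2)) (by omega) (a + 2) N rfl (by
        rcases ha with ⟨t, ht⟩; exact ⟨t + 1, by omega⟩)
      have hpa : (-1 : ℝ) ^ a = 1 := ha.neg_one_pow
      have hpa1 : (-1 : ℝ) ^ (a + 1) = -1 := by
        rw [pow_succ, hpa]; ring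
      rw [e1, hpa, hpa1]
      have hd2 : d (a + 2) ≤ d (a + 1) := h1 (a + 1)
      have hd1 : d (a + 1) ≤ d a := h1 a
      constructor
      · nlinarith [hih.1, hih.2]
      · nlinarith [hih.1, hih.2]

lemma sq_sum_le (N : ℕ) : (∑ t ∈ Finset.Icc 1 N, (1 : ℝ) / ((t : ℝ) * t)) ≤ 2 := by
  have H : ∀ M : ℕ, 1 ≤ M → (∑ t ∈ Finset.Icc 1 M, (1 : ℝ) / ((t : ℝ) * t)) ≤ 2 - 1 / M := by
    intro M hM
    induction M with
    | zero => omega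
    | succ M ihM =>
      rcases Nat.eq_or_lt_of_le hM with h1 | h1
      · rw [← h1]; norm_num
      · have hM1 : 1 ≤ M := by omega
        rw [Finset.sum_Icc_succ_top (by omega)]
        have hMR : (1 : ℝ) ≤ (M : ℝ) := by exact_mod_cast hM1
        have key : (1 : ℝ) / ((M + 1 : ℕ) * (M + 1 : ℕ)) ≤ 1 / M - 1 / (M + 1) := by
          push_cast
          rw [div_sub_div _ _ (by positivity) (by positivity)]
          rw [div_le_div_iff₀ (by positivity) (by positivity)]
          ring_nf
          nlinarith
        have := ihM hM1
        push_cast at key ⊢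
        linarith
  rcases Nat.eq_zero_or_pos N with h | h
  · subst h; simp
  · have := H N h
    have : (0:ℝ) < 1 / N := by positivity
    linarith [H N h]

/-- asymptotics of the expected number of `j`-cycles of the
random-derangement chain `X^{n,p}`. -/
theorem stmt4 (p q : ℕ → ℝ)
    (hp1 : p 1 = 0) (hp2 : p 2 = 1) (hp : ∀ i, 3 ≤ i → 0 < p i ∧ p i < 1)
    (hq : ∀ i, q i = 1 - p i)
    (EC : ℕ → ℕ → ℝ)
    (hEC : ∀ j n : ℕ, EC j n =
      q (n - j + 1) * ∏ l ∈ Finset.Icc (n - j + 2) (n - 1), p l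
      + ∑ i ∈ Finset.Icc (j + 1) (n - 1), ∑ k ∈ Finset.range (n - i),
          (-1 : ℝ) ^ k * q (i - j) * (∏ l ∈ Finset.Icc (i - j + 1) (i - 2), p l)
            * ∏ l ∈ Finset.Icc i (k + i), q l)
    (α : ℝ) (hα : 0 ≤ α)
    (hlim : Tendsto (fun n : ℕ => (n : ℝ) * q n) atTop (nhds α)) :
    ∀ j : ℕ, 1 < j →
      ∃ b : ℕ → ℝ,
        (∀ k : ℕ, Tendsto (fun n : ℕ =>
            ∑ i ∈ Finset.Icc (j + 1) (n - k - 1),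
              q (i - j) * (∏ l ∈ Finset.Icc (i - j + 1) (i - 2), p l)
                * ∏ l ∈ Finset.Icc i (k + i), q l) atTop (nhds (b k))) ∧
        ∃ L : ℝ, Tendsto (fun n : ℕ => EC j n) atTop (nhds L) ∧
          ∀ m : ℕ, 1 ≤ m → ∃ ε : ℝ, 0 ≤ ε ∧ ε ≤ b (2 * m) ∧
            L = (∑ k ∈ Finset.range (2 * m), (-1 : ℝ) ^ k * b k) + ε := by
  intro j hj
  -- basic bounds on p and q
  have hp01 : ∀ l, 1 ≤ l → 0 ≤ p l ∧ p l ≤ 1 := by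
    intro l hl
    rcases Nat.lt_or_ge l 3 with h | h
    · interval_cases l
      · simp [hp1]
      · simp [hp2]
    · have := hp l h; constructor <;> linarith [this.1, this.2]
  have hq01 : ∀ l, 1 ≤ l → 0 ≤ q l ∧ q l ≤ 1 := by
    intro l hl; rw [hq]; have := hp01 l hl; constructor <;> linarith [this.1, this.2]
  -- a bound q n ≤ C / n
  obtain ⟨C, hC1, hCq⟩ : ∃ C : ℝ, 1 ≤ C ∧ ∀ n : ℕ, 1 ≤ n → q n ≤ C / n := by
    have h1 : ∀ᶠ n : ℕ in atTop, (n : ℝ) * q n ≤ α + 1 := by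
      have := hlim.eventually (eventually_le_nhds (show α < α + 1 by linarith))
      exact this
    obtain ⟨N, hN⟩ := eventually_atTop.1 h1
    refine ⟨max (α + 1) (N + 1), le_trans (by linarith) (le_max_left _ _), ?_⟩
    intro n hn
    have hnpos : (0 : ℝ) < n := by exact_mod_cast hn
    rcases Nat.lt_or_ge n N with h | h
    · have h2 : q n ≤ 1 := (hq01 n hn).2
      have h3 : (1 : ℝ) ≤ max (α + 1) (N + 1) / n := by
        rw [le_div_iff₀ hnpos, one_mul]
        calc (n : ℝ) ≤ N + 1 := by exact_mod_cast Nat.le_succ_of_le h.le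
        _ ≤ _ := le_max_right _ _
      linarith
    · have h2 := hN n h
      rw [div_eq_mul_inv, ← div_eq_mul_inv, le_div_iff₀ hnpos]
      calc q n * n = n * q n := by ring
        _ ≤ α + 1 := h2
        _ ≤ _ := le_max_left _ _
  have hCpos : (0 : ℝ) < C := by linarith
  -- q tends to 0
  have hq0 : Tendsto q atTop (nhds 0) := by
    apply tendsto_of_tendsto_of_tendsto_of_le_of_le'
      (tendsto_const_nhds) (tendsto_const_div_atTop_nhds_zero_nat C)
    · filter_upwards [eventually_ge_atTop 1] with n hn using (hq01 n hn).1
    · filter_upwards [eventually_ge_atTop 1] with n hn using hCq n hn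
  -- threshold after which q ≤ 1/2
  obtain ⟨L0, hL01, hL0⟩ : ∃ L0 : ℕ, 1 ≤ L0 ∧ ∀ l, L0 ≤ l → q l ≤ 1 / 2 := by
    have := hq0.eventually (eventually_le_nhds (show (0:ℝ) < 1/2 by norm_num))
    obtain ⟨N, hN⟩ := eventually_atTop.1 this
    exact ⟨max N 1, le_max_right _ _, fun l hl => hN l (le_trans (le_max_left _ _) hl)⟩
  -- the term function
  set g : ℕ → ℕ → ℝ := fun k i =>
    q (i - j) * (∏ l ∈ Finset.Icc (i - j + 1) (i - 2), p l)
      * ∏ l ∈ Finset.Icc i (k + i), q l with hgdef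
  set A : ℕ → ℕ → ℝ := fun k n => ∑ i ∈ Finset.Icc (j + 1) (n - k - 1), g k i with hAdef
  -- nonnegativity
  have hqprod_nonneg : ∀ s : Finset ℕ, (∀ l ∈ s, 1 ≤ l) → 0 ≤ ∏ l ∈ s, q l := by
    intro s hs; exact Finset.prod_nonneg fun l hl => (hq01 l (hs l hl)).1
  have hqprod_le_one : ∀ s : Finset ℕ, (∀ l ∈ s, 1 ≤ l) → (∏ l ∈ s, q l) ≤ 1 := by
    intro s hs
    exact Finset.prod_le_one (fun l hl => (hq01 l (hs l hl)).1)
      (fun l hl => (hq01 l (hs l hl)).2)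
  have hpprod_nonneg : ∀ s : Finset ℕ, (∀ l ∈ s, 1 ≤ l) → 0 ≤ ∏ l ∈ s, p l := by
    intro s hs; exact Finset.prod_nonneg fun l hl => (hp01 l (hs l hl)).1
  have hpprod_le_one : ∀ s : Finset ℕ, (∀ l ∈ s, 1 ≤ l) → (∏ l ∈ s, p l) ≤ 1 := by
    intro s hs
    exact Finset.prod_le_one (fun l hl => (hp01 l (hs l hl)).1)
      (fun l hl => (hp01 l (hs l hl)).2)
  have hg_nonneg : ∀ k i, j + 1 ≤ i → 0 ≤ g k i := by
    intro k i hi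
    simp only [hgdef]
    refine mul_nonneg (mul_nonneg (hq01 (i - j) (by omega)).1 ?_) ?_
    · exact hpprod_nonneg _ fun l hl => by have := (Finset.mem_Icc.1 hl).1; omega
    · exact hqprod_nonneg _ fun l hl => by have := (Finset.mem_Icc.1 hl).1; omega
  -- the Π q factor is at most q i, and everything ≤ relevant bounds
  have hPq_le : ∀ k i, j + 1 ≤ i → (∏ l ∈ Finset.Icc i (k + i), q l) ≤ C / (i : ℕ) := by
    intro k i hi
    rw [← Finset.Ico_add_one_right_eq_Icc, Finset.prod_eq_prod_Ico_succ_bot (b := k + i + 1) (Nat.lt_succ_of_le (by omega))]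
    have hrest1 : (∏ l ∈ Finset.Ico (i + 1) (Nat.succ (k + i)), q l) ≤ 1 := by
      apply hqprod_le_one; intro l hl; have := (Finset.mem_Ico.1 hl).1; omega
    have hrest0 : (0 : ℝ) ≤ ∏ l ∈ Finset.Ico (i + 1) (Nat.succ (k + i)), q l := by
      apply hqprod_nonneg; intro l hl; have := (Finset.mem_Ico.1 hl).1; omega
    have hqi0 : (0 : ℝ) ≤ q i := (hq01 i (by omega)).1
    calc q i * ∏ l ∈ Finset.Ico (i + 1) (Nat.succ (k + i)), q l
        ≤ q i * 1 := mul_le_mul_of_nonneg_left hrest1 hqi0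
      _ = q i := mul_one _
      _ ≤ C / (i : ℕ) := hCq i (by omega)
  have hg_le : ∀ k i, j + 1 ≤ i → g k i ≤ C / (i - j : ℕ) * (C / i) := by
    intro k i hi
    simp only [hgdef]
    have hiq : (0 : ℝ) ≤ q (i - j) := (hq01 _ (by omega)).1
    have h1 : q (i - j) ≤ C / ((i - j : ℕ) : ℝ) := hCq (i - j) (by omega)
    have hPp0 : (0 : ℝ) ≤ ∏ l ∈ Finset.Icc (i - j + 1) (i - 2), p l := by
      apply hpprod_nonneg; intro l hl; have := (Finset.mem_Icc.1 hl).1; omega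
    have hPp1 : (∏ l ∈ Finset.Icc (i - j + 1) (i - 2), p l) ≤ 1 := by
      apply hpprod_le_one; intro l hl; have := (Finset.mem_Icc.1 hl).1; omega
    have hPq0 : (0 : ℝ) ≤ ∏ l ∈ Finset.Icc i (k + i), q l := by
      apply hqprod_nonneg; intro l hl; have := (Finset.mem_Icc.1 hl).1; omega
    have hCi : (0 : ℝ) ≤ C / ((i - j : ℕ) : ℝ) := by positivity
    calc q (i - j) * (∏ l ∈ Finset.Icc (i - j + 1) (i - 2), p l)
          * ∏ l ∈ Finset.Icc i (k + i), q l
        ≤ (C / ((i - j : ℕ) : ℝ) * 1) * (C / (i : ℕ)) := by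
          apply mul_le_mul (mul_le_mul h1 hPp1 hPp0 hCi) (hPq_le k i hi) hPq0 (by positivity)
      _ = C / ((i - j : ℕ) : ℝ) * (C / (i : ℕ)) := by ring
  have hg_le_one : ∀ k i, j + 1 ≤ i → g k i ≤ ∏ l ∈ Finset.Icc i (k + i), q l := by
    intro k i hi
    simp only [hgdef]
    have hPq0 : (0 : ℝ) ≤ ∏ l ∈ Finset.Icc i (k + i), q l := by
      apply hqprod_nonneg; intro l hl; have := (Finset.mem_Icc.1 hl).1; omega
    apply mul_le_of_le_one_left hPq0
    have hPp0 : (0 : ℝ) ≤ ∏ l ∈ Finset.Icc (i - j + 1) (i - 2), p l := by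
      apply hpprod_nonneg; intro l hl; have := (Finset.mem_Icc.1 hl).1; omega
    have hPp1 : (∏ l ∈ Finset.Icc (i - j + 1) (i - 2), p l) ≤ 1 := by
      apply hpprod_le_one; intro l hl; have := (Finset.mem_Icc.1 hl).1; omega
    have := hq01 (i - j) (by omega)
    calc q (i - j) * ∏ l ∈ Finset.Icc (i - j + 1) (i - 2), p l
        ≤ 1 * 1 := mul_le_mul this.2 hPp1 hPp0 zero_le_one
      _ = 1 := mul_one _
  have hg_succ : ∀ k i, j + 1 ≤ i → g (k + 1) i = g k i * q (k + i + 1) := by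
    intro k i hi
    simp only [hgdef]
    have h : k + 1 + i = (k + i) + 1 := by omega
    rw [h, Finset.prod_Icc_succ_top (by omega : i ≤ k + i + 1)]
    ring
  have hg_anti : ∀ k i, j + 1 ≤ i → g (k + 1) i ≤ g k i := by
    intro k i hi
    rw [hg_succ k i hi]
    exact mul_le_of_le_one_right (hg_nonneg k i hi) (hq01 (k + i + 1) (by omega)).2
  -- dominating function
  set G : ℕ → ℝ := fun t => C * C * (1 / (((t : ℝ) + 1) * ((t : ℝ) + 1))) with hGdef
  have hfG : ∀ k t, g k (j + 1 + t) ≤ G t := by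
    intro k t
    refine le_trans (hg_le k (j + 1 + t) (by omega)) ?_
    have e0 : j + 1 + t - j = t + 1 := by omega
    have e1 : ((j + 1 + t - j : ℕ) : ℝ) = (t : ℝ) + 1 := by rw [e0]; push_cast; ring
    rw [e1]
    have h2 : C / ((j + 1 + t : ℕ) : ℝ) ≤ C / ((t : ℝ) + 1) := by
      have hle : ((t : ℝ) + 1) ≤ ((j + 1 + t : ℕ) : ℝ) := by
        push_cast
        have : (0 : ℝ) ≤ (j : ℝ) := Nat.cast_nonneg j
        linarith
      apply div_le_div_of_nonneg_left (by linarith) (by positivity) hle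
    calc C / ((t : ℝ) + 1) * (C / ((j + 1 + t : ℕ) : ℝ))
        ≤ C / ((t : ℝ) + 1) * (C / ((t : ℝ) + 1)) :=
          mul_le_mul_of_nonneg_left h2 (by positivity)
      _ = G t := by
          simp only [hGdef]
          rw [div_mul_div_comm, ← mul_one_div]
  have hG_sum : Summable G := by
    have h1 : Summable (fun n : ℕ => (1 : ℝ) / (n : ℝ) ^ 2) :=
      Real.summable_one_div_nat_pow.2 one_lt_two
    have h2 : Summable (fun t : ℕ => (1 : ℝ) / ((t + 1 : ℕ) : ℝ) ^ 2) :=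
      (summable_nat_add_iff (f := fun n : ℕ => (1 : ℝ) / (n : ℝ) ^ 2) 1).2 h1
    apply Summable.congr (h2.mul_left (C * C))
    intro t
    simp only [hGdef]
    push_cast
    ring
  have hg_summ : ∀ k, Summable (fun t => g k (j + 1 + t)) := fun k =>
    Summable.of_nonneg_of_le (fun t => hg_nonneg k (j + 1 + t) (by omega)) (hfG k) hG_sum
  set b : ℕ → ℝ := fun k => ∑' t, g k (j + 1 + t) with hbdef
  -- rewriting the partial sums
  have hA_eq : ∀ k n, A k n = ∑ t ∈ Finset.range (n - k - 1 - j), g k (j + 1 + t) := by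
    intro k n
    rw [hAdef]
    simp only
    rw [← Finset.Ico_add_one_right_eq_Icc, Finset.sum_Ico_eq_sum_range]
    have harg : n - k - 1 + 1 - (j + 1) = n - k - 1 - j := by omega
    rw [harg]
  -- part (a)
  have ha : ∀ k, Tendsto (fun n => A k n) atTop (nhds (b k)) := by
    intro k
    have hs := (hg_summ k).hasSum.tendsto_sum_nat
    have he : Tendsto (fun n : ℕ => n - k - 1 - j) atTop atTop := by
      have : (fun n : ℕ => n - k - 1 - j) = fun n : ℕ => n - (k + 1 + j) := by
        funext n; omega
      rw [this]; exact tendsto_sub_atTop_nat _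
    exact (hs.comp he).congr fun n => (hA_eq k n).symm
  have hA_nonneg : ∀ k n, 0 ≤ A k n := by
    intro k n
    apply Finset.sum_nonneg
    intro i hi
    exact hg_nonneg k i (Finset.mem_Icc.1 hi).1
  have hA_le_b : ∀ k n, A k n ≤ b k := by
    intro k n
    rw [hA_eq]
    exact Summable.sum_le_tsum _ (fun t _ => hg_nonneg k (j + 1 + t) (by omega)) (hg_summ k)
  have hb_nonneg : ∀ k, 0 ≤ b k := fun k =>
    tsum_nonneg (fun t => hg_nonneg k (j + 1 + t) (by omega))
  have hA_anti : ∀ k n, A (k + 1) n ≤ A k n := by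
    intro k n
    simp only [hAdef]
    calc ∑ i ∈ Finset.Icc (j + 1) (n - (k + 1) - 1), g (k + 1) i
        ≤ ∑ i ∈ Finset.Icc (j + 1) (n - (k + 1) - 1), g k i :=
          Finset.sum_le_sum fun i hi => hg_anti k i (Finset.mem_Icc.1 hi).1
      _ ≤ ∑ i ∈ Finset.Icc (j + 1) (n - k - 1), g k i :=
          Finset.sum_le_sum_of_subset_of_nonneg
            (Finset.Icc_subset_Icc le_rfl (by omega))
            (fun i hi _ => hg_nonneg k i (Finset.mem_Icc.1 hi).1)
  -- b tends to 0
  have hb0 : Tendsto b atTop (nhds 0) := by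
    have hpt : ∀ t : ℕ, Tendsto (fun k => g k (j + 1 + t)) atTop (nhds 0) := by
      intro t
      have hub : ∀ k, g k (j + 1 + t) ≤ (1 / 2 : ℝ) ^ (k - L0) := by
        intro k
        set i := j + 1 + t with hidef
        refine le_trans (hg_le_one k i (by omega)) ?_
        set M := max i L0 with hM
        have hMle : M ≤ i + L0 := max_le (by omega) (by omega)
        have hiM : i ≤ M := le_max_left _ _
        have hsub : Finset.Icc M (k + i) ⊆ Finset.Icc i (k + i) :=
          Finset.Icc_subset_Icc hiM le_rfl
        have hdrop : (∏ l ∈ Finset.Icc i (k + i), q l) ≤ ∏ l ∈ Finset.Icc M (k + i), q l := by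
          rw [← Finset.prod_sdiff hsub]
          apply mul_le_of_le_one_left
          · apply hqprod_nonneg; intro l hl; have := (Finset.mem_Icc.1 hl).1; omega
          · apply hqprod_le_one
            intro l hl
            have := (Finset.mem_Icc.1 (Finset.mem_sdiff.1 hl).1).1
            omega
        have hhalf : (∏ l ∈ Finset.Icc M (k + i), q l)
            ≤ (1 / 2 : ℝ) ^ (Finset.Icc M (k + i)).card := by
          rw [← Finset.prod_const]
          apply Finset.prod_le_prod
          · intro l hl; exact (hq01 l (by have := (Finset.mem_Icc.1 hl).1; omega)).1
          · intro l hl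
            exact hL0 l (le_trans (le_max_right _ _) (Finset.mem_Icc.1 hl).1)
        have hcard : (Finset.Icc M (k + i)).card = k + i + 1 - M := Nat.card_Icc M (k + i)
        have hexp : (1 / 2 : ℝ) ^ (k + i + 1 - M) ≤ (1 / 2 : ℝ) ^ (k - L0) :=
          pow_le_pow_of_le_one (by norm_num) (by norm_num) (by omega)
        calc (∏ l ∈ Finset.Icc i (k + i), q l)
            ≤ ∏ l ∈ Finset.Icc M (k + i), q l := hdrop
          _ ≤ (1 / 2 : ℝ) ^ (Finset.Icc M (k + i)).card := hhalf
          _ = (1 / 2 : ℝ) ^ (k + i + 1 - M) := by rw [hcard]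
          _ ≤ (1 / 2 : ℝ) ^ (k - L0) := hexp
      have hlim2 : Tendsto (fun k : ℕ => (1 / 2 : ℝ) ^ (k - L0)) atTop (nhds 0) :=
        (tendsto_pow_atTop_nhds_zero_of_lt_one (by norm_num) (by norm_num)).comp
          (tendsto_sub_atTop_nat L0)
      exact tendsto_of_tendsto_of_tendsto_of_le_of_le tendsto_const_nhds hlim2
        (fun k => hg_nonneg k (j + 1 + t) (by omega)) hub
    have hbd : ∀ᶠ k : ℕ in atTop, ∀ t, ‖g k (j + 1 + t)‖ ≤ G t := by
      apply Eventually.of_forall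
      intro k t
      rw [Real.norm_eq_abs, abs_of_nonneg (hg_nonneg k (j + 1 + t) (by omega))]
      exact hfG k t
    have := tendsto_tsum_of_dominated_convergence hG_sum hpt hbd
    rw [tsum_zero] at this
    exact this
  -- EC decomposition
  set S : ℕ → ℝ := fun n => ∑ k ∈ Finset.range (n - j - 1), (-1 : ℝ) ^ k * A k n with hSdef
  have hEC_eq : ∀ n, EC j n =
      q (n - j + 1) * (∏ l ∈ Finset.Icc (n - j + 2) (n - 1), p l) + S n := by
    intro n
    rw [hEC j n]
    congr 1
    calc ∑ i ∈ Finset.Icc (j + 1) (n - 1), ∑ k ∈ Finset.range (n - i),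
          (-1 : ℝ) ^ k * q (i - j) * (∏ l ∈ Finset.Icc (i - j + 1) (i - 2), p l)
            * ∏ l ∈ Finset.Icc i (k + i), q l
        = ∑ i ∈ Finset.Icc (j + 1) (n - 1), ∑ k ∈ Finset.range (n - i),
            (-1 : ℝ) ^ k * g k i := by
          apply Finset.sum_congr rfl; intro i _
          apply Finset.sum_congr rfl; intro k _
          simp only [hgdef]; ring
      _ = ∑ k ∈ Finset.range (n - j - 1), ∑ i ∈ Finset.Icc (j + 1) (n - k - 1),
            (-1 : ℝ) ^ k * g k i := by
          apply Finset.sum_comm'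
          intro i k
          simp only [Finset.mem_Icc, Finset.mem_range]
          omega
      _ = S n := by
          simp only [hSdef, hAdef]
          apply Finset.sum_congr rfl; intro k _
          rw [Finset.mul_sum]
  have hB0 : Tendsto (fun n : ℕ =>
      q (n - j + 1) * (∏ l ∈ Finset.Icc (n - j + 2) (n - 1), p l)) atTop (nhds 0) := by
    have hub : ∀ n : ℕ, q (n - j + 1) * (∏ l ∈ Finset.Icc (n - j + 2) (n - 1), p l)
        ≤ C / ((n - j + 1 : ℕ) : ℝ) := by
      intro n
      have hq0' : (0 : ℝ) ≤ q (n - j + 1) := (hq01 _ (by omega)).1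
      have hPp1 : (∏ l ∈ Finset.Icc (n - j + 2) (n - 1), p l) ≤ 1 := by
        apply hpprod_le_one; intro l hl; have := (Finset.mem_Icc.1 hl).1; omega
      calc q (n - j + 1) * (∏ l ∈ Finset.Icc (n - j + 2) (n - 1), p l)
          ≤ q (n - j + 1) * 1 := mul_le_mul_of_nonneg_left hPp1 hq0'
        _ = q (n - j + 1) := mul_one _
        _ ≤ C / ((n - j + 1 : ℕ) : ℝ) := hCq _ (by omega)
    have hlb : ∀ n : ℕ, 0 ≤ q (n - j + 1) * (∏ l ∈ Finset.Icc (n - j + 2) (n - 1), p l) := by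
      intro n
      apply mul_nonneg (hq01 _ (by omega)).1
      apply hpprod_nonneg; intro l hl; have := (Finset.mem_Icc.1 hl).1; omega
    have he : Tendsto (fun n : ℕ => n - j + 1) atTop atTop :=
      tendsto_atTop_mono (fun n => by omega : ∀ n : ℕ, n - (j + 1) ≤ n - j + 1)
        (tendsto_sub_atTop_nat (j + 1))
    have hdiv : Tendsto (fun n : ℕ => C / ((n - j + 1 : ℕ) : ℝ)) atTop (nhds 0) :=
      (tendsto_const_div_atTop_nhds_zero_nat C).comp he
    exact tendsto_of_tendsto_of_tendsto_of_le_of_le tendsto_const_nhds hdiv hlb hub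
  -- limits of the even partial alternating sums
  have hEm : ∀ m : ℕ, Tendsto (fun n => ∑ k ∈ Finset.range (2 * m), (-1 : ℝ) ^ k * A k n)
      atTop (nhds (∑ k ∈ Finset.range (2 * m), (-1 : ℝ) ^ k * b k)) := by
    intro m
    exact tendsto_finset_sum _ (fun k _ => (ha k).const_mul _)
  -- sandwich
  have hsand : ∀ m n : ℕ, 2 * m ≤ n - j - 1 →
      0 ≤ S n - ∑ k ∈ Finset.range (2 * m), (-1 : ℝ) ^ k * A k n ∧
      S n - ∑ k ∈ Finset.range (2 * m), (-1 : ℝ) ^ k * A k n ≤ A (2 * m) n := by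
    intro m n hmn
    have halt := alt_bound (fun k => A k n) (fun k => hA_nonneg k n) (fun k => hA_anti k n)
      ((n - j - 1) - 2 * m) (2 * m) (n - j - 1) rfl (even_two_mul m)
    have hsplit : S n = (∑ k ∈ Finset.range (2 * m), (-1 : ℝ) ^ k * A k n)
        + ∑ k ∈ Finset.Ico (2 * m) (n - j - 1), (-1 : ℝ) ^ k * A k n := by
      rw [hSdef]
      simp only [Finset.range_eq_Ico]
      rw [← Finset.sum_Ico_consecutive _ (Nat.zero_le _) hmn]
    constructor
    · rw [hsplit]; linarith [halt.1]
    · rw [hsplit]; linarith [halt.2]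
  have hb2m0 : Tendsto (fun m : ℕ => b (2 * m)) atTop (nhds 0) :=
    hb0.comp (tendsto_atTop_atTop_of_monotone (fun a b' h => by omega)
      (fun n => ⟨n, by omega⟩))
  -- S is Cauchy
  have hScauchy : CauchySeq S := by
    rw [Metric.cauchySeq_iff]
    intro ε hε
    obtain ⟨m, hm⟩ :=
      (hb2m0.eventually (eventually_le_nhds (show (0 : ℝ) < ε / 4 by linarith))).exists
    obtain ⟨N₁, hN₁⟩ := Metric.cauchySeq_iff.1 (hEm m).cauchySeq (ε / 4) (by linarith)
    refine ⟨max N₁ (2 * m + j + 2), ?_⟩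
    intro n₁ hn₁ n₂ hn₂
    have hd : ∀ n : ℕ, max N₁ (2 * m + j + 2) ≤ n →
        dist (S n) (∑ k ∈ Finset.range (2 * m), (-1 : ℝ) ^ k * A k n) ≤ ε / 4 := by
      intro n hn
      have hcond : 2 * m ≤ n - j - 1 := by
        have := le_trans (le_max_right N₁ (2 * m + j + 2)) hn
        omega
      have hs := hsand m n hcond
      rw [Real.dist_eq, abs_of_nonneg hs.1]
      exact le_trans (le_trans hs.2 (hA_le_b (2 * m) n)) hm
    have h1 := hd n₁ hn₁
    have h2 := hd n₂ hn₂
    have h3 := hN₁ n₁ (le_trans (le_max_left _ _) hn₁) n₂ (le_trans (le_max_left _ _) hn₂)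
    calc dist (S n₁) (S n₂)
        ≤ dist (S n₁) (∑ k ∈ Finset.range (2 * m), (-1 : ℝ) ^ k * A k n₁)
          + dist (∑ k ∈ Finset.range (2 * m), (-1 : ℝ) ^ k * A k n₁)
              (∑ k ∈ Finset.range (2 * m), (-1 : ℝ) ^ k * A k n₂)
          + dist (∑ k ∈ Finset.range (2 * m), (-1 : ℝ) ^ k * A k n₂) (S n₂) :=
          dist_triangle4 _ _ _ _
      _ < ε := by
          rw [dist_comm (∑ k ∈ Finset.range (2 * m), (-1 : ℝ) ^ k * A k n₂) (S n₂)]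
          linarith
  obtain ⟨L, hL⟩ := cauchySeq_tendsto_of_complete hScauchy
  refine ⟨b, fun k => ha k, L, ?_, ?_⟩
  · have := hB0.add hL
    rw [zero_add] at this
    exact this.congr fun n => (hEC_eq n).symm
  · intro m hm
    have hsub : Tendsto (fun n => S n - ∑ k ∈ Finset.range (2 * m), (-1 : ℝ) ^ k * A k n)
        atTop (nhds (L - ∑ k ∈ Finset.range (2 * m), (-1 : ℝ) ^ k * b k)) := hL.sub (hEm m)
    have hev : ∀ᶠ n : ℕ in atTop, 2 * m ≤ n - j - 1 := by
      filter_upwards [eventually_ge_atTop (2 * m + j + 2)] with n hn; omega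
    refine ⟨L - ∑ k ∈ Finset.range (2 * m), (-1 : ℝ) ^ k * b k, ?_, ?_, by ring⟩
    · apply ge_of_tendsto hsub
      filter_upwards [hev] with n hn using (hsand m n hn).1
    · apply le_of_tendsto hsub
      filter_upwards [hev] with n hn using
        le_trans (hsand m n hn).2 (hA_le_b (2 * m) n)
end

section
/- Let θ > 0, p(i) = (i−1)/(θ+i−1) and q(i) = θ/(θ+i−1) for i ≥ 3, with p(1) = 0, p(2) = 1, q(1) = 1, q(2) = 0, and define EC_j(n) := q(n−j+1)·Π_{l=n−j+2}^{n−1} p(l) + Σ_{i=j+1}^{n−1} Σ_{k=0}^{n−i−1} (−1)^k q(i−j) Π_{l=i−j+1}^{i−2} p(l) Π_{l=i}^{k+i} q(l). Then for 2 ≤ j ≤ n−2: EC_j(n) = θ(n−j+1)_{(j−2)}/(θ+n−j)_{(j−1)} + Σ_{k=1}^{n−j−1} (−1)^{k+1} θ^k (j−2)! / ((θ+2)_{(j−3)} (θ+j)_{(k)}) + Σ_{i=j+3}^{n−1} Σ_{k=1}^{n−i} (−θ)^{k+1} (i−j)_{(j−2)} / ((θ+i−j−1)_{(j−1)} (θ+i−1)_{(k)});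 moreover EC_n(n) = (n−2)!/(θ+2)_{(n−3)} and EC_{n−1}(n) = 0. -/
open Finset Filter

lemma rf_succ (x : ℝ) (m : ℕ) : risingFac x (m+1) = x * risingFac (x+1) m := by
  unfold risingFac
  rw [Finset.prod_range_succ', mul_comm]
  congr 1
  · simp
  · apply Finset.prod_congr rfl
    intro k _; push_cast; ring

lemma rf_pos (x : ℝ) (hx : 0 < x) (m : ℕ) : 0 < risingFac x m := by
  unfold risingFac
  exact Finset.prod_pos (fun k _ => by positivity)

lemma prod_Icc_add (x : ℝ) (a b : ℕ) : ∏ l ∈ Icc a b, (x + l) = risingFac (x + a) (b + 1 - a) := by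
  rw [← Finset.Ico_add_one_right_eq_Icc, Finset.prod_Ico_eq_prod_range]
  apply Finset.prod_congr rfl
  intro k _; push_cast; ring

lemma rf_two (m : ℕ) : risingFac 2 m = (m+1).factorial := by
  induction m with
  | zero => simp [risingFac]
  | succ m ih =>
    unfold risingFac at ih ⊢
    rw [Finset.prod_range_succ, ih]
    push_cast [Nat.factorial_succ]
    ring

lemma prod_p (θ : ℝ) (p : ℕ → ℝ) (hp : ∀ i, 3 ≤ i → p i = (i - 1) / (θ + i - 1))
    (a b : ℕ) (ha : 3 ≤ a) :
    ∏ l ∈ Icc a b, p l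
      = risingFac ((a:ℝ) - 1) (b + 1 - a) / risingFac (θ + a - 1) (b + 1 - a) := by
  have h : ∀ l ∈ Icc a b, p l = ((-1:ℝ) + l) / ((θ - 1) + l) := by
    intro l hl
    have h3 : 3 ≤ l := le_trans ha (Finset.mem_Icc.mp hl).1
    rw [hp l h3]; ring_nf
  rw [Finset.prod_congr rfl h, Finset.prod_div_distrib, prod_Icc_add, prod_Icc_add]
  have e1 : (-1:ℝ) + a = (a:ℝ) - 1 := by ring
  have e2 : θ - 1 + (a:ℝ) = θ + a - 1 := by ring
  rw [e1, e2]

lemma prod_q (θ : ℝ) (q : ℕ → ℝ) (hq : ∀ i, 3 ≤ i → q i = θ / (θ + i - 1))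
    (i k : ℕ) (hi : 3 ≤ i) :
    ∏ l ∈ Icc i (k+i), q l = θ^(k+1) / risingFac (θ + i - 1) (k+1) := by
  have h : ∀ l ∈ Icc i (k+i), q l = θ / ((θ - 1) + l) := by
    intro l hl
    have h3 : 3 ≤ l := le_trans hi (Finset.mem_Icc.mp hl).1
    rw [hq l h3]; ring_nf
  rw [Finset.prod_congr rfl h, Finset.prod_div_distrib, prod_Icc_add, Finset.prod_const,
    Nat.card_Icc]
  have e1 : k + i + 1 - i = k + 1 := by omega
  have e2 : θ - 1 + (i:ℝ) = θ + i - 1 := by ring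
  rw [e1, e2]

lemma prod_p2 (θ : ℝ) (p : ℕ → ℝ) (hp2 : p 2 = 1)
    (hp : ∀ i, 3 ≤ i → p i = (i - 1) / (θ + i - 1)) (b : ℕ) :
    ∏ l ∈ Icc 2 b, p l = risingFac 2 (b-2) / risingFac (θ + 2) (b-2) := by
  by_cases hb : 2 ≤ b
  · have hmem : (2:ℕ) ∈ Icc 2 b := Finset.mem_Icc.mpr ⟨le_rfl, hb⟩
    rw [← Finset.mul_prod_erase _ _ hmem, hp2, one_mul]
    have he : (Icc 2 b).erase 2 = Icc 3 b := by
      rw [Finset.Icc_erase_left, ← Finset.Icc_add_one_left_eq_Ioc]; rfl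
    rw [he, prod_p θ p hp 3 b le_rfl]
    have e1 : b + 1 - 3 = b - 2 := by omega
    rw [e1]
    norm_num
    rw [show θ + 3 - 1 = θ + 2 by ring]
  · have he : Icc 2 b = ∅ := Finset.Icc_eq_empty (by omega)
    have e1 : b - 2 = 0 := by omega
    rw [he, e1]
    simp [risingFac]

/-- exact expected number of `j`-cycles of the playground-game chain `η^{n,θ}`. -/
theorem stmt5 (θ : ℝ) (hθ : 0 < θ) (p q : ℕ → ℝ)
    (hp1 : p 1 = 0) (hp2 : p 2 = 1) (hq1 : q 1 = 1) (hq2 : q 2 = 0)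
    (hp : ∀ i, 3 ≤ i → p i = (i - 1) / (θ + i - 1))
    (hq : ∀ i, 3 ≤ i → q i = θ / (θ + i - 1))
    (EC : ℕ → ℕ → ℝ)
    (hEC : ∀ j n : ℕ, EC j n =
      q (n - j + 1) * ∏ l ∈ Finset.Icc (n - j + 2) (n - 1), p l
      + ∑ i ∈ Finset.Icc (j + 1) (n - 1), ∑ k ∈ Finset.range (n - i),
          (-1 : ℝ) ^ k * q (i - j) * (∏ l ∈ Finset.Icc (i - j + 1) (i - 2), p l)
            * ∏ l ∈ Finset.Icc i (k + i), q l)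
    (n : ℕ) (hn : 4 ≤ n) :
    (∀ j : ℕ, 2 ≤ j → j ≤ n - 2 →
      EC j n =
        θ * risingFac ((n : ℝ) - j + 1) (j - 2) / risingFac (θ + n - j) (j - 1)
        + (∑ k ∈ Finset.Icc 1 (n - j - 1),
            (-1 : ℝ) ^ (k + 1) * θ ^ k * ((j - 2).factorial : ℝ)
              / (risingFac (θ + 2) (j - 3) * risingFac (θ + j) k))
        + ∑ i ∈ Finset.Icc (j + 3) (n - 1), ∑ k ∈ Finset.Icc 1 (n - i),
            (-θ) ^ (k + 1) * risingFac ((i : ℝ) - j) (j - 2)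
              / (risingFac (θ + i - j - 1) (j - 1) * risingFac (θ + i - 1) k)) ∧
    EC n n = ((n - 2).factorial : ℝ) / risingFac (θ + 2) (n - 3) ∧
    EC (n - 1) n = 0 := by
  refine ⟨?_, ?_, ?_⟩
  · -- main formula
    intro j hj2 hjn
    rw [hEC]
    have hjn' : j + 2 <= n := by omega
    have hjR : (j:ℝ) <= n := by exact_mod_cast (by omega : j <= n)
    have hD : (0:ℝ) < θ + n - j := by
      have : (0:ℝ) <= (n:ℝ) - j := by linarith
      linarith
    have hA : q (n - j + 1) * ∏ l ∈ Finset.Icc (n - j + 2) (n - 1), p l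
        = θ * risingFac ((n : ℝ) - j + 1) (j - 2) / risingFac (θ + n - j) (j - 1) := by
      rw [hq _ (by omega), prod_p θ p hp _ _ (by omega)]
      have e1 : n - 1 + 1 - (n - j + 2) = j - 2 := by omega
      rw [e1]
      have c1 : ((n - j + 1 : ℕ) : ℝ) = (n:ℝ) - j + 1 := by
        push_cast [show j <= n from by omega]; ring
      have c2 : ((n - j + 2 : ℕ) : ℝ) = (n:ℝ) - j + 2 := by
        push_cast [show j <= n from by omega]; ring
      rw [c1, c2]
      rw [show (n:ℝ) - ↑j + 2 - 1 = (n:ℝ) - ↑j + 1 from by ring]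
      rw [show θ + ((n:ℝ) - ↑j + 2) - 1 = θ + ↑n - ↑j + 1 from by ring]
      rw [show θ + ((n:ℝ) - ↑j + 1) - 1 = θ + ↑n - ↑j from by ring]
      rw [show j - 1 = (j - 2) + 1 from by omega, rf_succ (θ + ↑n - ↑j) (j - 2)]
      have hR : (0:ℝ) < risingFac (θ + ↑n - ↑j + 1) (j - 2) := rf_pos _ (by linarith) _
      set A := risingFac ((n:ℝ) - ↑j + 1) (j - 2)
      set B := risingFac (θ + ↑n - ↑j + 1) (j - 2)
      field_simp
    have hS : (∑ i ∈ Finset.Icc (j + 1) (n - 1), ∑ k ∈ Finset.range (n - i),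
          (-1 : ℝ) ^ k * q (i - j) * (∏ l ∈ Finset.Icc (i - j + 1) (i - 2), p l)
            * ∏ l ∈ Finset.Icc i (k + i), q l)
        = (∑ k ∈ Finset.Icc 1 (n - j - 1),
            (-1 : ℝ) ^ (k + 1) * θ ^ k * ((j - 2).factorial : ℝ)
              / (risingFac (θ + 2) (j - 3) * risingFac (θ + j) k))
          + ∑ i ∈ Finset.Icc (j + 3) (n - 1), ∑ k ∈ Finset.Icc 1 (n - i),
              (-θ) ^ (k + 1) * risingFac ((i : ℝ) - j) (j - 2)
                / (risingFac (θ + i - j - 1) (j - 1) * risingFac (θ + i - 1) k) := by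
      have hmem : j + 1 ∈ Finset.Icc (j+1) (n-1) := Finset.mem_Icc.mpr ⟨le_rfl, by omega⟩
      rw [← Finset.add_sum_erase _ _ hmem]
      congr 1
      · -- i = j+1 term equals T2
        rw [show j + 1 - 2 = j - 1 from by omega, show j + 1 - j + 1 = 2 from by omega,
          show j + 1 - j = 1 from by omega, hq1]
        rw [show n - (j + 1) = n - j - 1 from by omega]
        conv_rhs => rw [← Finset.Ico_add_one_right_eq_Icc, Finset.sum_Ico_eq_sum_range]
        rw [show n - j - 1 + 1 - 1 = n - j - 1 from by omega]
        apply Finset.sum_congr rfl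
        intro k _
        rw [prod_p2 θ p hp2 hp (j-1), prod_q θ q hq (j+1) k (by omega)]
        rw [show j - 1 - 2 = j - 3 from by omega, rf_two,
          show (j - 3 + 1).factorial = (j - 2).factorial from by
            by_cases h3 : 3 <= j
            · rw [show j - 3 + 1 = j - 2 from by omega]
            · rw [show j - 3 + 1 = 1 from by omega, show j - 2 = 0 from by omega]
              rfl]
        rw [show θ + ((j+1:ℕ):ℝ) - 1 = θ + (j:ℝ) from by push_cast; ring]
        rw [show 1 + k = k + 1 from by omega]
        rw [show ((-1:ℝ))^(k+1+1) = (-1)^k from by rw [show k+1+1 = k+2 from rfl, pow_add]; norm_num]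
        have h1 : (0:ℝ) < risingFac (θ + 2) (j - 3) := rf_pos _ (by linarith) _
        have h2 : (0:ℝ) < risingFac (θ + (j:ℝ)) (k+1) := rf_pos _ (by positivity) _
        set A := risingFac (θ + 2) (j - 3)
        set B := risingFac (θ + (j:ℝ)) (k + 1)
        field_simp
      · -- remaining sum equals T3
        have he : (Finset.Icc (j+1) (n-1)).erase (j+1) = Finset.Icc (j+2) (n-1) := by
          rw [Finset.Icc_erase_left, ← Finset.Icc_add_one_left_eq_Ioc]; rfl
        rw [he]
        have hsub : Finset.Icc (j+3) (n-1) ⊆ Finset.Icc (j+2) (n-1) :=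
          Finset.Icc_subset_Icc (by omega) le_rfl
        have hzero : ∀ x ∈ Finset.Icc (j+2) (n-1), x ∉ Finset.Icc (j+3) (n-1) →
            (∑ k ∈ Finset.range (n - x),
              (-1 : ℝ) ^ k * q (x - j) * (∏ l ∈ Finset.Icc (x - j + 1) (x - 2), p l)
                * ∏ l ∈ Finset.Icc x (k + x), q l) = 0 := by
          intro x hx hx'
          simp only [Finset.mem_Icc] at hx hx'
          have hx2 : x = j + 2 := by omega
          subst hx2
          apply Finset.sum_eq_zero
          intro k _
          rw [show j + 2 - j = 2 from by omega, hq2]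
          ring
        rw [← Finset.sum_subset hsub hzero]
        apply Finset.sum_congr rfl
        intro i hi
        obtain ⟨hi1, hi2⟩ := Finset.mem_Icc.mp hi
        have hiR : (j:ℝ) + 3 <= i := by exact_mod_cast (by omega : j + 3 <= i)
        conv_rhs => rw [← Finset.Ico_add_one_right_eq_Icc, Finset.sum_Ico_eq_sum_range]
        rw [show n - i + 1 - 1 = n - i from by omega]
        apply Finset.sum_congr rfl
        intro k _
        rw [hq _ (show 3 <= i - j from by omega), prod_p θ p hp _ _ (by omega),
          prod_q θ q hq i k (by omega)]
        rw [show i - 2 + 1 - (i - j + 1) = j - 2 from by omega]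
        have c1 : ((i - j : ℕ) : ℝ) = (i:ℝ) - j := by
          push_cast [show j <= i from by omega]; ring
        have c2 : ((i - j + 1 : ℕ) : ℝ) = (i:ℝ) - j + 1 := by
          push_cast [show j <= i from by omega]; ring
        rw [c1, c2]
        rw [show (i:ℝ) - ↑j + 1 - 1 = (i:ℝ) - ↑j from by ring]
        rw [show θ + ((i:ℝ) - ↑j + 1) - 1 = (θ + ↑i - ↑j - 1) + 1 from by ring]
        rw [show θ + ((i:ℝ) - ↑j) - 1 = θ + ↑i - ↑j - 1 from by ring]
        rw [show j - 1 = (j - 2) + 1 from by omega, rf_succ (θ + ↑i - ↑j - 1) (j - 2)]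
        rw [show 1 + k = k + 1 from by omega]
        rw [show ((-θ:ℝ))^(k+1+1) = (-1)^k * θ^(k+2) from by
          rw [show k+1+1 = k+2 from rfl, neg_pow, pow_add]; norm_num]
        have hd1 : (0:ℝ) < θ + ↑i - ↑j - 1 := by linarith
        have h1 : (0:ℝ) < risingFac (θ + ↑i - ↑j - 1 + 1) (j - 2) := rf_pos _ (by linarith) _
        have h2 : (0:ℝ) < risingFac (θ + ↑i - 1) (k+1) := by
          apply rf_pos
          have : (1:ℝ) <= i := by exact_mod_cast (by omega : 1 <= i)
          linarith
        set A := risingFac ((i:ℝ) - ↑j) (j - 2)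
        set B := risingFac (θ + ↑i - ↑j - 1 + 1) (j - 2)
        set C := risingFac (θ + ↑i - 1) (k + 1)
        field_simp
        ring
    rw [hA, hS]
    ring
  · -- EC n n
    rw [hEC]
    have h1 : n - n + 1 = 1 := by omega
    have h2 : Icc (n+1) (n-1) = ∅ := Finset.Icc_eq_empty (by omega)
    have h3 : n - n + 2 = 2 := by omega
    rw [h1, h3, hq1, h2]
    simp only [Finset.sum_empty, add_zero, one_mul]
    rw [prod_p2 θ p hp2 hp (n-1)]
    have e1 : n - 1 - 2 = n - 3 := by omega
    rw [e1, rf_two]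
    have e2 : n - 3 + 1 = n - 2 := by omega
    rw [e2]
  · -- EC (n-1) n
    rw [hEC]
    have h1 : n - (n-1) + 1 = 2 := by omega
    have h2 : Icc ((n-1)+1) (n-1) = ∅ := Finset.Icc_eq_empty (by omega)
    rw [h1, hq2, h2]
    simp
end

section
/- Let θ : ℕ → ℝ with θ_1 = 1 and θ_i > 0 for all i, and let γ be defined by γ_1 = 0, γ_2 = 1/(1+θ_2), and γ_i = ((i−1)/(i−1+θ_i))·( γ_{i−1} + (θ_{i−1}/(i−2+θ_{i−1}))·γ_{i−2} ) for i ≥ 3. Define G_0 = 0, G_1 = G_2 = 1, and for i ≥ 3, G_i := 1 + Σ_{k=1}^{⌊(i−1)/2⌋} Σ_{(i_1,…,i_k)} Π_{j=1}^{k} θ_{i_j}/(i_j − 1), where the inner sum ranges over all k-tuples of integers with 2 < i_j ≤ i for every j and i_{j+1} > i_j + 1 for 1 ≤ j < k. Then for every i ≥ 2, γ_i = G_{i−1} · (i−1)! / θ_{<i>}, where θ_{<n>} := Π_{k=1}^{n} (θ_k + k − 1). -/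
open Finset Filter

/-- The set of subsets of `{3, ..., m}` with no two adjacent elements. -/
private def P8 (m : ℕ) : Finset (Finset ℕ) :=
  (Finset.Icc 3 m).powerset.filter (fun s => ∀ a ∈ s, a + 1 ∉ s)

/-- Weighted sum over `P8 m`. -/
private noncomputable def F8 (θ : ℕ → ℝ) (m : ℕ) : ℝ :=
  ∑ s ∈ P8 m, ∏ a ∈ s, θ a / ((a : ℝ) - 1)

private lemma mem_P8 {m : ℕ} {s : Finset ℕ} :
    s ∈ P8 m ↔ s ⊆ Finset.Icc 3 m ∧ ∀ a ∈ s, a + 1 ∉ s := by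
  simp [P8]

private lemma card_le_of_mem_P8 {m : ℕ} {s : Finset ℕ} (hs : s ∈ P8 m) :
    s.card ≤ (m - 1) / 2 := by
  rw [mem_P8] at hs
  obtain ⟨hsub, hgood⟩ := hs
  have hstep : ∀ a ∈ s, ∀ b ∈ s, a < b → a + 2 ≤ b := by
    intro a ha b hb hab
    have : a + 1 ≠ b := fun h => hgood a ha (h ▸ hb)
    omega
  have hinj : Set.InjOn (fun a => (a - 1) / 2) s := by
    intro a ha b hb hab
    have ha' : a ∈ s := ha
    have hb' : b ∈ s := hb
    have hab' : (a - 1) / 2 = (b - 1) / 2 := hab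
    have ha3 : 3 ≤ a := by have := hsub ha'; simp only [Finset.mem_Icc] at this; omega
    have hb3 : 3 ≤ b := by have := hsub hb'; simp only [Finset.mem_Icc] at this; omega
    by_contra hne
    rcases Nat.lt_or_ge a b with h | h
    · have := hstep a ha' b hb' h
      omega
    · have hlt : b < a := lt_of_le_of_ne h fun h' => hne h'.symm
      have := hstep b hb' a ha' hlt
      omega
  calc s.card = (s.image fun a => (a - 1) / 2).card :=
        (Finset.card_image_of_injOn hinj).symm
    _ ≤ (Finset.Icc 1 ((m - 1) / 2)).card := by
        apply Finset.card_le_card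
        intro x hx
        simp only [Finset.mem_image] at hx
        obtain ⟨a, ha, rfl⟩ := hx
        have := hsub ha
        simp only [Finset.mem_Icc] at this ⊢
        omega
    _ = (m - 1) / 2 := by simp

private lemma not_mem_of_mem_P8 {m : ℕ} {s : Finset ℕ} (hs : s ∈ P8 m) {x : ℕ}
    (hx : m < x) : x ∉ s := by
  rw [mem_P8] at hs
  intro h
  have := hs.1 h
  simp only [Finset.mem_Icc] at this
  omega

private lemma P8_split {m : ℕ} (hm : 3 ≤ m) :
    P8 m = P8 (m - 1) ∪ (P8 (m - 2)).image (insert m) := by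
  ext s
  simp only [mem_P8, Finset.mem_union, Finset.mem_image]
  constructor
  · rintro ⟨hsub, hgood⟩
    by_cases hmem : m ∈ s
    · right
      refine ⟨s.erase m, ⟨⟨?_, ?_⟩, Finset.insert_erase hmem⟩⟩
      · intro a ha
        have ha' := Finset.mem_of_mem_erase ha
        have hne := Finset.ne_of_mem_erase ha
        have h1 := hsub ha'
        simp only [Finset.mem_Icc] at h1 ⊢
        have h2 : a ≠ m - 1 := by
          intro h
          apply hgood a ha'
          have : a + 1 = m := by omega
          rw [this]; exact hmem
        omega
      · intro a ha
        exact fun h => hgood a (Finset.mem_of_mem_erase ha) (Finset.mem_of_mem_erase h)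
    · left
      refine ⟨?_, hgood⟩
      intro a ha
      have h1 := hsub ha
      simp only [Finset.mem_Icc] at h1 ⊢
      have : a ≠ m := fun h => hmem (h ▸ ha)
      omega
  · rintro (⟨hsub, hgood⟩ | ⟨s', ⟨hsub, hgood⟩, rfl⟩)
    · exact ⟨hsub.trans (Finset.Icc_subset_Icc_right (by omega)), hgood⟩
    · constructor
      · intro a ha
        rcases Finset.mem_insert.mp ha with rfl | ha'
        · simp only [Finset.mem_Icc]; omega
        · have := hsub ha'
          simp only [Finset.mem_Icc] at this ⊢
          omega
      · intro a ha h1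
        rcases Finset.mem_insert.mp ha with rfl | ha'
        · rcases Finset.mem_insert.mp h1 with h | h
          · omega
          · have := hsub h
            simp only [Finset.mem_Icc] at this
            omega
        · rcases Finset.mem_insert.mp h1 with h | h
          · have := hsub ha'
            simp only [Finset.mem_Icc] at this
            omega
          · exact hgood a ha' h


private lemma F8_one (θ : ℕ → ℝ) : F8 θ 1 = 1 := by
  have : P8 1 = {∅} := by
    ext s
    simp only [mem_P8, Finset.mem_singleton]
    constructor
    · rintro ⟨hsub, -⟩
      have : Finset.Icc 3 1 = (∅ : Finset ℕ) := by simp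
      rw [this] at hsub
      exact Finset.subset_empty.mp hsub
    · rintro rfl
      simp
  simp [F8, this]

private lemma F8_two (θ : ℕ → ℝ) : F8 θ 2 = 1 := by
  have : P8 2 = {∅} := by
    ext s
    simp only [mem_P8, Finset.mem_singleton]
    constructor
    · rintro ⟨hsub, -⟩
      have : Finset.Icc 3 2 = (∅ : Finset ℕ) := by simp
      rw [this] at hsub
      exact Finset.subset_empty.mp hsub
    · rintro rfl
      simp
  simp [F8, this]

private lemma F8_rec (θ : ℕ → ℝ) {m : ℕ} (hm : 3 ≤ m) :
    F8 θ m = F8 θ (m - 1) + θ m / ((m : ℝ) - 1) * F8 θ (m - 2) := by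
  unfold F8
  rw [P8_split hm, Finset.sum_union]
  · congr 1
    rw [Finset.sum_image, Finset.mul_sum]
    · apply Finset.sum_congr rfl
      intro s hs
      have hm' : m ∉ s := not_mem_of_mem_P8 hs (by omega)
      rw [Finset.prod_insert hm']
    · intro s hs t ht h
      have hms : m ∉ s := not_mem_of_mem_P8 hs (by omega)
      have hmt : m ∉ t := not_mem_of_mem_P8 ht (by omega)
      rw [← Finset.erase_insert hms, ← Finset.erase_insert hmt, h]
  · rw [Finset.disjoint_left]
    intro s hs hs'
    have hms : m ∉ s := not_mem_of_mem_P8 hs (by omega)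
    simp only [Finset.mem_image] at hs'
    obtain ⟨t, -, rfl⟩ := hs'
    exact hms (Finset.mem_insert_self m t)

private lemma G_eq_F8 (θ : ℕ → ℝ) (G : ℕ → ℝ)
    (hG : ∀ i : ℕ, 1 ≤ i →
      G i = 1 + ∑ k ∈ Finset.Icc 1 ((i - 1) / 2),
        ∑ s ∈ (Finset.Icc 3 i).powerset.filter
            (fun s => s.card = k ∧ ∀ a ∈ s, a + 1 ∉ s),
          ∏ a ∈ s, θ a / ((a : ℝ) - 1))
    {m : ℕ} (hm : 1 ≤ m) : G m = F8 θ m := by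
  rw [hG m hm]
  have hmap : ∀ s ∈ P8 m, s.card ∈ Finset.Icc 0 ((m - 1) / 2) := by
    intro s hs
    simp only [Finset.mem_Icc]
    exact ⟨Nat.zero_le _, card_le_of_mem_P8 hs⟩
  have key : F8 θ m = ∑ k ∈ Finset.Icc 0 ((m - 1) / 2),
      ∑ s ∈ (P8 m).filter (fun s => s.card = k), ∏ a ∈ s, θ a / ((a : ℝ) - 1) :=
    (Finset.sum_fiberwise_of_maps_to hmap _).symm
  have hicc : Finset.Icc 0 ((m - 1) / 2) = insert 0 (Finset.Icc 1 ((m - 1) / 2)) := by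
    ext x
    simp only [Finset.mem_Icc, Finset.mem_insert]
    omega
  have h0 : (P8 m).filter (fun s => s.card = 0) = {∅} := by
    ext s
    simp only [Finset.mem_filter, Finset.mem_singleton, Finset.card_eq_zero]
    constructor
    · rintro ⟨-, h⟩; exact h
    · rintro rfl
      refine ⟨?_, rfl⟩
      rw [mem_P8]
      simp
  have hk : ∀ k : ℕ, (P8 m).filter (fun s => s.card = k) =
      (Finset.Icc 3 m).powerset.filter
        (fun s => s.card = k ∧ ∀ a ∈ s, a + 1 ∉ s) := by
    intro k
    ext s
    simp only [Finset.mem_filter, mem_P8, Finset.mem_powerset]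
    tauto
  rw [key, hicc, Finset.sum_insert (by simp), h0]
  simp only [Finset.sum_singleton, Finset.prod_empty]
  congr 1
  apply Finset.sum_congr rfl
  intro k _
  rw [hk k]

set_option maxHeartbeats 1000000 in
/-- closed form for the no-adjacent-ones probabilities `γ_i` of the
generalized Feller coupling, in terms of the polynomials `G_i(θ)`. -/
theorem stmt8 (θ : ℕ → ℝ) (hθ1 : θ 1 = 1) (hθpos : ∀ i, 1 ≤ i → 0 < θ i)
    (γ : ℕ → ℝ) (hγ1 : γ 1 = 0) (hγ2 : γ 2 = 1 / (1 + θ 2))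
    (hγrec : ∀ i : ℕ, 3 ≤ i →
      γ i = (((i : ℝ) - 1) / ((i : ℝ) - 1 + θ i))
        * (γ (i - 1) + (θ (i - 1) / ((i : ℝ) - 2 + θ (i - 1))) * γ (i - 2)))
    (G : ℕ → ℝ) (hG0 : G 0 = 0)
    (hG : ∀ i : ℕ, 1 ≤ i →
      G i = 1 + ∑ k ∈ Finset.Icc 1 ((i - 1) / 2),
        ∑ s ∈ (Finset.Icc 3 i).powerset.filter
            (fun s => s.card = k ∧ ∀ a ∈ s, a + 1 ∉ s),
          ∏ a ∈ s, θ a / ((a : ℝ) - 1)) :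
    ∀ i : ℕ, 2 ≤ i →
      γ i = G (i - 1) * ((i - 1).factorial : ℝ)
        / ∏ k ∈ Finset.Icc 1 i, (θ k + (k : ℝ) - 1) := by
  set Θ : ℕ → ℝ := fun i => ∏ k ∈ Finset.Icc 1 i, (θ k + (k : ℝ) - 1) with hΘdef
  have hΘpos : ∀ i, 0 < Θ i := by
    intro i
    apply Finset.prod_pos
    intro k hk
    simp only [Finset.mem_Icc] at hk
    have h1 := hθpos k hk.1
    have h2 : (1 : ℝ) ≤ (k : ℝ) := by exact_mod_cast hk.1
    linarith
  have hΘsucc : ∀ n : ℕ, Θ (n + 1) = Θ n * (θ (n + 1) + ((n : ℝ) + 1) - 1) := by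
    intro n
    simp only [hΘdef]
    rw [Finset.prod_Icc_succ_top (by omega : 1 ≤ n + 1)]
    push_cast
    ring
  have hΘ1 : Θ 1 = 1 := by
    simp [hΘdef, hθ1]
  have key : ∀ i : ℕ, 2 ≤ i →
      γ i = F8 θ (i - 1) * ((i - 1).factorial : ℝ) / Θ i := by
    intro i
    induction i using Nat.strong_induction_on with
    | _ i ih =>
      intro hi
      rcases (by omega : i = 2 ∨ i = 3 ∨ 4 ≤ i) with rfl | rfl | h4
      · -- i = 2
          have hΘ2 : Θ 2 = θ 2 + 1 := by
            have := hΘsucc 1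
            rw [hΘ1] at this
            rw [this]; ring
          rw [hγ2]
          simp only [show (2 : ℕ) - 1 = 1 from rfl, F8_one, Nat.factorial_one, hΘ2]
          push_cast
          rw [div_eq_div_iff (by linarith [hθpos 2 (by omega)]) (by linarith [hθpos 2 (by omega)])]
          ring
      · -- i = 3
          have hΘ2 : Θ 2 = θ 2 + 1 := by
            have := hΘsucc 1
            rw [hΘ1] at this
            rw [this]; ring
          have hΘ3 : Θ 3 = (θ 2 + 1) * (θ 3 + 2) := by
            have := hΘsucc 2
            rw [hΘ2] at this
            rw [this]; ring
          have hrec := hγrec 3 (by omega)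
          norm_num at hrec
          rw [hγ2, hγ1] at hrec
          rw [hrec]
          simp only [show (3 : ℕ) - 1 = 2 from rfl, F8_two, Nat.factorial_two, hΘ3]
          have h2 : (0 : ℝ) < θ 2 := hθpos 2 (by omega)
          have h3 : (0 : ℝ) < θ 3 := hθpos 3 (by omega)
          push_cast
          field_simp
          ring
      · -- i ≥ 4
        obtain ⟨n, rfl⟩ : ∃ n, i = n + 4 := ⟨i - 4, by omega⟩
        have ih1 : γ (n + 3) = F8 θ (n + 2) * ((n + 2).factorial : ℝ) / Θ (n + 3) := by
          have := ih (n + 3) (by omega) (by omega)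
          simpa using this
        have ih2 : γ (n + 2) = F8 θ (n + 1) * ((n + 1).factorial : ℝ) / Θ (n + 2) := by
          have := ih (n + 2) (by omega) (by omega)
          simpa using this
        have hrec := hγrec (n + 4) (by omega)
        have e1 : n + 4 - 1 = n + 3 := by omega
        have e2 : n + 4 - 2 = n + 2 := by omega
        rw [e1, e2] at hrec
        have hF := F8_rec θ (show 3 ≤ n + 3 by omega)
        have e3 : n + 3 - 1 = n + 2 := by omega
        have e4 : n + 3 - 2 = n + 1 := by omega
        rw [e3, e4] at hF
        have hΘ4 : Θ (n + 4) = Θ (n + 3) * (θ (n + 4) + ((n : ℝ) + 3)) := by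
          have := hΘsucc (n + 3)
          rw [this]; push_cast; ring
        have hΘ3 : Θ (n + 3) = Θ (n + 2) * (θ (n + 3) + ((n : ℝ) + 2)) := by
          have := hΘsucc (n + 2)
          rw [this]; push_cast; ring
        have hfac1 : ((n + 3).factorial : ℝ) = ((n : ℝ) + 3) * ((n + 2).factorial : ℝ) := by
          rw [show n + 3 = (n + 2) + 1 from rfl, Nat.factorial_succ]
          push_cast; ring
        have hfac2 : ((n + 2).factorial : ℝ) = ((n : ℝ) + 2) * ((n + 1).factorial : ℝ) := by
          rw [show n + 2 = (n + 1) + 1 from rfl, Nat.factorial_succ]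
          push_cast; ring
        have hp2 : (0 : ℝ) < Θ (n + 2) := hΘpos _
        have hp3 : (0 : ℝ) < θ (n + 3) := hθpos _ (by omega)
        have hp4 : (0 : ℝ) < θ (n + 4) := hθpos _ (by omega)
        rw [hrec, ih1, ih2]
        rw [show (n + 4 : ℕ) - 1 = n + 3 from by omega]
        rw [hΘ4, hΘ3, hF, hfac1, hfac2]
        push_cast
        have hr0 : (0 : ℝ) ≤ (n : ℝ) := Nat.cast_nonneg n
        generalize hA : F8 θ (n + 2) = A
        generalize hB : F8 θ (n + 1) = B
        generalize hx : ((n + 1).factorial : ℝ) = x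
        generalize hT2 : Θ (n + 2) = T at hp2
        generalize h3v : θ (n + 3) = t3 at hp3
        generalize h4v : θ (n + 4) = t4 at hp4
        generalize hrv : (n : ℝ) = r at hr0
        have d3 : t3 + (r + 2) ≠ 0 := by positivity
        have d4 : t4 + (r + 3) ≠ 0 := by positivity
        have d6 : T ≠ 0 := hp2.ne'
        have d1 : r + 4 - 1 + t4 ≠ 0 := by nlinarith
        have d2 : r + 4 - 2 + t3 ≠ 0 := by nlinarith
        have d5 : r + 3 - 1 ≠ 0 := by nlinarith
        field_simp
        ring
  intro i hi
  have hG' : G (i - 1) = F8 θ (i - 1) := G_eq_F8 θ G hG (by omega)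
  rw [hG', key i hi]
end

section
/- Fix n ≥ 4. Let p : ℕ → ℝ with p(1) = 0, p(2) = 1, 0 < p(i) < 1 for i ≥ 3, q(i) := 1 − p(i), and let θ : ℕ → ℝ with θ_1 = 1 and θ_i > 0 for all i. Let Δ_n be the set of a : {1,…,n} → {0,1} with a(1) = 1, a(n) = 0 and a(i)·a(i+1) = 0 for 1 ≤ i ≤ n−1. For a ∈ Δ_n define μ_n(a) := Π_{i=1}^{n−1} t_i(a), where t_i(a) = 1 if a(i+1) = 1, t_i(a) = p(i) if a(i+1) = 0 and a(i) = 0, and t_i(a) = q(i) if a(i+1) = 0 and a(i) = 1; define ν_n(a) := Π_{i=1}^{n} b_i(a(i)) with b_i(1) = θ_i/(i−1+θ_i) and b_i(0) = (i−1)/(i−1+θ_i), and γ_n := Σ_{a ∈ Δ_n} ν_n(a). Then the following are equivalent: (i) μ_n(a) = ν_n(a)/γ_n for every a ∈ Δ_n; (ii) p(i) = (i−1+θ_i)·γ_i / ( (i−1+θ_i)·γ_i + θ_i·γ_{i−1} ) for all 3 ≤ i ≤ n−1, where γ_i := Σ_{a ∈ Δ_i} ν_i(a); (iii) θ_i = (i−1)·q(i)/(p(i)·p(i−1))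 for all 3 ≤ i ≤ n−1. -/
open Finset Filter

/-- Binary strings of length `n` (encoded by their set of `1`-positions, a subset of
`{1,…,n}`) with `a 1 = 1`, `a n = 0` and no two adjacent ones. -/
def derSet (n : ℕ) : Finset (Finset ℕ) :=
  (Finset.Icc 1 n).powerset.filter (fun s => 1 ∈ s ∧ n ∉ s ∧ ∀ i ∈ s, i + 1 ∉ s)

/-- Mass function of the random-derangement Markov chain `X^{n,p}` on `derSet n`. -/
noncomputable def muD (p q : ℕ → ℝ) (n : ℕ) (s : Finset ℕ) : ℝ :=
  ∏ i ∈ Finset.Icc 1 (n - 1), if i + 1 ∈ s then 1 else if i ∈ s then q i else p i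

/-- Mass function of the generalized Feller coupling `(Y_n, …, Y_1)`,
`P(Y_i = 1) = θ_i/(i-1+θ_i)`. -/
noncomputable def nuD (θ : ℕ → ℝ) (n : ℕ) (s : Finset ℕ) : ℝ :=
  ∏ i ∈ Finset.Icc 1 n,
    if i ∈ s then θ i / ((i : ℝ) - 1 + θ i) else ((i : ℝ) - 1) / ((i : ℝ) - 1 + θ i)

/-- `γ_n(θ) = P((Y_n,…,Y_1) ∈ Δ_n)`. -/
noncomputable def gamD (θ : ℕ → ℝ) (n : ℕ) : ℝ := ∑ s ∈ derSet n, nuD θ n s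

namespace Stmt9

lemma mem_derSet {n : ℕ} {s : Finset ℕ} :
    s ∈ derSet n ↔ s ⊆ Finset.Icc 1 n ∧ 1 ∈ s ∧ n ∉ s ∧ ∀ i ∈ s, i + 1 ∉ s := by
  simp [derSet, Finset.mem_filter, Finset.mem_powerset, and_assoc]

lemma mem_Icc_of_mem {n : ℕ} {s : Finset ℕ} (h : s ∈ derSet n) {i : ℕ} (hi : i ∈ s) :
    1 ≤ i ∧ i ≤ n := Finset.mem_Icc.1 ((mem_derSet.1 h).1 hi)

lemma derSet_one : derSet 1 = ∅ := by
  ext s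
  simp only [mem_derSet, Finset.notMem_empty, iff_false]
  rintro ⟨-, h1, h1', -⟩; exact h1' h1

lemma one_mem_derSet {n : ℕ} (hn : 2 ≤ n) : ({1} : Finset ℕ) ∈ derSet n := by
  rw [mem_derSet]
  refine ⟨?_, by simp, by simp; omega, ?_⟩
  · intro i hi; simp at hi; subst hi; simp [Finset.mem_Icc]; omega
  · intro i hi; simp at hi; subst hi; simp

lemma eq_singleton_of_mem_two {s : Finset ℕ} (h : s ∈ derSet 2) : s = {1} := by
  obtain ⟨hsub, h1, h2, -⟩ := mem_derSet.1 h
  apply Finset.Subset.antisymm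
  · intro i hi
    have := Finset.mem_Icc.1 (hsub hi)
    have : i ≠ 2 := fun e => h2 (e ▸ hi)
    simp only [Finset.mem_singleton]
    omega
  · simp [Finset.singleton_subset_iff, h1]

lemma eq_singleton_of_mem_three {s : Finset ℕ} (h : s ∈ derSet 3) : s = {1} := by
  obtain ⟨hsub, h1, h3, hadj⟩ := mem_derSet.1 h
  have h2 : 2 ∉ s := by
    have := hadj 1 h1; simpa using this
  apply Finset.Subset.antisymm
  · intro i hi
    have := Finset.mem_Icc.1 (hsub hi)
    have : i ≠ 2 := fun e => h2 (e ▸ hi)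
    have : i ≠ 3 := fun e => h3 (e ▸ hi)
    simp only [Finset.mem_singleton]; omega
  · simp [Finset.singleton_subset_iff, h1]

lemma derSet_two : derSet 2 = {({1} : Finset ℕ)} := by
  ext s
  simp only [Finset.mem_singleton]
  constructor
  · exact eq_singleton_of_mem_two
  · rintro rfl; exact one_mem_derSet le_rfl

lemma derSet_three : derSet 3 = {({1} : Finset ℕ)} := by
  ext s
  simp only [Finset.mem_singleton]
  constructor
  · exact eq_singleton_of_mem_three
  · rintro rfl; exact one_mem_derSet (by norm_num)

lemma mem_of_not_mem_top {k : ℕ} {s : Finset ℕ} (h : s ∈ derSet (k+2)) (hk : k+1 ∉ s) :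
    s ∈ derSet (k+1) := by
  obtain ⟨hsub, h1, htop, hadj⟩ := mem_derSet.1 h
  refine mem_derSet.2 ⟨?_, h1, hk, hadj⟩
  intro i hi
  have := Finset.mem_Icc.1 (hsub hi)
  have : i ≠ k+2 := fun e => htop (e ▸ hi)
  have : i ≠ k+1 := fun e => hk (e ▸ hi)
  rw [Finset.mem_Icc]; omega

lemma mem_succ_of_mem {k : ℕ} {s : Finset ℕ} (h : s ∈ derSet (k+1)) : s ∈ derSet (k+2) := by
  obtain ⟨hsub, h1, htop, hadj⟩ := mem_derSet.1 h
  refine mem_derSet.2 ⟨?_, h1, ?_, hadj⟩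
  · exact hsub.trans (Finset.Icc_subset_Icc_right (by omega))
  · intro hc; have := Finset.mem_Icc.1 (hsub hc); omega

lemma not_mem_of_gt {k : ℕ} {s : Finset ℕ} (h : s ∈ derSet k) {i : ℕ} (hi : k < i) : i ∉ s := by
  intro hc; have := Finset.mem_Icc.1 ((mem_derSet.1 h).1 hc); omega

lemma erase_mem {k : ℕ} (hk : 1 ≤ k) {s : Finset ℕ} (h : s ∈ derSet (k+2)) (hks : k+1 ∈ s) :
    s.erase (k+1) ∈ derSet k := by
  obtain ⟨hsub, h1, htop, hadj⟩ := mem_derSet.1 h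
  refine mem_derSet.2 ⟨?_, ?_, ?_, ?_⟩
  · intro i hi
    rw [Finset.mem_erase] at hi
    have := Finset.mem_Icc.1 (hsub hi.2)
    have : i ≠ k+2 := fun e => htop (e ▸ hi.2)
    rw [Finset.mem_Icc]; omega
  · exact Finset.mem_erase.2 ⟨by omega, h1⟩
  · intro hc
    rw [Finset.mem_erase] at hc
    exact hadj k hc.2 hks
  · intro i hi
    rw [Finset.mem_erase] at hi
    intro hc
    exact hadj i hi.2 (Finset.mem_erase.1 hc).2

lemma insert_mem {k : ℕ} {s : Finset ℕ} (h : s ∈ derSet k) :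
    insert (k+1) s ∈ derSet (k+2) := by
  obtain ⟨hsub, h1, htop, hadj⟩ := mem_derSet.1 h
  refine mem_derSet.2 ⟨?_, ?_, ?_, ?_⟩
  · intro i hi
    rw [Finset.mem_insert] at hi
    rcases hi with rfl | hi
    · rw [Finset.mem_Icc]; omega
    · have := Finset.mem_Icc.1 (hsub hi); rw [Finset.mem_Icc]; omega
  · exact Finset.mem_insert_of_mem h1
  · intro hc
    rw [Finset.mem_insert] at hc
    rcases hc with hc | hc
    · omega
    · have := Finset.mem_Icc.1 (hsub hc); omega
  · intro i hi
    rw [Finset.mem_insert] at hi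
    intro hc
    rw [Finset.mem_insert] at hc
    rcases hi with rfl | hi
    · rcases hc with hc | hc
      · omega
      · have := Finset.mem_Icc.1 (hsub hc); omega
    · rcases hc with hc | hc
      · have hik : i = k := by omega
        exact htop (hik ▸ hi)
      · exact hadj i hi hc

lemma filter_not_mem_eq {k : ℕ} :
    (derSet (k+2)).filter (fun s => k+1 ∉ s) = derSet (k+1) := by
  ext s
  simp only [Finset.mem_filter]
  constructor
  · rintro ⟨h, hk⟩; exact mem_of_not_mem_top h hk
  · intro h; exact ⟨mem_succ_of_mem h, (mem_derSet.1 h).2.2.1⟩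

lemma filter_mem_eq {k : ℕ} (hk : 1 ≤ k) :
    (derSet (k+2)).filter (fun s => k+1 ∈ s) = (derSet k).image (insert (k+1)) := by
  ext s
  simp only [Finset.mem_filter, Finset.mem_image]
  constructor
  · rintro ⟨h, hks⟩
    exact ⟨s.erase (k+1), erase_mem hk h hks, Finset.insert_erase hks⟩
  · rintro ⟨t, ht, rfl⟩
    exact ⟨insert_mem ht, Finset.mem_insert_self _ _⟩

noncomputable def b0 (θ : ℕ → ℝ) (i : ℕ) : ℝ := ((i : ℝ) - 1) / ((i : ℝ) - 1 + θ i)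
noncomputable def b1 (θ : ℕ → ℝ) (i : ℕ) : ℝ := θ i / ((i : ℝ) - 1 + θ i)

lemma Icc_one_succ (k : ℕ) : Finset.Icc 1 (k+1) = insert (k+1) (Finset.Icc 1 k) := by
  ext i
  simp only [Finset.mem_Icc, Finset.mem_insert]
  omega

lemma nuD_succ (θ : ℕ → ℝ) {k : ℕ} {s : Finset ℕ} (h : k + 1 ∉ s) :
    nuD θ (k+1) s = b0 θ (k+1) * nuD θ k s := by
  unfold nuD
  rw [Icc_one_succ, Finset.prod_insert (by simp)]
  simp [h, b0]

lemma nuD_insert (θ : ℕ → ℝ) {k : ℕ} {s : Finset ℕ} (h1 : k + 1 ∉ s) (h2 : k + 2 ∉ s) :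
    nuD θ (k+2) (insert (k+1) s) = b0 θ (k+2) * (b1 θ (k+1) * nuD θ k s) := by
  unfold nuD
  rw [show k+2 = (k+1)+1 from rfl, Icc_one_succ, Finset.prod_insert (by simp),
    Icc_one_succ, Finset.prod_insert (by simp)]
  have e2 : k+1+1 ∉ insert (k+1) s := by
    simp only [Finset.mem_insert]; push_neg; exact ⟨by omega, h2⟩
  rw [if_neg e2, if_pos (Finset.mem_insert_self _ _)]
  have : ∀ i ∈ Finset.Icc 1 k,
      (if i ∈ insert (k+1) s then θ i / ((i : ℝ) - 1 + θ i) else ((i : ℝ) - 1) / ((i : ℝ) - 1 + θ i))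
      = (if i ∈ s then θ i / ((i : ℝ) - 1 + θ i) else ((i : ℝ) - 1) / ((i : ℝ) - 1 + θ i)) := by
    intro i hi
    have : i ≠ k+1 := by have := Finset.mem_Icc.1 hi; omega
    simp [Finset.mem_insert, this]
  rw [Finset.prod_congr rfl this]
  simp only [b0, b1]

lemma muD_succ (p q : ℕ → ℝ) {k : ℕ} {s : Finset ℕ} (h1 : k + 1 ∉ s) (h2 : k + 2 ∉ s) :
    muD p q (k+2) s = p (k+1) * muD p q (k+1) s := by
  unfold muD
  rw [show k+2-1 = k+1 from rfl, show k+1-1 = k from rfl, Icc_one_succ,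
    Finset.prod_insert (by simp)]
  rw [if_neg (by simpa using h2), if_neg h1]

lemma muD_insert (p q : ℕ → ℝ) {k : ℕ} {s : Finset ℕ} (h2 : k + 3 ∉ s) :
    muD p q (k+3) (insert (k+2) s) = q (k+2) * muD p q (k+1) s := by
  unfold muD
  rw [show k+3-1 = (k+1)+1 from rfl, show k+1-1 = k from rfl, Icc_one_succ,
    Finset.prod_insert (by simp), Icc_one_succ, Finset.prod_insert (by simp)]
  have e1 : k+2+1 ∉ insert (k+2) s := by
    simp only [Finset.mem_insert]; push_neg; exact ⟨by omega, h2⟩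
  rw [if_neg e1, if_pos (Finset.mem_insert_self _ _),
    if_pos (by exact Finset.mem_insert_self _ _)]
  have : ∀ i ∈ Finset.Icc 1 k,
      (if i + 1 ∈ insert (k+2) s then (1:ℝ) else if i ∈ insert (k+2) s then q i else p i)
      = (if i + 1 ∈ s then (1:ℝ) else if i ∈ s then q i else p i) := by
    intro i hi
    have hik := Finset.mem_Icc.1 hi
    have : i + 1 ≠ k+2 := by omega
    have : i ≠ k+2 := by omega
    simp only [Finset.mem_insert]
    simp_all
  rw [Finset.prod_congr rfl this]
  ring

lemma muD_two (p q : ℕ → ℝ) (hp1 : p 1 = 0) (hq : ∀ i, q i = 1 - p i) :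
    muD p q 2 ({1} : Finset ℕ) = 1 := by
  unfold muD
  norm_num [hq, hp1]

lemma muD_three (p q : ℕ → ℝ) (hp1 : p 1 = 0) (hp2 : p 2 = 1) (hq : ∀ i, q i = 1 - p i) :
    muD p q 3 ({1} : Finset ℕ) = 1 := by
  unfold muD
  rw [show (3:ℕ)-1 = 2 from rfl, show Finset.Icc 1 2 = {1, 2} from rfl]
  norm_num [hq, hp1, hp2]

section Gam
variable {θ : ℕ → ℝ} (hθpos : ∀ i, 1 ≤ i → 0 < θ i)

include hθpos

lemma denom_pos {i : ℕ} (hi : 1 ≤ i) : 0 < (i : ℝ) - 1 + θ i := by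
  have h1 : (1:ℝ) ≤ (i:ℝ) := by exact_mod_cast hi
  have := hθpos i hi
  linarith

lemma nuD_pos {n : ℕ} {s : Finset ℕ} (hs : s ∈ derSet n) : 0 < nuD θ n s := by
  obtain ⟨hsub, h1, htop, hadj⟩ := mem_derSet.1 hs
  apply Finset.prod_pos
  intro i hi
  have hi1 : 1 ≤ i := (Finset.mem_Icc.1 hi).1
  have hd := denom_pos hθpos hi1
  by_cases h : i ∈ s
  · rw [if_pos h]
    exact div_pos (hθpos i hi1) hd
  · rw [if_neg h]
    have : i ≠ 1 := fun e => h (e ▸ h1)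
    have h2 : 2 ≤ i := by omega
    have : (2:ℝ) ≤ (i:ℝ) := by exact_mod_cast h2
    apply div_pos (by linarith) hd

lemma gam_pos {n : ℕ} (hn : 2 ≤ n) : 0 < gamD θ n := by
  apply Finset.sum_pos (fun s hs => nuD_pos hθpos hs)
  exact ⟨{1}, one_mem_derSet hn⟩

lemma gam_nonneg (n : ℕ) : 0 ≤ gamD θ n := by
  apply Finset.sum_nonneg
  intro s hs
  exact le_of_lt (nuD_pos hθpos hs)

omit hθpos

lemma gam_one : gamD θ 1 = 0 := by
  simp [gamD, derSet_one]

lemma gam_two : gamD θ 2 = nuD θ 2 {1} := by simp [gamD, derSet_two]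

lemma gam_three : gamD θ 3 = nuD θ 3 {1} := by simp [gamD, derSet_three]

lemma gam_rec {k : ℕ} (hk : 1 ≤ k) :
    gamD θ (k+2) = b0 θ (k+2) * (gamD θ (k+1) + b1 θ (k+1) * gamD θ k) := by
  have hsplit := Finset.sum_filter_add_sum_filter_not (derSet (k+2))
    (fun s => k+1 ∈ s) (fun s => nuD θ (k+2) s)
  rw [gamD, ← hsplit, filter_mem_eq hk, filter_not_mem_eq]
  have h1 : ∑ s ∈ (derSet k).image (insert (k+1)), nuD θ (k+2) s
      = ∑ s ∈ derSet k, b0 θ (k+2) * (b1 θ (k+1) * nuD θ k s) := by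
    rw [Finset.sum_image]
    · apply Finset.sum_congr rfl
      intro s hs
      exact nuD_insert θ (not_mem_of_gt hs (by omega)) (not_mem_of_gt hs (by omega))
    · intro a ha b hb hab
      have : (insert (k+1) a).erase (k+1) = (insert (k+1) b).erase (k+1) := by rw [hab]
      rwa [Finset.erase_insert (not_mem_of_gt ha (by omega)),
        Finset.erase_insert (not_mem_of_gt hb (by omega))] at this
  have h2 : ∑ s ∈ derSet (k+1), nuD θ (k+2) s
      = ∑ s ∈ derSet (k+1), b0 θ (k+2) * nuD θ (k+1) s := by
    apply Finset.sum_congr rfl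
    intro s hs
    exact nuD_succ θ (k := k+1) (not_mem_of_gt hs (by omega))
  rw [h1, h2, ← Finset.mul_sum, ← Finset.mul_sum, ← Finset.mul_sum, gamD, gamD]
  ring

end Gam

lemma pair_mem {n l : ℕ} (h : l + 4 ≤ n) : insert (l+3) ({1} : Finset ℕ) ∈ derSet n := by
  rw [mem_derSet]
  refine ⟨?_, ?_, ?_, ?_⟩
  · intro i hi
    simp only [Finset.mem_insert, Finset.mem_singleton] at hi
    rw [Finset.mem_Icc]; omega
  · simp
  · simp only [Finset.mem_insert, Finset.mem_singleton]; push_neg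
    constructor <;> omega
  · intro i hi
    simp only [Finset.mem_insert, Finset.mem_singleton] at hi ⊢
    push_neg
    rcases hi with rfl | rfl <;> constructor <;> omega

lemma prod_erase2 (f : ℕ → ℝ) {a b : ℕ} {I : Finset ℕ} (ha : a ∈ I) (hb : b ∈ I) (hab : b ≠ a) :
    ∏ i ∈ I, f i = f a * (f b * ∏ i ∈ (I.erase a).erase b, f i) := by
  rw [← Finset.mul_prod_erase I f ha,
    ← Finset.mul_prod_erase (I.erase a) f (Finset.mem_erase.2 ⟨hab, hb⟩)]

lemma mu_ratio (p q : ℕ → ℝ) {n l : ℕ} (h : l + 4 ≤ n) :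
    muD p q n (insert (l+3) ({1} : Finset ℕ)) * (p (l+2) * p (l+3))
      = q (l+3) * muD p q n ({1} : Finset ℕ) := by
  have h3 : l+3 ∈ Finset.Icc 1 (n-1) := by rw [Finset.mem_Icc]; omega
  have h2 : l+2 ∈ Finset.Icc 1 (n-1) := by rw [Finset.mem_Icc]; omega
  unfold muD
  rw [prod_erase2 _ h3 h2 (by omega), prod_erase2 _ h3 h2 (by omega)]
  have e1 : ∀ i ∈ ((Finset.Icc 1 (n-1)).erase (l+3)).erase (l+2),
      (if i + 1 ∈ insert (l+3) ({1} : Finset ℕ) then (1:ℝ) else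
        if i ∈ insert (l+3) ({1} : Finset ℕ) then q i else p i)
      = (if i + 1 ∈ ({1} : Finset ℕ) then (1:ℝ) else if i ∈ ({1} : Finset ℕ) then q i else p i) := by
    intro i hi
    rw [Finset.mem_erase, Finset.mem_erase] at hi
    obtain ⟨hi2, hi3, -⟩ := hi
    have : i + 1 ≠ l + 3 := by omega
    have : i ≠ l + 3 := hi3
    simp only [Finset.mem_insert, Finset.mem_singleton]
    simp_all
  rw [Finset.prod_congr rfl e1]
  have v1 : (if l+3 + 1 ∈ insert (l+3) ({1} : Finset ℕ) then (1:ℝ) else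
      if l+3 ∈ insert (l+3) ({1} : Finset ℕ) then q (l+3) else p (l+3)) = q (l+3) := by
    have : l+3+1 ∉ insert (l+3) ({1} : Finset ℕ) := by
      simp only [Finset.mem_insert, Finset.mem_singleton]; push_neg; omega
    rw [if_neg this, if_pos (Finset.mem_insert_self _ _)]
  have v2 : (if l+2 + 1 ∈ insert (l+3) ({1} : Finset ℕ) then (1:ℝ) else
      if l+2 ∈ insert (l+3) ({1} : Finset ℕ) then q (l+2) else p (l+2)) = 1 := by
    rw [if_pos (by simp)]
  have w1 : (if l+3 + 1 ∈ ({1} : Finset ℕ) then (1:ℝ) else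
      if l+3 ∈ ({1} : Finset ℕ) then q (l+3) else p (l+3)) = p (l+3) := by
    rw [if_neg (by simp), if_neg (by simp)]
  have w2 : (if l+2 + 1 ∈ ({1} : Finset ℕ) then (1:ℝ) else
      if l+2 ∈ ({1} : Finset ℕ) then q (l+2) else p (l+2)) = p (l+2) := by
    rw [if_neg (by simp), if_neg (by simp)]
  rw [v1, v2, w1, w2]
  ring

lemma nu_ratio (θ : ℕ → ℝ) {n l : ℕ} (h : l + 4 ≤ n) :
    ((l:ℝ)+2) * nuD θ n (insert (l+3) ({1} : Finset ℕ))
      = θ (l+3) * nuD θ n ({1} : Finset ℕ) := by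
  have h3 : l+3 ∈ Finset.Icc 1 n := by rw [Finset.mem_Icc]; omega
  unfold nuD
  rw [← Finset.mul_prod_erase _ _ h3, ← Finset.mul_prod_erase _ _ h3]
  have e1 : ∀ i ∈ (Finset.Icc 1 n).erase (l+3),
      (if i ∈ insert (l+3) ({1} : Finset ℕ) then θ i / ((i:ℝ) - 1 + θ i)
        else ((i:ℝ) - 1) / ((i:ℝ) - 1 + θ i))
      = (if i ∈ ({1} : Finset ℕ) then θ i / ((i:ℝ) - 1 + θ i)
        else ((i:ℝ) - 1) / ((i:ℝ) - 1 + θ i)) := by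
    intro i hi
    rw [Finset.mem_erase] at hi
    simp only [Finset.mem_insert, Finset.mem_singleton]
    simp [hi.1]
  rw [Finset.prod_congr rfl e1]
  rw [if_pos (Finset.mem_insert_self _ _), if_neg (by simp)]
  push_cast
  ring

lemma perIndex {x θi gi gim pi pim : ℝ} (hx : 0 < x) (hθi : 0 < θi)
    (hgi : 0 < gi) (hgim : 0 < gim) (hpi : 0 < pi)
    (hpim : pim = x * gim / ((x + θi) * gi)) :
    (pi = (x + θi) * gi / ((x + θi) * gi + θi * gim)) ↔ (θi = x * (1 - pi) / (pi * pim)) := by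
  have hA : 0 < x + θi := by linarith
  have hS : 0 < (x + θi) * gi + θi * gim := by positivity
  have hpim0 : 0 < pim := by rw [hpim]; positivity
  constructor
  · intro hh
    rw [hh, hpim]
    field_simp
    ring
  · intro hh
    have h' : θi * (pi * pim) = x * (1 - pi) := by
      rw [hh]
      field_simp
    rw [hpim] at h'
    rw [eq_div_iff hS.ne']
    have h'' : θi * (pi * (x * gim)) = x * (1 - pi) * ((x + θi) * gi) := by
      field_simp at h'
      linear_combination x * h'
    nlinarith [h'']

lemma Dlemma {x xm θi θp gi gim gimm : ℝ} (hx : 0 < x) (hxm : 0 < xm) (hθi : 0 < θi)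
    (hθp : 0 < θp) (hgi : 0 < gi) (hgim : 0 < gim) (hgimm : 0 ≤ gimm)
    (hrec : gi = x / (x + θp) * (gim + θi / (xm + θi) * gimm)) :
    x * gim / ((x + θp) * gi) = (xm + θi) * gim / ((xm + θi) * gim + θi * gimm) := by
  have hA : 0 < x + θp := by linarith
  have hAm : 0 < xm + θi := by linarith
  have hS : 0 < (xm + θi) * gim + θi * gimm := by positivity
  rw [hrec]
  field_simp

lemma stepLemma {x x' θi θ' gi gimm g' pp : ℝ} (hx : 0 < x) (hx' : 0 < x') (hθi : 0 < θi)
    (hθ' : 0 < θ') (hgi : 0 < gi) (hgimm : 0 ≤ gimm)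
    (hrec : g' = x' / (x' + θ') * (gi + θi / (x + θi) * gimm))
    (hp : pp = (x + θi) * gi / ((x + θi) * gi + θi * gimm)) :
    g' * pp = x' / (x' + θ') * gi ∧
      g' * (1 - pp) = x' / (x' + θ') * (θi / (x + θi)) * gimm := by
  have hA : 0 < x + θi := by linarith
  have hA' : 0 < x' + θ' := by linarith
  have hS : 0 < (x + θi) * gi + θi * gimm := by positivity
  constructor
  · rw [hrec, hp]; field_simp
  · rw [hrec, hp]; field_simp; ring

lemma mu_single_pos (p q : ℕ → ℝ) {n : ℕ} (hn : 2 ≤ n) (hp1 : p 1 = 0) (hp2 : p 2 = 1)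
    (hp : ∀ i, 3 ≤ i → 0 < p i ∧ p i < 1) (hq : ∀ i, q i = 1 - p i) :
    0 < muD p q n ({1} : Finset ℕ) := by
  unfold muD
  apply Finset.prod_pos
  intro i hi
  have hi' := Finset.mem_Icc.1 hi
  have h0 : i + 1 ∉ ({1}:Finset ℕ) := by simp; omega
  rw [if_neg h0]
  by_cases h1 : i = 1
  · subst h1; rw [if_pos (by simp), hq, hp1]; norm_num
  · rw [if_neg (by simpa using h1)]
    rcases Nat.lt_or_ge i 3 with h | h
    · have : i = 2 := by omega
      subst this; rw [hp2]; norm_num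
    · exact (hp i h).1

end Stmt9

/-- equivalence between the conditional relation
`L(X^{n,p}) = L(Y_n,…,Y_1 | Δ_n)` and explicit relations between `p` and `θ`. -/
theorem stmt9 (n : ℕ) (hn : 4 ≤ n) (p q : ℕ → ℝ)
    (hp1 : p 1 = 0) (hp2 : p 2 = 1) (hp : ∀ i, 3 ≤ i → 0 < p i ∧ p i < 1)
    (hq : ∀ i, q i = 1 - p i)
    (θ : ℕ → ℝ) (hθ1 : θ 1 = 1) (hθpos : ∀ i, 1 ≤ i → 0 < θ i) :
    ((∀ s ∈ derSet n, muD p q n s = nuD θ n s / gamD θ n) ↔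
      (∀ i : ℕ, 3 ≤ i → i ≤ n - 1 →
        p i = ((i : ℝ) - 1 + θ i) * gamD θ i
          / (((i : ℝ) - 1 + θ i) * gamD θ i + θ i * gamD θ (i - 1)))) ∧
    ((∀ i : ℕ, 3 ≤ i → i ≤ n - 1 →
        p i = ((i : ℝ) - 1 + θ i) * gamD θ i
          / (((i : ℝ) - 1 + θ i) * gamD θ i + θ i * gamD θ (i - 1))) ↔
      (∀ i : ℕ, 3 ≤ i → i ≤ n - 1 →
        θ i = ((i : ℝ) - 1) * q i / (p i * p (i - 1)))) := by
  have hgpos : ∀ m : ℕ, 2 ≤ m → 0 < gamD θ m := fun m hm => Stmt9.gam_pos hθpos hm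
  have hg1 : gamD θ 1 = 0 := Stmt9.gam_one
  -- recursion in subtraction form
  have hrec' : ∀ i : ℕ, 3 ≤ i →
      gamD θ i = Stmt9.b0 θ i * (gamD θ (i-1) + Stmt9.b1 θ (i-1) * gamD θ (i-2)) := by
    intro i h3
    obtain ⟨k, rfl⟩ : ∃ k, i = (k+1) + 2 := ⟨i - 3, by omega⟩
    have h := Stmt9.gam_rec (θ := θ) (k := k+1) (by omega)
    rw [show k+1+2-1 = k+2 by omega, show k+1+2-2 = k+1 by omega]
    exact h
  -- the key per-index equivalence
  have key : ∀ i : ℕ, 3 ≤ i → i ≤ n - 1 →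
      p (i-1) = ((i:ℝ)-1) * gamD θ (i-1) / (((i:ℝ)-1+θ i) * gamD θ i) →
      ((p i = ((i : ℝ) - 1 + θ i) * gamD θ i
          / (((i : ℝ) - 1 + θ i) * gamD θ i + θ i * gamD θ (i - 1))) ↔
        (θ i = ((i : ℝ) - 1) * q i / (p i * p (i - 1)))) := by
    intro i h3 hin hD
    have hx : 0 < (i:ℝ)-1 := by
      have : (3:ℝ) ≤ (i:ℝ) := by exact_mod_cast h3
      linarith
    rw [hq i]
    exact Stmt9.perIndex hx (hθpos i (by omega)) (hgpos i (by omega))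
      (hgpos (i-1) (by omega)) (hp i h3).1 hD
  -- the D identity at i = 3
  have hg3 : gamD θ 3 = Stmt9.b0 θ 3 * gamD θ 2 := by
    have h := hrec' 3 le_rfl
    rw [show (3:ℕ)-1 = 2 by omega, show (3:ℕ)-2 = 1 by omega, hg1] at h
    rw [h]; ring
  have hθ3 := hθpos 3 (by omega)
  have hg2 := hgpos 2 le_rfl
  have hD3 : p (3-1) = (((3:ℕ):ℝ)-1) * gamD θ (3-1) / ((((3:ℕ):ℝ)-1+θ 3) * gamD θ 3) := by
    rw [show (3:ℕ)-1 = 2 by omega, hp2, hg3]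
    unfold Stmt9.b0
    have h23 : (0:ℝ) < ((3:ℕ):ℝ) - 1 + θ 3 := by push_cast; linarith
    have h31 : (0:ℝ) < ((3:ℕ):ℝ) - 1 := by norm_num
    rw [eq_div_iff (by positivity)]
    field_simp
  -- the D identity from PII at i-1, for i ≥ 4
  have hD4 : ∀ i : ℕ, 4 ≤ i → i ≤ n - 1 →
      (p (i-1) = (((i-1:ℕ):ℝ) - 1 + θ (i-1)) * gamD θ (i-1)
          / ((((i-1:ℕ):ℝ) - 1 + θ (i-1)) * gamD θ (i-1) + θ (i-1) * gamD θ (i-1-1))) →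
      p (i-1) = ((i:ℝ)-1) * gamD θ (i-1) / (((i:ℝ)-1+θ i) * gamD θ i) := by
    intro i h4 hin hPII
    obtain ⟨k, rfl⟩ : ∃ k, i = k + 4 := ⟨i - 4, by omega⟩
    rw [show k+4-1-1 = k+2 by omega, show k+4-1 = k+3 by omega] at hPII
    rw [show k+4-1 = k+3 by omega]
    rw [hPII]
    have hrec := hrec' (k+4) (by omega)
    rw [show k+4-1 = k+3 by omega, show k+4-2 = k+2 by omega] at hrec
    unfold Stmt9.b0 Stmt9.b1 at hrec
    have hx : 0 < ((k+4:ℕ):ℝ) - 1 := by push_cast; linarith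
    have hxm : 0 < ((k+3:ℕ):ℝ) - 1 := by push_cast; linarith
    exact (Stmt9.Dlemma hx hxm (hθpos (k+3) (by omega)) (hθpos (k+4) (by omega))
      (hgpos (k+4) (by omega)) (hgpos (k+3) (by omega))
      (le_of_lt (hgpos (k+2) (by omega))) hrec).symm
  -- the second equivalence
  have iff2 : (∀ i : ℕ, 3 ≤ i → i ≤ n - 1 →
        p i = ((i : ℝ) - 1 + θ i) * gamD θ i
          / (((i : ℝ) - 1 + θ i) * gamD θ i + θ i * gamD θ (i - 1))) ↔
      (∀ i : ℕ, 3 ≤ i → i ≤ n - 1 →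
        θ i = ((i : ℝ) - 1) * q i / (p i * p (i - 1))) := by
    constructor
    · intro H i h3 hin
      rcases Nat.lt_or_ge i 4 with h4 | h4
      · have hi3 : i = 3 := by omega
        subst hi3
        exact (key 3 le_rfl hin hD3).1 (H 3 le_rfl hin)
      · exact (key i (by omega) hin
          (hD4 i h4 hin (H (i-1) (by omega) (by omega)))).1 (H i (by omega) hin)
    · intro H i h3
      induction i, h3 using Nat.le_induction with
      | base =>
        intro hin
        exact (key 3 le_rfl hin hD3).2 (H 3 le_rfl hin)
      | succ i hi IH =>
        intro hin
        have hIH := IH (by omega)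
        have hD := hD4 (i+1) (by omega) hin (by
          rw [show i+1-1-1 = i-1 by omega, show i+1-1 = i by omega]
          exact hIH)
        exact (key (i+1) (by omega) hin hD).2 (H (i+1) (by omega) hin)
  refine ⟨?_, iff2⟩
  constructor
  · -- (i) → (iii) → (ii)
    intro H
    apply iff2.2
    intro i h3 hin
    obtain ⟨l, rfl⟩ : ∃ l, i = l + 3 := ⟨i - 3, by omega⟩
    have hl : l + 4 ≤ n := by omega
    have hs0 : ({1}:Finset ℕ) ∈ derSet n := Stmt9.one_mem_derSet (by omega)
    have hs1 := Stmt9.pair_mem (n := n) (l := l) hl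
    have hγ := hgpos n (by omega)
    have f0 : nuD θ n {1} = gamD θ n * muD p q n {1} := by
      rw [H _ hs0]; field_simp
    have f1 : nuD θ n (insert (l+3) {1})
        = gamD θ n * muD p q n (insert (l+3) {1}) := by
      rw [H _ hs1]; field_simp
    have hmr := Stmt9.mu_ratio p q hl
    have hnr := Stmt9.nu_ratio θ hl
    rw [f0, f1] at hnr
    have hθl := hθpos (l+3) (by omega)
    have hμ0 : 0 < muD p q n ({1} : Finset ℕ) :=
      Stmt9.mu_single_pos p q (by omega) hp1 hp2 hp hq
    have hcan : ((l:ℝ)+2) * muD p q n (insert (l+3) {1}) = θ (l+3) * muD p q n {1} := by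
      have := hnr
      apply mul_left_cancel₀ (ne_of_gt hγ)
      ring_nf
      ring_nf at this
      linarith [this]
    -- combine with hmr
    have hrel : ((l:ℝ)+2) * q (l+3) = θ (l+3) * (p (l+2) * p (l+3)) := by
      have h1 : ((l:ℝ)+2) * (muD p q n (insert (l+3) {1}) * (p (l+2) * p (l+3)))
          = ((l:ℝ)+2) * (q (l+3) * muD p q n {1}) := by rw [hmr]
      rw [← mul_assoc, hcan] at h1
      have h2 : (((l:ℝ)+2) * q (l+3)) * muD p q n {1}
          = (θ (l+3) * (p (l+2) * p (l+3))) * muD p q n {1} := by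
        ring_nf
        ring_nf at h1
        linarith [h1]
      exact mul_right_cancel₀ (ne_of_gt hμ0) h2
    have hp3 : p (l+3) ≠ 0 := ne_of_gt (hp _ (by omega)).1
    have hp2' : p (l+2) ≠ 0 := by
      rcases Nat.eq_zero_or_pos l with rfl | hl0
      · rw [show 0+2 = 2 from rfl, hp2]; norm_num
      · exact ne_of_gt (hp _ (by omega)).1
    rw [show l+3-1 = l+2 by omega]
    rw [eq_div_iff (by exact mul_ne_zero hp3 hp2')]
    push_cast
    linear_combination -hrel
  · -- (ii) → (i)
    intro H
    have main : ∀ m : ℕ, 2 ≤ m → m ≤ n →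
        ∀ s ∈ derSet m, nuD θ m s = gamD θ m * muD p q m s := by
      intro m
      induction m using Nat.strong_induction_on with
      | _ m IH =>
        intro h2 hmn s hs
        rcases Nat.lt_or_ge m 4 with h4 | h4
        · rcases Nat.lt_or_ge m 3 with h3 | h3
          · have hm2 : m = 2 := by omega
            subst hm2
            rw [Stmt9.eq_singleton_of_mem_two hs, Stmt9.muD_two p q hp1 hq, Stmt9.gam_two]
            ring
          · have hm3 : m = 3 := by omega
            subst hm3
            rw [Stmt9.eq_singleton_of_mem_three hs, Stmt9.muD_three p q hp1 hp2 hq,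
              Stmt9.gam_three]
            ring
        · obtain ⟨j, rfl⟩ : ∃ j, m = j + 4 := ⟨m - 4, by omega⟩
          have hnot4 : j+4 ∉ s := (Stmt9.mem_derSet.1 hs).2.2.1
          have hPII := H (j+3) (by omega) (by omega)
          rw [show j+3-1 = j+2 by omega] at hPII
          have hrec := hrec' (j+4) (by omega)
          rw [show j+4-1 = j+3 by omega, show j+4-2 = j+2 by omega] at hrec
          unfold Stmt9.b0 Stmt9.b1 at hrec
          have hx : 0 < ((j+3:ℕ):ℝ) - 1 := by push_cast; linarith
          have hx' : 0 < ((j+4:ℕ):ℝ) - 1 := by push_cast; linarith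
          have hstep := Stmt9.stepLemma hx hx' (hθpos (j+3) (by omega)) (hθpos (j+4) (by omega))
            (hgpos (j+3) (by omega)) (le_of_lt (hgpos (j+2) (by omega))) hrec hPII
          by_cases hmem : j+3 ∈ s
          · have hs'mem : s.erase (j+3) ∈ derSet (j+2) :=
              Stmt9.erase_mem (by omega) (k := j+2) hs hmem
            have hnot4' : j+4 ∉ s.erase (j+3) := fun hc => hnot4 (Finset.mem_of_mem_erase hc)
            obtain ⟨s', hs', hins, hn3, hn4⟩ :
                ∃ s', s' ∈ derSet (j+2) ∧ s = insert (j+3) s' ∧ j+3 ∉ s' ∧ j+4 ∉ s' :=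
              ⟨s.erase (j+3), hs'mem, (Finset.insert_erase hmem).symm,
                Finset.notMem_erase _ _, hnot4'⟩
            subst hins
            have h1 : nuD θ (j+4) (insert (j+3) s')
                = Stmt9.b0 θ (j+4) * (Stmt9.b1 θ (j+3) * nuD θ (j+2) s') :=
              Stmt9.nuD_insert θ (k := j+2) hn3 hn4
            have h2' : muD p q (j+4) (insert (j+3) s') = q (j+3) * muD p q (j+2) s' :=
              Stmt9.muD_insert p q (k := j+1) hn4
            have hIH := IH (j+2) (by omega) (by omega) (by omega) _ hs'
            rw [h1, h2', hIH, hq]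
            unfold Stmt9.b0 Stmt9.b1
            linear_combination muD p q (j+2) s' * hstep.2.symm
          · have hs3 : s ∈ derSet (j+3) := Stmt9.mem_of_not_mem_top (k := j+2) hs hmem
            have h1 : nuD θ (j+4) s = Stmt9.b0 θ (j+4) * nuD θ (j+3) s :=
              Stmt9.nuD_succ θ (k := j+3) hnot4
            have h2' : muD p q (j+4) s = p (j+3) * muD p q (j+3) s :=
              Stmt9.muD_succ p q (k := j+2) hmem hnot4
            have hIH := IH (j+3) (by omega) (by omega) (by omega) _ hs3
            rw [h1, h2', hIH]
            unfold Stmt9.b0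
            linear_combination muD p q (j+3) s * hstep.1.symm
    intro s hs
    have hγ := hgpos n (by omega)
    rw [main n (by omega) le_rfl s hs]
    field_simp
end

section
/- Let θ > 0 and θ*_2 > 0, and set θ*_1 = 1, θ*_3 = θ, θ*_i = θ(1 + θ/(i−2)) for i ≥ 4. Define δ by δ_1 = 0, δ_2 = 1/(1+θ*_2), and δ_i = ((i−1)/(i−1+θ*_i))·( δ_{i−1} + (θ*_{i−1}/(i−2+θ*_{i−1}))·δ_{i−2} ) for i ≥ 3. Then: (a) for every n ≥ 3, δ_n = (n−1)!·(θ²+θ+2)·(θ+2)_{(n−3)} / ( (1+θ*_2)·(θ+2)·Π_{k=1}^{n−2} ( k(k+1) + θ(θ+k) ) ); (b) with z_1(θ) = (3+θ − √((1−θ)(1+3θ)))/2 and z_2(θ) = (3+θ + √((1−θ)(1+3θ)))/2 (complex square root; z_1, z_2 are complex conjugates when θ > 1), lim_{n→∞} δ_n = ((θ²+θ+2)/(1+θ*_2)) · Γ(z_1(θ))Γ(z_2(θ))/Γ(z_1(θ)+z_2(θ)), where Γ is the complex Gamma function and the right-hand side is real. -/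
open Finset Filter

lemma aux_div (a b c d e g : ℂ) (hb : b ≠ 0) (hd : d ≠ 0) (he : e ≠ 0) (hg : g ≠ 0) :
    a / b * (c / d) / (e / g) = a * c * g / (b * d * e) := by
  field_simp

set_option maxHeartbeats 2000000 in
/-- exact derangement probabilities `δ_n(θ)` of the playground-game
Feller-type coupling and their limit in terms of the complex Gamma function. -/
theorem stmt10 (θ θ2 : ℝ) (hθ : 0 < θ) (hθ2 : 0 < θ2)
    (θs : ℕ → ℝ) (hθs1 : θs 1 = 1) (hθs2 : θs 2 = θ2) (hθs3 : θs 3 = θ)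
    (hθs : ∀ i : ℕ, 4 ≤ i → θs i = θ * (1 + θ / ((i : ℝ) - 2)))
    (δ : ℕ → ℝ) (hδ1 : δ 1 = 0) (hδ2 : δ 2 = 1 / (1 + θs 2))
    (hδrec : ∀ i : ℕ, 3 ≤ i →
      δ i = (((i : ℝ) - 1) / ((i : ℝ) - 1 + θs i))
        * (δ (i - 1) + (θs (i - 1) / ((i : ℝ) - 2 + θs (i - 1))) * δ (i - 2))) :
    (∀ n : ℕ, 3 ≤ n →
      δ n = ((n - 1).factorial : ℝ) * (θ ^ 2 + θ + 2) * risingFac (θ + 2) (n - 3)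
        / ((1 + θs 2) * (θ + 2)
            * ∏ k ∈ Finset.Icc 1 (n - 2), ((k : ℝ) * ((k : ℝ) + 1) + θ * (θ + k)))) ∧
    Tendsto (fun n : ℕ => (δ n : ℂ)) atTop (nhds
      ((((θ ^ 2 + θ + 2) / (1 + θs 2) : ℝ) : ℂ)
        * (Complex.Gamma ((3 + θ - ((((1 - θ) * (1 + 3 * θ) : ℝ) : ℂ)) ^ ((1 : ℂ) / 2)) / 2)
          * Complex.Gamma ((3 + θ + ((((1 - θ) * (1 + 3 * θ) : ℝ) : ℂ)) ^ ((1 : ℂ) / 2)) / 2)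
          / Complex.Gamma
              ((3 + θ - ((((1 - θ) * (1 + 3 * θ) : ℝ) : ℂ)) ^ ((1 : ℂ) / 2)) / 2
                + (3 + θ + ((((1 - θ) * (1 + 3 * θ) : ℝ) : ℂ)) ^ ((1 : ℂ) / 2)) / 2)))) := by
  have hθ2pos : (0:ℝ) < 1 + θs 2 := by rw [hθs2]; linarith
  have hθp2 : (0:ℝ) < θ + 2 := by linarith
  have hcpos : ∀ k : ℕ, 0 < (k:ℝ) * ((k:ℝ) + 1) + θ * (θ + (k:ℝ)) := by
    intro k
    have : (0:ℝ) ≤ (k:ℝ) := Nat.cast_nonneg k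
    nlinarith
  have hPpos : ∀ M : ℕ, 0 < ∏ k ∈ Finset.Icc 1 M, ((k:ℝ) * ((k:ℝ) + 1) + θ * (θ + (k:ℝ))) :=
    fun M => Finset.prod_pos fun k _ => hcpos k
  have hRpos : ∀ j : ℕ, 0 < risingFac (θ + 2) j := by
    intro j
    refine Finset.prod_pos fun k _ => ?_
    have : (0:ℝ) ≤ (k:ℝ) := Nat.cast_nonneg k
    linarith
  set F : ℕ → ℝ := fun m => ((m + 2).factorial : ℝ) * (θ ^ 2 + θ + 2) * risingFac (θ + 2) m
      / ((1 + θs 2) * (θ + 2)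
          * ∏ k ∈ Finset.Icc 1 (m + 1), ((k : ℝ) * ((k : ℝ) + 1) + θ * (θ + k))) with hF
  have key : ∀ m : ℕ, δ (m + 3) = F m ∧ δ (m + 4) = F (m + 1) := by
    intro m
    induction m with
    | zero =>
      have h3 := hδrec 3 (by norm_num)
      norm_num at h3
      rw [hδ1, hδ2, hθs2, hθs3] at h3
      have b3 : δ 3 = F 0 := by
        rw [hF]
        simp only [risingFac, Finset.range_zero, Finset.prod_empty, Finset.Icc_self,
          Finset.prod_singleton, h3, hθs2]
        have h1 : (1:ℝ) * ((1:ℝ) + 1) + θ * (θ + 1) ≠ 0 := by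
          have := hcpos 1; push_cast at this ⊢; linarith
        have h2 : (1:ℝ) + θ2 ≠ 0 := by linarith
        have h4 : (2:ℝ) + θ ≠ 0 := by linarith
        push_cast
        norm_num [Nat.factorial]
        field_simp
        ring
      refine ⟨b3, ?_⟩
      have h4 := hδrec 4 (by norm_num)
      norm_num at h4
      rw [hδ2, hθs3, hθs 4 (by norm_num), b3] at h4
      rw [hF] at h4 ⊢
      simp only [risingFac, Finset.range_zero, Finset.prod_empty, Finset.prod_range_one,
        Finset.Icc_self, Finset.prod_singleton] at h4 ⊢
      rw [h4, hθs2]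
      rw [show Finset.Icc 1 2 = {1, 2} from rfl]
      rw [Finset.prod_insert (by decide), Finset.prod_singleton]
      have h1 : (1:ℝ) * ((1:ℝ) + 1) + θ * (θ + 1) ≠ 0 := by
        have := hcpos 1; push_cast at this; linarith
      have h2 : (2:ℝ) * ((2:ℝ) + 1) + θ * (θ + 2) ≠ 0 := by
        have := hcpos 2; push_cast at this; linarith
      have h5 : (1:ℝ) + θ2 ≠ 0 := by linarith
      have h6 : (2:ℝ) + θ ≠ 0 := by linarith
      have h7 : (4:ℝ) - 1 + θ * (1 + θ / ((4:ℝ) - 2)) ≠ 0 := by positivity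
      push_cast
      norm_num [Nat.factorial]
      field_simp
      ring
    | succ m ih =>
      refine ⟨ih.2, ?_⟩
      have hrec := hδrec (m + 5) (by omega)
      rw [show m + 5 - 1 = m + 4 from rfl, show m + 5 - 2 = m + 3 from rfl] at hrec
      rw [ih.1, ih.2, hθs (m + 5) (by omega), hθs (m + 4) (by omega)] at hrec
      push_cast at hrec
      rw [show m + 1 + 4 = m + 5 from rfl, hrec]
      simp only [hF]
      have hm0 : (0:ℝ) ≤ (m:ℝ) := Nat.cast_nonneg m
      have hfac3 : ((m + 3).factorial : ℝ) = ((m:ℝ) + 3) * ((m + 2).factorial : ℝ) := by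
        rw [show m + 3 = (m + 2) + 1 from rfl, Nat.factorial_succ]; push_cast; ring
      have hfac4 : ((m + 4).factorial : ℝ)
          = ((m:ℝ) + 4) * (((m:ℝ) + 3) * ((m + 2).factorial : ℝ)) := by
        rw [show m + 4 = (m + 3) + 1 from rfl, Nat.factorial_succ]; push_cast [hfac3]; ring
      have hrise1 : risingFac (θ + 2) (m + 1) = risingFac (θ + 2) m * (θ + 2 + (m:ℝ)) := by
        rw [risingFac, risingFac, Finset.prod_range_succ]
      have hrise2 : risingFac (θ + 2) (m + 2)
          = risingFac (θ + 2) m * (θ + 2 + (m:ℝ)) * (θ + 2 + ((m:ℝ) + 1)) := by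
        rw [show m + 2 = (m + 1) + 1 from rfl, risingFac, Finset.prod_range_succ,
          ← risingFac, hrise1]; push_cast; ring
      have hprod2 : ∏ k ∈ Finset.Icc 1 (m + 2), ((k:ℝ) * ((k:ℝ) + 1) + θ * (θ + (k:ℝ)))
          = (∏ k ∈ Finset.Icc 1 (m + 1), ((k:ℝ) * ((k:ℝ) + 1) + θ * (θ + (k:ℝ))))
            * (((m:ℝ) + 2) * (((m:ℝ) + 2) + 1) + θ * (θ + ((m:ℝ) + 2))) := by
        rw [show m + 2 = (m + 1) + 1 from rfl,
          Finset.prod_Icc_succ_top (by omega : 1 ≤ (m + 1) + 1)]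
        push_cast; ring
      have hprod3 : ∏ k ∈ Finset.Icc 1 (m + 3), ((k:ℝ) * ((k:ℝ) + 1) + θ * (θ + (k:ℝ)))
          = (∏ k ∈ Finset.Icc 1 (m + 1), ((k:ℝ) * ((k:ℝ) + 1) + θ * (θ + (k:ℝ))))
            * (((m:ℝ) + 2) * (((m:ℝ) + 2) + 1) + θ * (θ + ((m:ℝ) + 2)))
            * (((m:ℝ) + 3) * (((m:ℝ) + 3) + 1) + θ * (θ + ((m:ℝ) + 3))) := by
        rw [show m + 3 = (m + 2) + 1 from rfl,
          Finset.prod_Icc_succ_top (by omega : 1 ≤ (m + 2) + 1), hprod2]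
        push_cast; ring
      rw [show m + 1 + 1 = m + 2 from rfl, show m + 1 + 2 = m + 3 from rfl,
        show m + 1 + 1 + 1 = m + 3 from rfl, show m + 1 + 1 + 2 = m + 4 from rfl]
      push_cast
      rw [hfac3, hfac4, hrise1, hrise2, hprod2, hprod3]
      have hP := hPpos (m + 1)
      have hc2 := hcpos (m + 2)
      have hc3 := hcpos (m + 3)
      push_cast at hc2 hc3
      have ha1 : (m:ℝ) + 5 - 2 ≠ 0 := by intro h; linarith
      have ha3 : (m:ℝ) + 4 - 2 ≠ 0 := by intro h; linarith
      have hd1 : (0:ℝ) < θ / ((m:ℝ) + 5 - 2) := div_pos hθ (by linarith)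
      have hd2 : (0:ℝ) < θ / ((m:ℝ) + 4 - 2) := div_pos hθ (by linarith)
      have ha2 : (m:ℝ) + 5 - 1 + θ * (1 + θ / ((m:ℝ) + 5 - 2)) ≠ 0 := by
        have := mul_pos hθ (show (0:ℝ) < 1 + θ / ((m:ℝ) + 5 - 2) by linarith)
        intro h; linarith
      have ha4 : (m:ℝ) + 5 - 2 + θ * (1 + θ / ((m:ℝ) + 4 - 2)) ≠ 0 := by
        have := mul_pos hθ (show (0:ℝ) < 1 + θ / ((m:ℝ) + 4 - 2) by linarith)
        intro h; linarith
      have hne1 : (1 + θs 2) ≠ 0 := ne_of_gt hθ2pos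
      have hne2 : (θ + 2) ≠ 0 := ne_of_gt hθp2
      have e1 : ((m:ℝ) + 5 - 1) / ((m:ℝ) + 5 - 1 + θ * (1 + θ / ((m:ℝ) + 5 - 2)))
          = ((m:ℝ) + 4) * ((m:ℝ) + 3)
            / (((m:ℝ) + 3) * (((m:ℝ) + 3) + 1) + θ * (θ + ((m:ℝ) + 3))) := by
        rw [div_eq_div_iff ha2 (ne_of_gt hc3)]
        field_simp
        ring
      have e2 : θ * (1 + θ / ((m:ℝ) + 4 - 2))
            / ((m:ℝ) + 5 - 2 + θ * (1 + θ / ((m:ℝ) + 4 - 2)))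
          = θ * (θ + ((m:ℝ) + 2))
            / (((m:ℝ) + 2) * (((m:ℝ) + 2) + 1) + θ * (θ + ((m:ℝ) + 2))) := by
        rw [div_eq_div_iff ha4 (ne_of_gt hc2)]
        field_simp
        ring
      rw [e1, e2]
      field_simp
      ring
  have partA : ∀ n : ℕ, 3 ≤ n →
      δ n = ((n - 1).factorial : ℝ) * (θ ^ 2 + θ + 2) * risingFac (θ + 2) (n - 3)
        / ((1 + θs 2) * (θ + 2)
            * ∏ k ∈ Finset.Icc 1 (n - 2), ((k : ℝ) * ((k : ℝ) + 1) + θ * (θ + k))) := by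
    intro n hn
    obtain ⟨m, rfl⟩ : ∃ m, n = m + 3 := ⟨n - 3, by omega⟩
    have := (key m).1
    rw [show m + 3 - 1 = m + 2 from rfl, show m + 3 - 3 = m from rfl,
      show m + 3 - 2 = m + 1 from rfl]
    exact this
  refine ⟨partA, ?_⟩
  set S : ℂ := (((1 - θ) * (1 + 3 * θ) : ℝ) : ℂ) ^ ((1 : ℂ) / 2) with hS
  set z1 : ℂ := (3 + (θ:ℂ) - S) / 2 with hz1
  set z2 : ℂ := (3 + (θ:ℂ) + S) / 2 with hz2
  have hSq : S ^ 2 = (((1 - θ) * (1 + 3 * θ) : ℝ) : ℂ) := by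
    by_cases h : (((1 - θ) * (1 + 3 * θ) : ℝ) : ℂ) = 0
    · rw [hS, h, Complex.zero_cpow (by norm_num : (1 : ℂ) / 2 ≠ 0)]; norm_num
    · rw [hS, sq, ← Complex.cpow_add _ _ h,
        show (1:ℂ)/2 + 1/2 = 1 by norm_num, Complex.cpow_one]
  have hsum : z1 + z2 = 3 + (θ:ℂ) := by rw [hz1, hz2]; ring
  have hprod : z1 * z2 = (θ:ℂ) ^ 2 + θ + 2 := by
    rw [hz1, hz2]
    push_cast at hSq
    linear_combination (-(1:ℂ)/4) * hSq
  clear_value S z1 z2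
  clear hS hz1 hz2
  have hz1ne : ∀ j : ℕ, z1 + j ≠ 0 := by
    intro j h
    have h3 : ((θ:ℂ) ^ 2 + θ + 2) = (-(j:ℂ)) * (3 + θ + j) := by
      rw [← hprod, show z1 = -(j:ℂ) by linear_combination h,
        show z2 = 3 + (θ:ℂ) + j by linear_combination hsum - h]
    have h4 : (θ ^ 2 + θ + 2 : ℝ) = (-(j:ℝ)) * (3 + θ + j) := by exact_mod_cast h3
    have h5 : (0:ℝ) ≤ (j:ℝ) := Nat.cast_nonneg j
    nlinarith
  have hz2ne : ∀ j : ℕ, z2 + j ≠ 0 := by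
    intro j h
    have h3 : ((θ:ℂ) ^ 2 + θ + 2) = (-(j:ℂ)) * (3 + θ + j) := by
      rw [← hprod, show z2 = -(j:ℂ) by linear_combination h,
        show z1 = 3 + (θ:ℂ) + j by linear_combination hsum - h]
      ring
    have h4 : (θ ^ 2 + θ + 2 : ℝ) = (-(j:ℝ)) * (3 + θ + j) := by exact_mod_cast h3
    have h5 : (0:ℝ) ≤ (j:ℝ) := Nat.cast_nonneg j
    nlinarith
  have hz3ne : ∀ j : ℕ, (θ:ℂ) + 2 + j ≠ 0 := by
    intro j h
    have h4 : (θ + 2 + j : ℝ) = 0 := by exact_mod_cast h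
    have h5 : (0:ℝ) ≤ (j:ℝ) := Nat.cast_nonneg j
    linarith
  have hθ2c : ((θ:ℂ) + 2) ≠ 0 := by simpa using hz3ne 0
  have hGne : Complex.Gamma ((θ:ℂ) + 2) ≠ 0 := by
    refine Complex.Gamma_ne_zero fun n => ?_
    intro h
    have h4 : (θ + 2 : ℝ) = -(n:ℝ) := by exact_mod_cast h
    have h5 : (0:ℝ) ≤ (n:ℝ) := Nat.cast_nonneg n
    linarith
  -- limit machinery
  have hinv : Tendsto (fun n : ℕ => ((n:ℂ))⁻¹) atTop (nhds 0) :=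
    tendsto_inv_atTop_nhds_zero_nat (𝕜 := ℂ)
  have hpre : Tendsto
      (fun m : ℕ => ((m:ℂ) + 1) * ((m:ℂ) + 2) / ((m:ℂ) * ((θ:ℂ) + 2 + (m:ℂ))))
      atTop (nhds 1) := by
    have t1 : Tendsto (fun m : ℕ => 1 + (m:ℂ)⁻¹) atTop (nhds 1) := by
      simpa using tendsto_const_nhds.add hinv
    have t2 : Tendsto (fun m : ℕ => 1 + 2 * (m:ℂ)⁻¹) atTop (nhds 1) := by
      simpa using tendsto_const_nhds.add (hinv.const_mul 2)
    have t3 : Tendsto (fun m : ℕ => 1 + ((θ:ℂ) + 2) * (m:ℂ)⁻¹) atTop (nhds 1) := by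
      simpa using tendsto_const_nhds.add (hinv.const_mul ((θ:ℂ) + 2))
    have l1 : Tendsto
        (fun m : ℕ => (1 + (m:ℂ)⁻¹) * (1 + 2 * (m:ℂ)⁻¹) / (1 + ((θ:ℂ) + 2) * (m:ℂ)⁻¹))
        atTop (nhds 1) := by
      convert (t1.mul t2).div t3 (by norm_num) using 2 <;> norm_num
    refine Tendsto.congr' ?_ l1
    filter_upwards [eventually_ge_atTop 1] with m hm
    have hmne : (m:ℂ) ≠ 0 := Nat.cast_ne_zero.mpr (by omega)
    have hdne : (θ:ℂ) + 2 + (m:ℂ) ≠ 0 := hz3ne m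
    have hd1 : 1 + ((θ:ℂ) + 2) * (m:ℂ)⁻¹ ≠ 0 := by
      have e : 1 + ((θ:ℂ) + 2) * (m:ℂ)⁻¹ = ((θ:ℂ) + 2 + (m:ℂ)) / (m:ℂ) := by
        field_simp; ring
      rw [e]
      exact div_ne_zero hdne hmne
    have hd2 : (m:ℂ) * ((θ:ℂ) + 2 + (m:ℂ)) ≠ 0 := mul_ne_zero hmne hdne
    rw [div_eq_div_iff hd1 hd2]
    field_simp
    ring
  have hgam := ((Complex.GammaSeq_tendsto_Gamma z1).mul
      (Complex.GammaSeq_tendsto_Gamma z2)).div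
      (Complex.GammaSeq_tendsto_Gamma ((θ:ℂ) + 2)) hGne
  have hg := hpre.mul hgam
  set Cc : ℂ := (((θ ^ 2 + θ + 2) / (1 + θs 2) : ℝ) : ℂ) / ((θ:ℂ) + 2) with hCc
  have hmain := hg.const_mul Cc
  -- identify the limit value
  have hLeq : Cc * (1 * (Complex.Gamma z1 * Complex.Gamma z2 / Complex.Gamma ((θ:ℂ) + 2)))
      = (((θ ^ 2 + θ + 2) / (1 + θs 2) : ℝ) : ℂ)
        * (Complex.Gamma z1 * Complex.Gamma z2 / Complex.Gamma (z1 + z2)) := by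
    rw [show z1 + z2 = ((θ:ℂ) + 2) + 1 by linear_combination hsum,
      Complex.Gamma_add_one _ hθ2c, hCc]
    field_simp
  rw [hLeq] at hmain
  -- the key identity
  have hkey : ∀ m : ℕ, 1 ≤ m → (δ (m + 3) : ℂ)
      = Cc * (((m:ℂ) + 1) * ((m:ℂ) + 2) / ((m:ℂ) * ((θ:ℂ) + 2 + (m:ℂ)))
          * (Complex.GammaSeq z1 m * Complex.GammaSeq z2 m
              / Complex.GammaSeq ((θ:ℂ) + 2) m)) := by
    intro m hm
    have hmne : (m:ℂ) ≠ 0 := Nat.cast_ne_zero.mpr (by omega)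
    have hA := partA (m + 3) (by omega)
    rw [show m + 3 - 1 = m + 2 from rfl, show m + 3 - 3 = m from rfl,
      show m + 3 - 2 = m + 1 from rfl] at hA
    have hPc : (∏ k ∈ Finset.Icc 1 (m + 1), ((k:ℂ) * ((k:ℂ) + 1) + (θ:ℂ) * ((θ:ℂ) + (k:ℂ))))
        = (∏ j ∈ Finset.range (m + 1), (z1 + j)) * (∏ j ∈ Finset.range (m + 1), (z2 + j)) := by
      rw [← Finset.Ico_add_one_right_eq_Icc, Finset.prod_Ico_eq_prod_range, ← Finset.prod_mul_distrib]
      refine Finset.prod_congr (by norm_num) fun j _ => ?_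
      push_cast
      linear_combination (-1 : ℂ) * hprod - (j:ℂ) * hsum
    have hrc : ((risingFac (θ + 2) m : ℝ) : ℂ) = ∏ j ∈ Finset.range m, ((θ:ℂ) + 2 + j) := by
      rw [risingFac]
      push_cast
      rfl
    have hQ1ne : (∏ j ∈ Finset.range (m + 1), (z1 + j)) ≠ 0 :=
      Finset.prod_ne_zero_iff.mpr fun j _ => hz1ne j
    have hQ2ne : (∏ j ∈ Finset.range (m + 1), (z2 + j)) ≠ 0 :=
      Finset.prod_ne_zero_iff.mpr fun j _ => hz2ne j
    have hQ3ne : (∏ j ∈ Finset.range m, ((θ:ℂ) + 2 + j)) ≠ 0 :=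
      Finset.prod_ne_zero_iff.mpr fun j _ => hz3ne j
    have hcp0 : (m:ℂ) ^ z1 * (m:ℂ) ^ z2 = (m:ℂ) ^ ((θ:ℂ) + 2) * (m:ℂ) := by
      rw [← Complex.cpow_add _ _ hmne,
        show z1 + z2 = ((θ:ℂ) + 2) + 1 by linear_combination hsum,
        Complex.cpow_add _ _ hmne, Complex.cpow_one]
    have hcp : (m:ℂ) ^ ((θ:ℂ) + 2) = (m:ℂ) ^ z1 * (m:ℂ) ^ z2 / (m:ℂ) := by
      rw [eq_div_iff hmne]
      exact hcp0.symm
    have hp1ne : (m:ℂ) ^ z1 ≠ 0 := by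
      simp [Complex.cpow_eq_zero_iff, hmne]
    have hp2ne : (m:ℂ) ^ z2 ≠ 0 := by
      simp [Complex.cpow_eq_zero_iff, hmne]
    have hfne : ((m.factorial : ℕ) : ℂ) ≠ 0 := Nat.cast_ne_zero.mpr m.factorial_ne_zero
    have hfacc : (((m + 2).factorial : ℕ) : ℂ) = ((m:ℂ) + 2) * ((m:ℂ) + 1) * (m.factorial : ℂ) := by
      rw [show m + 2 = (m + 1) + 1 from rfl, Nat.factorial_succ, Nat.factorial_succ]
      push_cast
      ring
    have hts : ((1:ℂ) + (θs 2 : ℂ)) ≠ 0 := by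
      rw [show (1:ℂ) + (θs 2 : ℂ) = ((1 + θs 2 : ℝ) : ℂ) by push_cast; ring]
      exact Complex.ofReal_ne_zero.mpr (ne_of_gt hθ2pos)
    have hmθne : (θ:ℂ) + 2 + (m:ℂ) ≠ 0 := hz3ne m
    -- cast the real formula into ℂ
    have hδc : (δ (m + 3) : ℂ)
        = (((m + 2).factorial : ℕ) : ℂ) * ((θ:ℂ) ^ 2 + θ + 2) * ((risingFac (θ + 2) m : ℝ) : ℂ)
          / (((1:ℂ) + (θs 2 : ℂ)) * ((θ:ℂ) + 2)
              * ∏ k ∈ Finset.Icc 1 (m + 1), ((k:ℂ) * ((k:ℂ) + 1) + (θ:ℂ) * ((θ:ℂ) + (k:ℂ)))) := by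
      rw [hA]
      push_cast
      ring
    have hGs3 : Complex.GammaSeq ((θ:ℂ) + 2) m
        = ((m:ℂ) ^ z1 * (m:ℂ) ^ z2) * (m.factorial : ℂ)
          / ((m:ℂ) * ((∏ j ∈ Finset.range m, ((θ:ℂ) + 2 + j)) * ((θ:ℂ) + 2 + (m:ℂ)))) := by
      rw [Complex.GammaSeq, Finset.prod_range_succ ((fun j => (θ:ℂ) + 2 + j)) m, hcp,
        div_mul_eq_mul_div, div_div]
    have hEne : ((m:ℂ) ^ z1 * (m:ℂ) ^ z2) * (m.factorial : ℂ) ≠ 0 :=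
      mul_ne_zero (mul_ne_zero hp1ne hp2ne) hfne
    have hGne' : (m:ℂ) * ((∏ j ∈ Finset.range m, ((θ:ℂ) + 2 + j)) * ((θ:ℂ) + 2 + (m:ℂ))) ≠ 0 :=
      mul_ne_zero hmne (mul_ne_zero hQ3ne hmθne)
    have hX : Complex.GammaSeq z1 m * Complex.GammaSeq z2 m
          / Complex.GammaSeq ((θ:ℂ) + 2) m
        = (m.factorial : ℂ)
            * ((m:ℂ) * ((∏ j ∈ Finset.range m, ((θ:ℂ) + 2 + j)) * ((θ:ℂ) + 2 + (m:ℂ))))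
          / ((∏ j ∈ Finset.range (m + 1), (z1 + j)) * ∏ j ∈ Finset.range (m + 1), (z2 + j)) := by
      rw [Complex.GammaSeq, Complex.GammaSeq, hGs3,
        aux_div _ _ _ _ _ _ hQ1ne hQ2ne hEne hGne']
      rw [div_eq_div_iff (mul_ne_zero (mul_ne_zero hQ1ne hQ2ne) hEne)
        (mul_ne_zero hQ1ne hQ2ne)]
      ring
    have hCc2 : Cc = ((θ:ℂ) ^ 2 + (θ:ℂ) + 2) / (((1:ℂ) + (θs 2 : ℂ)) * ((θ:ℂ) + 2)) := by
      rw [hCc, Complex.ofReal_div]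
      push_cast
      rw [div_div]
    rw [hδc, hPc, hrc, hfacc, hCc2, hX, div_mul_div_comm, div_mul_div_comm]
    rw [div_eq_div_iff
      (mul_ne_zero (mul_ne_zero hts hθ2c) (mul_ne_zero hQ1ne hQ2ne))
      (mul_ne_zero (mul_ne_zero hts hθ2c)
        (mul_ne_zero (mul_ne_zero hmne hmθne) (mul_ne_zero hQ1ne hQ2ne)))]
    ring
  -- assemble
  rw [← tendsto_add_atTop_iff_nat 3]
  refine Tendsto.congr' ?_ hmain
  filter_upwards [eventually_ge_atTop 1] with m hm
  exact (hkey m hm).symm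
end

section
/- Fix n ≥ 4 and s > 0. Let θ : ℕ → ℝ with θ_1 = 1 and θ_i > 0, let p : ℕ → ℝ with p(1) = 0, p(2) = 1, 0 < p(i) < 1 for i ≥ 3, q(i) := 1 − p(i), and suppose θ_i = (i−1)·q(i)/(p(i)·p(i−1)) for all 3 ≤ i ≤ n−1. Let Δ_n, μ_n, ν_n, γ_n(θ) be as follows: Δ_n is the set of a : {1,…,n} → {0,1} with a(1) = 1, a(n) = 0 and no two adjacent 1s; μ_n(a) := Π_{i=1}^{n−1} t_i(a) with t_i(a) = 1 if a(i+1) = 1, t_i(a) = p(i) if a(i+1) = a(i) = 0, t_i(a) = q(i) if a(i+1) = 0, a(i) = 1; γ_n(θ') := Σ_{a ∈ Δ_n} Π_{i=1}^{n} b'_i(a(i)) with b'_i(1) = θ'_i/(i−1+θ'_i), b'_i(0) = (i−1)/(i−1+θ'_i), for any positive sequence θ'. Then Σ_{a ∈ Δ_n} s^{|a|}·μ_n(a) = ( γ_n(sθ)/γ_n(θ) ) · ( (sθ)_{<n>}/θ_{<n>} ), where |a| := #{i : a(i) = 1}, sθ denotes the sequence (s·θ_i)_i, and θ'_{<n>}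 := Π_{k=1}^{n} (θ'_k + k − 1). -/
open Finset Filter

lemma mem_derSet {n : ℕ} {a : Finset ℕ} :
    a ∈ derSet n ↔ a ⊆ Finset.Icc 1 n ∧ 1 ∈ a ∧ n ∉ a ∧ ∀ i ∈ a, i + 1 ∉ a := by
  simp [derSet, and_assoc]

lemma Icc_one_insert (n : ℕ) (hn : 1 ≤ n) :
    Finset.Icc 1 n = insert 1 (Finset.Icc 2 n) := by
  ext i; simp only [Finset.mem_Icc, Finset.mem_insert]; omega

lemma filter_not_mem (k : ℕ) :
    (derSet (k+4)).filter (fun a => (k+3) ∉ a) = derSet (k+3) := by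
  ext a
  simp only [Finset.mem_filter, mem_derSet]
  constructor
  · rintro ⟨⟨hsub, h1, hn, hadj⟩, hm⟩
    refine ⟨fun i hi => ?_, h1, hm, hadj⟩
    have := hsub hi
    simp only [Finset.mem_Icc] at this ⊢
    have : i ≠ k+4 := fun h => hn (h ▸ hi)
    have := hsub hi; simp only [Finset.mem_Icc] at this; omega
  · rintro ⟨hsub, h1, hn, hadj⟩
    refine ⟨⟨fun i hi => ?_, h1, fun h => ?_, hadj⟩, hn⟩
    · have := hsub hi; simp only [Finset.mem_Icc] at this ⊢; omega
    · have := hsub h; simp only [Finset.mem_Icc] at this; omega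

lemma filter_mem (k : ℕ) :
    (derSet (k+4)).filter (fun a => (k+3) ∈ a)
      = (derSet (k+2)).image (insert (k+3)) := by
  ext a
  simp only [Finset.mem_filter, Finset.mem_image, mem_derSet]
  constructor
  · rintro ⟨⟨hsub, h1, hn, hadj⟩, hm⟩
    refine ⟨a.erase (k+3), ⟨fun i hi => ?_, ?_, ?_, ?_⟩, ?_⟩
    · have hia := Finset.mem_of_mem_erase hi
      have hne := Finset.ne_of_mem_erase hi
      have := hsub hia; simp only [Finset.mem_Icc] at this ⊢
      have h4 : i ≠ k+4 := fun h => hn (h ▸ hia)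
      -- also i ≠ k+3, need i ≤ k+2
      omega
    · exact Finset.mem_erase.mpr ⟨by omega, h1⟩
    · intro h; exact hadj (k+2) (Finset.mem_of_mem_erase h) hm
    · intro i hi h
      exact hadj i (Finset.mem_of_mem_erase hi) (Finset.mem_of_mem_erase h)
    · rw [Finset.insert_erase hm]
  · rintro ⟨b, ⟨hsub, h1, hn, hadj⟩, rfl⟩
    have hb3 : (k+3) ∉ b := fun h => by
      have := hsub h; simp only [Finset.mem_Icc] at this; omega
    have hb2 : ∀ i ∈ b, i ≤ k + 2 := fun i hi => by
      have := hsub hi; simp only [Finset.mem_Icc] at this; omega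
    refine ⟨⟨fun i hi => ?_, ?_, ?_, ?_⟩, Finset.mem_insert_self _ _⟩
    · rcases Finset.mem_insert.mp hi with rfl | hi
      · simp only [Finset.mem_Icc]; omega
      · have := hsub hi; simp only [Finset.mem_Icc] at this ⊢; omega
    · exact Finset.mem_insert_of_mem h1
    · intro h
      rcases Finset.mem_insert.mp h with h | h
      · omega
      · exact absurd (hb2 _ h) (by omega)
    · intro i hi h
      rcases Finset.mem_insert.mp hi with rfl | hi
      · rcases Finset.mem_insert.mp h with h | h
        · omega
        · exact absurd (hb2 _ h) (by omega)
      · rcases Finset.mem_insert.mp h with h | h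
        · have hik : i = k+2 := by omega
          exact hn (hik ▸ hi)
        · exact hadj i hi h

lemma muD_step1 (p q : ℕ → ℝ) (k : ℕ) (a : Finset ℕ) (ha : a ∈ derSet (k+3)) :
    muD p q (k+4) a = muD p q (k+3) a * p (k+3) := by
  obtain ⟨hsub, h1, hn, hadj⟩ := mem_derSet.mp ha
  have h4 : (k+4) ∉ a := fun h => by
    have := hsub h; simp only [Finset.mem_Icc] at this; omega
  show ∏ i ∈ Finset.Icc 1 (k+4-1), _ = (∏ i ∈ Finset.Icc 1 (k+3-1), _) * _
  have e1 : k+4-1 = (k+2)+1 := rfl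
  have e2 : k+3-1 = k+2 := rfl
  rw [e1, e2, Finset.prod_Icc_succ_top (by omega : 1 ≤ k+2+1)]
  congr 1
  simp [h4, hn]

lemma muD_step2 (p q : ℕ → ℝ) (k : ℕ) (b : Finset ℕ) (hb : b ∈ derSet (k+2)) :
    muD p q (k+4) (insert (k+3) b) = muD p q (k+2) b * q (k+3) := by
  obtain ⟨hsub, h1, hn, hadj⟩ := mem_derSet.mp hb
  have hble : ∀ i ∈ b, i ≤ k+1 := fun i hi => by
    have := hsub hi; simp only [Finset.mem_Icc] at this
    have : i ≠ k+2 := fun h => hn (h ▸ hi)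
    omega
  show ∏ i ∈ Finset.Icc 1 (k+4-1), _ = (∏ i ∈ Finset.Icc 1 (k+2-1), _) * _
  have e1 : k+4-1 = ((k+1)+1)+1 := rfl
  have e2 : k+2-1 = k+1 := rfl
  rw [e1, e2, Finset.prod_Icc_succ_top (by omega : 1 ≤ k+1+1+1),
    Finset.prod_Icc_succ_top (by omega : 1 ≤ k+1+1)]
  have hm3 : (k+3) ∈ insert (k+3) b := Finset.mem_insert_self _ _
  have hm4 : (k+4) ∉ insert (k+3) b := by
    intro h
    rcases Finset.mem_insert.mp h with h | h
    · omega
    · exact absurd (hble _ h) (by omega)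
  have t1 : (if k+1+1+1+1 ∈ insert (k+3) b then (1:ℝ) else if k+1+1+1 ∈ insert (k+3) b then q (k+1+1+1) else p (k+1+1+1)) = q (k+3) := by
    have : k+1+1+1+1 = k+4 := rfl
    simp [this, hm4, hm3, show k+1+1+1 = k+3 from rfl]
  have t2 : (if k+1+1+1 ∈ insert (k+3) b then (1:ℝ) else if k+1+1 ∈ insert (k+3) b then q (k+1+1) else p (k+1+1)) = 1 := by
    simp [show k+1+1+1 = k+3 from rfl, hm3]
  rw [t1, t2, mul_one]
  congr 1
  apply Finset.prod_congr rfl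
  intro i hi
  simp only [Finset.mem_Icc] at hi
  have hi1 : i + 1 ∈ insert (k+3) b ↔ i + 1 ∈ b := by
    rw [Finset.mem_insert]; constructor
    · rintro (h | h); · omega
      · exact h
    · exact Or.inr
  have hi0 : i ∈ insert (k+3) b ↔ i ∈ b := by
    rw [Finset.mem_insert]; constructor
    · rintro (h | h); · omega
      · exact h
    · exact Or.inr
  simp only [hi1, hi0]

lemma derSet_two : derSet 2 = {{1}} := by decide
lemma derSet_three : derSet 3 = {{1}} := by decide

lemma sum_rec (p q : ℕ → ℝ) (k : ℕ) :
    ∑ a ∈ derSet (k+4), muD p q (k+4) a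
      = (∑ a ∈ derSet (k+3), muD p q (k+3) a) * p (k+3)
        + (∑ a ∈ derSet (k+2), muD p q (k+2) a) * q (k+3) := by
  classical
  rw [← Finset.sum_filter_add_sum_filter_not (derSet (k+4)) (fun a => (k+3) ∉ a)]
  have h2 : (derSet (k+4)).filter (fun a => ¬ (k+3) ∉ a)
      = (derSet (k+2)).image (insert (k+3)) := by
    rw [← filter_mem k]; congr 1; ext a; simp
  rw [filter_not_mem k, h2]
  congr 1
  · rw [Finset.sum_mul]
    exact Finset.sum_congr rfl (fun a ha => muD_step1 p q k a ha)
  · rw [Finset.sum_image, Finset.sum_mul]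
    · exact Finset.sum_congr rfl (fun b hb => muD_step2 p q k b hb)
    · intro b hb c hc h
      have hb3 : (k+3) ∉ b := by
        obtain ⟨hsub, -, hn, -⟩ := mem_derSet.mp hb
        intro hx; have := hsub hx; simp only [Finset.mem_Icc] at this; omega
      have hc3 : (k+3) ∉ c := by
        obtain ⟨hsub, -, hn, -⟩ := mem_derSet.mp hc
        intro hx; have := hsub hx; simp only [Finset.mem_Icc] at this; omega
      have := congrArg (fun t => Finset.erase t (k+3)) h
      simpa [Finset.erase_insert, hb3, hc3] using this

lemma sum_muD_one (p q : ℕ → ℝ) (hp1 : p 1 = 0) (hp2 : p 2 = 1)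
    (hq : ∀ i, q i = 1 - p i) :
    ∀ n, 2 ≤ n → ∑ a ∈ derSet n, muD p q n a = 1 := by
  have base2 : ∑ a ∈ derSet 2, muD p q 2 a = 1 := by
    rw [derSet_two]
    simp [muD, hq, hp1]
  have base3 : ∑ a ∈ derSet 3, muD p q 3 a = 1 := by
    rw [derSet_three]
    simp only [Finset.sum_singleton, muD]
    rw [show Finset.Icc 1 (3-1) = {1, 2} from rfl]
    rw [Finset.prod_insert (by decide), Finset.prod_singleton]
    norm_num [hq, hp1, hp2]
  have key : ∀ k, (∑ a ∈ derSet (k+2), muD p q (k+2) a = 1)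
      ∧ (∑ a ∈ derSet (k+3), muD p q (k+3) a = 1) := by
    intro k
    induction k with
    | zero => exact ⟨base2, base3⟩
    | succ m ih =>
      refine ⟨ih.2, ?_⟩
      have : m+1+3 = m+4 := rfl
      rw [this, sum_rec p q m, ih.1, ih.2, hq]
      ring
  intro n hn
  obtain ⟨k, rfl⟩ : ∃ k, n = k + 2 := ⟨n - 2, by omega⟩
  exact (key k).1

lemma nuD_factor (θ' : ℕ → ℝ) (hθ'1 : θ' 1 ≠ 0)
    (hD : ∀ i : ℕ, 2 ≤ i → (i : ℝ) - 1 + θ' i ≠ 0)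
    (n : ℕ) (hn : 1 ≤ n) (a : Finset ℕ) (h1 : 1 ∈ a) :
    nuD θ' n a
      = (∏ i ∈ Finset.Icc 2 n, ((i:ℝ)-1) / ((i:ℝ)-1+θ' i))
        * ∏ i ∈ Finset.Icc 2 n, (if i ∈ a then θ' i / ((i:ℝ)-1) else 1) := by
  rw [nuD, Icc_one_insert n hn, Finset.prod_insert (by simp)]
  have h1' : (if (1:ℕ) ∈ a then θ' 1 / (((1:ℕ):ℝ)-1+θ' 1) else (((1:ℕ):ℝ)-1)/(((1:ℕ):ℝ)-1+θ' 1)) = 1 := by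
    simp only [h1, if_true]
    norm_num
    exact hθ'1
  rw [h1', one_mul, ← Finset.prod_mul_distrib]
  apply Finset.prod_congr rfl
  intro i hi
  have hi2 : 2 ≤ i := (Finset.mem_Icc.mp hi).1
  have hne : ((i:ℝ) - 1) ≠ 0 := by
    have : (2:ℝ) ≤ (i:ℝ) := by exact_mod_cast hi2
    linarith
  have hDi := hD i hi2
  by_cases hia : i ∈ a
  · simp only [hia, if_true]
    field_simp
  · simp [hia]

lemma pow_card_eq (s : ℝ) (n : ℕ) (hn : 1 ≤ n) (a : Finset ℕ)
    (hsub : a ⊆ Finset.Icc 1 n) (h1 : 1 ∈ a) :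
    s ^ a.card = s * ∏ i ∈ Finset.Icc 2 n, (if i ∈ a then s else 1) := by
  have key : ∏ i ∈ Finset.Icc 1 n, (if i ∈ a then s else 1) = s ^ a.card := by
    rw [Finset.prod_ite_mem, Finset.inter_eq_right.mpr hsub, Finset.prod_const]
  rw [← key, Icc_one_insert n hn, Finset.prod_insert (by simp), if_pos h1]

lemma muD_factor (p q : ℕ → ℝ) (n : ℕ) (hn : 4 ≤ n) (hq1 : q 1 = 1)
    (hpne : ∀ i : ℕ, 2 ≤ i → i ≤ n - 1 → p i ≠ 0)
    (a : Finset ℕ) (ha : a ∈ derSet n) :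
    muD p q n a = (∏ i ∈ Finset.Icc 2 (n-1), p i)
      * ∏ i ∈ Finset.Icc 2 n, (if i ∈ a then q i / (p i * p (i-1)) else 1) := by
  obtain ⟨hsub, h1, hnmem, hadj⟩ := mem_derSet.mp ha
  have h2 : (2:ℕ) ∉ a := by
    intro h; exact hadj 1 h1 h
  -- step 1 : peel off i = 1
  rw [muD, Icc_one_insert (n-1) (by omega), Finset.prod_insert (by simp)]
  have t1 : (if 1 + 1 ∈ a then (1:ℝ) else if 1 ∈ a then q 1 else p 1) = 1 := by
    simp [h2, h1, hq1]
  rw [t1, one_mul]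
  -- step 2 : termwise factorization on Icc 2 (n-1)
  have step2 : ∏ i ∈ Finset.Icc 2 (n-1),
      (if i + 1 ∈ a then (1:ℝ) else if i ∈ a then q i else p i)
    = ∏ i ∈ Finset.Icc 2 (n-1),
      (p i * (if i ∈ a then q i / p i else 1) * (if i + 1 ∈ a then 1 / p i else 1)) := by
    apply Finset.prod_congr rfl
    intro i hi
    simp only [Finset.mem_Icc] at hi
    have hpi := hpne i hi.1 hi.2
    by_cases hia1 : i + 1 ∈ a
    · have hia : i ∉ a := fun h => hadj i h hia1
      simp only [hia1, hia, if_true, if_false]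
      field_simp
    · by_cases hia : i ∈ a
      · simp only [hia1, hia, if_true, if_false]
        field_simp
      · simp [hia1, hia]
  rw [step2, Finset.prod_mul_distrib, Finset.prod_mul_distrib]
  -- step 3 : reindex the shifted product
  have step3 : ∏ i ∈ Finset.Icc 2 (n-1), (if i + 1 ∈ a then 1 / p i else 1)
      = ∏ j ∈ Finset.Icc 3 n, (if j ∈ a then 1 / p (j-1) else 1) := by
    rw [show Finset.Icc 3 n
        = Finset.map ⟨fun i => i+1, fun x y h => by simpa using h⟩ (Finset.Icc 2 (n-1)) from ?_,
      Finset.prod_map]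
    · exact Finset.prod_congr rfl fun x _ => rfl
    · ext j
      simp only [Finset.mem_map, Finset.mem_Icc, Function.Embedding.coeFn_mk]
      constructor
      · rintro ⟨hj1, hj2⟩
        exact ⟨j-1, by omega, show j-1+1 = j by omega⟩
      · rintro ⟨i, hi, rfl⟩
        show 3 ≤ i + 1 ∧ i + 1 ≤ n
        omega
  rw [step3]
  -- step 4 : extend both to Icc 2 n
  have hA : ∏ i ∈ Finset.Icc 2 (n-1), (if i ∈ a then q i / p i else 1)
      = ∏ i ∈ Finset.Icc 2 n, (if i ∈ a then q i / p i else 1) := by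
    apply Finset.prod_subset (Finset.Icc_subset_Icc_right (by omega))
    intro i hi hni
    simp only [Finset.mem_Icc] at hi hni
    have : i = n := by omega
    simp [this, hnmem]
  have hB : ∏ j ∈ Finset.Icc 3 n, (if j ∈ a then 1 / p (j-1) else 1)
      = ∏ i ∈ Finset.Icc 2 n, (if i ∈ a then 1 / p (i-1) else 1) := by
    apply Finset.prod_subset (Finset.Icc_subset_Icc_left (by omega))
    intro i hi hni
    simp only [Finset.mem_Icc] at hi hni
    have : i = 2 := by omega
    simp [this, h2]
  rw [hA, hB, mul_assoc, ← Finset.prod_mul_distrib]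
  congr 1
  apply Finset.prod_congr rfl
  intro i hi
  by_cases hia : i ∈ a
  · simp only [hia, if_true]
    rw [div_mul_div_comm, mul_one]
  · simp [hia]

/-- probability generating function of the number of cycles of `X^{n,p}`. -/
theorem stmt11 (n : ℕ) (hn : 4 ≤ n) (s : ℝ) (hs : 0 < s)
    (θ : ℕ → ℝ) (hθ1 : θ 1 = 1) (hθpos : ∀ i, 1 ≤ i → 0 < θ i)
    (p q : ℕ → ℝ)
    (hp1 : p 1 = 0) (hp2 : p 2 = 1) (hp : ∀ i, 3 ≤ i → 0 < p i ∧ p i < 1)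
    (hq : ∀ i, q i = 1 - p i)
    (hrel : ∀ i : ℕ, 3 ≤ i → i ≤ n - 1 →
      θ i = ((i : ℝ) - 1) * q i / (p i * p (i - 1))) :
    ∑ a ∈ derSet n, s ^ a.card * muD p q n a
      = (gamD (fun i => s * θ i) n / gamD θ n)
        * ((∏ k ∈ Finset.Icc 1 n, (s * θ k + (k : ℝ) - 1))
            / ∏ k ∈ Finset.Icc 1 n, (θ k + (k : ℝ) - 1)) := by
  classical
  have hθ1' : θ 1 ≠ 0 := by rw [hθ1]; norm_num
  have hsθ1 : s * θ 1 ≠ 0 := by rw [hθ1]; simpa using hs.ne'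
  have hi2real : ∀ i : ℕ, 2 ≤ i → (0:ℝ) < (i:ℝ) - 1 := by
    intro i hi
    have : (2:ℝ) ≤ (i:ℝ) := by exact_mod_cast hi
    linarith
  have hDθ : ∀ i : ℕ, 2 ≤ i → (i:ℝ) - 1 + θ i ≠ 0 := by
    intro i hi
    have := hθpos i (by omega)
    have := hi2real i hi
    positivity
  have hDs : ∀ i : ℕ, 2 ≤ i → (i:ℝ) - 1 + s * θ i ≠ 0 := by
    intro i hi
    have h1 := hθpos i (by omega)
    have h2 := hi2real i hi
    have : 0 < s * θ i := mul_pos hs h1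
    positivity
  have hpne : ∀ i : ℕ, 2 ≤ i → i ≤ n - 1 → p i ≠ 0 := by
    intro i h2 hle
    rcases eq_or_lt_of_le h2 with h | h
    · rw [← h, hp2]; norm_num
    · exact (hp i (by omega)).1.ne'
  have hq1 : q 1 = 1 := by rw [hq, hp1]; norm_num
  -- the key termwise relation
  have hterm : ∀ a ∈ derSet n, ∀ i ∈ Finset.Icc 2 n, i ∈ a →
      θ i / ((i:ℝ) - 1) = q i / (p i * p (i-1)) := by
    intro a ha i hi hia
    obtain ⟨hsub, h1, hnmem, hadj⟩ := mem_derSet.mp ha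
    have h2a : (2:ℕ) ∉ a := fun h => hadj 1 h1 h
    have hiIcc := hsub hia
    simp only [Finset.mem_Icc] at hi hiIcc
    have hin : i ≠ n := fun h => hnmem (h ▸ hia)
    have hi2 : i ≠ 2 := fun h => h2a (h ▸ hia)
    have h3 : 3 ≤ i := by omega
    have hle : i ≤ n - 1 := by omega
    have hne := (hi2real i hi.1).ne'
    rw [hrel i h3 hle, mul_div_assoc, mul_div_cancel_left₀ _ hne]
  set N : ℝ := ∏ i ∈ Finset.Icc 2 n, ((i:ℝ)-1) / ((i:ℝ)-1+θ i) with hN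
  set N' : ℝ := ∏ i ∈ Finset.Icc 2 n, ((i:ℝ)-1) / ((i:ℝ)-1+ s * θ i) with hN'
  set P2 : ℝ := ∏ i ∈ Finset.Icc 2 (n-1), p i with hP2def
  set Ψ : Finset ℕ → ℝ :=
    fun a => ∏ i ∈ Finset.Icc 2 n, (if i ∈ a then q i / (p i * p (i-1)) else 1) with hΨ
  set Φ : Finset ℕ → ℝ :=
    fun a => ∏ i ∈ Finset.Icc 2 n, (if i ∈ a then s * (q i / (p i * p (i-1))) else 1) with hΦ
  -- pointwise identities
  have hmu : ∀ a ∈ derSet n, muD p q n a = P2 * Ψ a := by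
    intro a ha
    exact muD_factor p q n hn hq1 hpne a ha
  have hnuθ : ∀ a ∈ derSet n, nuD θ n a = N * Ψ a := by
    intro a ha
    obtain ⟨hsub, h1, hnmem, hadj⟩ := mem_derSet.mp ha
    rw [nuD_factor θ hθ1' hDθ n (by omega) a h1]
    congr 1
    apply Finset.prod_congr rfl
    intro i hi
    by_cases hia : i ∈ a
    · simp only [hia, if_true]
      exact hterm a ha i hi hia
    · simp [hia]
  have hnus : ∀ a ∈ derSet n, nuD (fun i => s * θ i) n a = N' * Φ a := by
    intro a ha
    obtain ⟨hsub, h1, hnmem, hadj⟩ := mem_derSet.mp ha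
    rw [nuD_factor (fun i => s * θ i) hsθ1 hDs n (by omega) a h1]
    congr 1
    apply Finset.prod_congr rfl
    intro i hi
    by_cases hia : i ∈ a
    · simp only [hia, if_true]
      rw [mul_div_assoc, hterm a ha i hi hia]
    · simp [hia]
  have hpow : ∀ a ∈ derSet n, s ^ a.card * muD p q n a = s * P2 * Φ a := by
    intro a ha
    obtain ⟨hsub, h1, hnmem, hadj⟩ := mem_derSet.mp ha
    have merge : (∏ i ∈ Finset.Icc 2 n, (if i ∈ a then s else 1)) * Ψ a = Φ a := by
      rw [hΨ, hΦ, ← Finset.prod_mul_distrib]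
      apply Finset.prod_congr rfl
      intro i hi
      by_cases hia : i ∈ a
      · simp [hia]
      · simp [hia]
    rw [pow_card_eq s n (by omega) a hsub h1, hmu a ha, ← merge]
    ring
  -- sums
  have hsum1 : P2 * ∑ a ∈ derSet n, Ψ a = 1 := by
    rw [Finset.mul_sum, ← sum_muD_one p q hp1 hp2 hq n (by omega)]
    exact Finset.sum_congr rfl (fun a ha => (hmu a ha).symm)
  have hgθ : gamD θ n = N * ∑ a ∈ derSet n, Ψ a := by
    rw [gamD, Finset.mul_sum]
    exact Finset.sum_congr rfl hnuθ
  have hgs : gamD (fun i => s * θ i) n = N' * ∑ a ∈ derSet n, Φ a := by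
    rw [gamD, Finset.mul_sum]
    exact Finset.sum_congr rfl hnus
  have hLHS : ∑ a ∈ derSet n, s ^ a.card * muD p q n a
      = s * P2 * ∑ a ∈ derSet n, Φ a := by
    rw [Finset.mul_sum]
    exact Finset.sum_congr rfl hpow
  -- products in the statement
  set E : ℝ := ∏ i ∈ Finset.Icc 2 n, ((i:ℝ) - 1) with hE
  set Dθ : ℝ := ∏ i ∈ Finset.Icc 2 n, ((i:ℝ) - 1 + θ i) with hDθdef
  set Ds : ℝ := ∏ i ∈ Finset.Icc 2 n, ((i:ℝ) - 1 + s * θ i) with hDsdef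
  have hNE : N = E / Dθ := by rw [hN, hE, hDθdef, ← Finset.prod_div_distrib]
  have hNE' : N' = E / Ds := by rw [hN', hE, hDsdef, ← Finset.prod_div_distrib]
  have hPrs : ∏ k ∈ Finset.Icc 1 n, (s * θ k + (k : ℝ) - 1) = s * Ds := by
    rw [Icc_one_insert n (by omega), Finset.prod_insert (by simp)]
    congr 1
    · push_cast
      rw [hθ1]; ring
    · rw [hDsdef]
      exact Finset.prod_congr rfl (fun i _ => by ring)
  have hPr1 : ∏ k ∈ Finset.Icc 1 n, (θ k + (k : ℝ) - 1) = Dθ := by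
    rw [Icc_one_insert n (by omega), Finset.prod_insert (by simp)]
    rw [show (θ 1 + ((1:ℕ):ℝ) - 1) = 1 by rw [hθ1]; push_cast; ring, one_mul]
    rw [hDθdef]
    exact Finset.prod_congr rfl (fun i _ => by ring)
  -- nonvanishing
  have hEne : E ≠ 0 := by
    rw [hE]
    exact Finset.prod_ne_zero_iff.mpr
      (fun i hi => (hi2real i (Finset.mem_Icc.mp hi).1).ne')
  have hDθne : Dθ ≠ 0 := by
    rw [hDθdef]
    exact Finset.prod_ne_zero_iff.mpr (fun i hi => hDθ i (Finset.mem_Icc.mp hi).1)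
  have hDsne : Ds ≠ 0 := by
    rw [hDsdef]
    exact Finset.prod_ne_zero_iff.mpr (fun i hi => hDs i (Finset.mem_Icc.mp hi).1)
  have hP2ne : P2 ≠ 0 := by
    rw [hP2def]
    exact Finset.prod_ne_zero_iff.mpr
      (fun i hi => hpne i (Finset.mem_Icc.mp hi).1 (Finset.mem_Icc.mp hi).2)
  have hSΨ : (∑ a ∈ derSet n, Ψ a) = 1 / P2 := by
    field_simp
    linarith [hsum1]
  rw [hLHS, hgθ, hgs, hPrs, hPr1, hNE, hNE', hSΨ]
  field_simp
end
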